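/- arXiv:0903.3179 — 5 statements merged into one kernel-verified Lean document; each statement's English description precedes it below -/
import Mathlib

section
/- For simple random walk on ℤ (dimension d = 1), there exist constants c₁ > 0 and C₁ > 0 such that for all n ∈ ℕ with n ≥ 2, the Shannon entropy of the range satisfies c₁ · log n ≤ H(R(n)) ≤ C₁ · log n. -/
open Real

/-- A single step of the simple random walk on `ℤ^d`: the pair `(i, b)` encodes a move by
`+eᵢ` (if `b = true`) or `-eᵢ` (if `b = false`).  The uniform distribution on `Fin d × Bool`
corresponds to the uniform distribution on the `2d` unit vectors. -/
def step {d : ℕ} (a : Fin d × Bool) : Fin d → ℤ :=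
  fun j => if j = a.1 then (if a.2 then 1 else -1) else 0

/-- The position `S(k)` of the walk started at `z` after `k` steps, driven by the
sequence of i.i.d. uniform steps `ω : Fin n → Fin d × Bool` (meaningful for `k ≤ n`). -/
def walk {d n : ℕ} (z : Fin d → ℤ) (ω : Fin n → Fin d × Bool) (k : ℕ) : Fin d → ℤ :=
  z + ∑ i ∈ Finset.univ.filter (fun i : Fin n => (i : ℕ) < k), step (ω i)

/-- Probability of an event for the `n`-step simple random walk on `ℤ^d`:
the driving step sequences are uniform among the `(2d)^n` possibilities. -/
noncomputable def prW (d n : ℕ) (E : Set (Fin n → Fin d × Bool)) : ℝ :=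
  E.ncard / (2 * d) ^ n

/-- Expectation of a random variable of the `n`-step simple random walk on `ℤ^d`. -/
noncomputable def exW (d n : ℕ) (f : (Fin n → Fin d × Bool) → ℝ) : ℝ :=
  (∑ ω : Fin n → Fin d × Bool, f ω) / (2 * d) ^ n

/-- Shannon entropy (base 2) of a random variable `X` of the `n`-step walk:
`H(X) = ∑ₐ -P[X = a] · log₂ P[X = a]`. -/
noncomputable def entW {α : Type*} (d n : ℕ) (X : (Fin n → Fin d × Bool) → α) : ℝ :=
  ∑' a : α, -(prW d n {ω | X ω = a} * logb 2 (prW d n {ω | X ω = a}))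

/-- The range `R(n) = {S(0), …, S(n)}` of the `n`-step walk started at `z`. -/
def rangeW {d n : ℕ} (z : Fin d → ℤ) (ω : Fin n → Fin d × Bool) : Finset (Fin d → ℤ) :=
  (Finset.range (n + 1)).image (walk z ω)

/-- The inner boundary `∂A` of a finite set `A ⊆ ℤ^d`: the points of `A` adjacent
(at graph distance 1, i.e. reachable by a single step) to some vertex of the complement. -/
def innerBdry {d : ℕ} (A : Finset (Fin d → ℤ)) : Finset (Fin d → ℤ) :=
  A.filter fun x => ∃ a : Fin d × Bool, x + step a ∉ A

/-- The Euclidean (`L²`) norm on `ℤ^d`. -/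
noncomputable def eNorm {d : ℕ} (x : Fin d → ℤ) : ℝ :=
  Real.sqrt (∑ i, ((x i : ℝ)) ^ 2)

namespace SRW

abbrev Ω (n : ℕ) := Fin n → Fin 1 × Bool

def ε (a : Fin 1 × Bool) : ℤ := if a.2 then 1 else -1

def pos {n : ℕ} (ω : Ω n) (k : ℕ) : ℤ :=
  ∑ i ∈ Finset.univ.filter (fun i : Fin n => (i : ℕ) < k), ε (ω i)

lemma walk_eq {n : ℕ} (ω : Ω n) (k : ℕ) : walk 0 ω k = fun _ => pos ω k := by
  funext j
  simp only [walk, pos, Pi.add_apply, Pi.zero_apply, zero_add, Finset.sum_apply]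
  refine Finset.sum_congr rfl fun i _ => ?_
  simp [step, ε, Subsingleton.elim j (ω i).1]

lemma pos_zero {n : ℕ} (ω : Ω n) : pos ω 0 = 0 := by
  simp [pos]

lemma pos_succ {n : ℕ} (ω : Ω n) {k : ℕ} (hk : k < n) :
    pos ω (k + 1) = pos ω k + ε (ω ⟨k, hk⟩) := by
  unfold pos
  rw [show (Finset.univ.filter (fun i : Fin n => (i : ℕ) < k + 1)) =
      insert ⟨k, hk⟩ (Finset.univ.filter (fun i : Fin n => (i : ℕ) < k)) from ?_,
    Finset.sum_insert (by simp)]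
  · ring
  · ext i
    simp only [Finset.mem_insert, Finset.mem_filter, Finset.mem_univ, true_and]
    constructor
    · intro h
      rcases Nat.lt_succ_iff_lt_or_eq.mp h with h | h
      · exact Or.inr h
      · exact Or.inl (Fin.ext h)
    · rintro (rfl | h)
      · exact Nat.lt_succ_self k
      · exact Nat.lt_succ_of_lt h

lemma pos_step {n : ℕ} (ω : Ω n) (k : ℕ) :
    pos ω (k + 1) = pos ω k + 1 ∨ pos ω (k + 1) = pos ω k ∨ pos ω (k + 1) = pos ω k - 1 := by
  rcases lt_or_ge k n with hk | hk
  · rw [pos_succ ω hk]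
    rcases Bool.eq_false_or_eq_true (ω ⟨k, hk⟩).2 with h | h <;> simp [ε, h] <;> omega
  · right; left
    unfold pos
    refine Finset.sum_congr ?_ fun _ _ => rfl
    ext i
    have : (i : ℕ) < n := i.2
    simp only [Finset.mem_filter, Finset.mem_univ, true_and]
    omega

/-- Discrete intermediate value theorem. -/
lemma int_ivt (f : ℕ → ℤ)
    (hf : ∀ k, f (k + 1) = f k + 1 ∨ f (k + 1) = f k ∨ f (k + 1) = f k - 1)
    {a b : ℕ} (hab : a ≤ b) {c : ℤ} (h1 : f a ≤ c) (h2 : c ≤ f b) :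
    ∃ k, a ≤ k ∧ k ≤ b ∧ f k = c := by
  induction b, hab using Nat.le_induction with
  | base => exact ⟨a, le_refl a, le_refl a, le_antisymm h1 h2⟩
  | succ b hab ih =>
    rcases le_or_gt c (f b) with h | h
    · obtain ⟨k, hk1, hk2, hk3⟩ := ih h
      exact ⟨k, hk1, hk2.trans (Nat.le_succ b), hk3⟩
    · refine ⟨b + 1, hab.trans (Nat.le_succ b), le_refl _, ?_⟩
      rcases hf b with h' | h' | h' <;> omega

def hits (n : ℕ) (M : ℤ) : Set (Ω n) := {ω | ∃ k, k ≤ n ∧ pos ω k = M}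

def tauP {n : ℕ} (M : ℤ) (ω : Ω n) : ∃ k, pos ω k = M ∨ n < k :=
  ⟨n + 1, Or.inr (Nat.lt_succ_self n)⟩

noncomputable def tau {n : ℕ} (M : ℤ) (ω : Ω n) : ℕ := Nat.find (tauP M ω)

lemma tau_le {n : ℕ} {M : ℤ} {ω : Ω n} (h : ω ∈ hits n M) : tau M ω ≤ n := by
  obtain ⟨k, hk, hpos⟩ := h
  exact (Nat.find_le (Or.inl hpos)).trans hk

lemma pos_tau {n : ℕ} {M : ℤ} {ω : Ω n} (h : ω ∈ hits n M) : pos ω (tau M ω) = M := by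
  have hs := Nat.find_spec (tauP M ω)
  rw [show Nat.find (tauP M ω) = tau M ω from rfl] at hs
  rcases hs with h' | h'
  · exact h'
  · exact absurd (tau_le h) (by omega)

lemma pos_lt_tau {n : ℕ} {M : ℤ} (ω : Ω n) {k : ℕ} (hk : k < tau M ω) : pos ω k ≠ M := by
  have := Nat.find_min (tauP M ω) hk
  tauto

noncomputable def reflW {n : ℕ} (M : ℤ) (ω : Ω n) : Ω n :=
  fun i => if (i : ℕ) < tau M ω then ω i else ((ω i).1, !(ω i).2)

lemma eps_flip (a : Fin 1 × Bool) : ε (a.1, !a.2) = -ε a := by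
  rcases Bool.eq_false_or_eq_true a.2 with h | h <;> simp [ε, h]

lemma pos_reflW_le {n : ℕ} (M : ℤ) (ω : Ω n) {k : ℕ} (hk : k ≤ tau M ω) :
    pos (reflW M ω) k = pos ω k := by
  refine Finset.sum_congr rfl fun i hi => ?_
  simp only [Finset.mem_filter] at hi
  have : (i : ℕ) < tau M ω := lt_of_lt_of_le hi.2 hk
  simp [reflW, this]

lemma pos_reflW_ge {n : ℕ} (M : ℤ) {ω : Ω n} (h : ω ∈ hits n M) {k : ℕ} (hk : tau M ω ≤ k) :
    pos (reflW M ω) k = 2 * M - pos ω k := by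
  set t := tau M ω with ht
  have hsplit : Finset.univ.filter (fun i : Fin n => (i : ℕ) < k) =
      (Finset.univ.filter (fun i : Fin n => (i : ℕ) < t)) ∪
      (Finset.univ.filter (fun i : Fin n => t ≤ (i : ℕ) ∧ (i : ℕ) < k)) := by
    ext i
    simp only [Finset.mem_union, Finset.mem_filter, Finset.mem_univ, true_and]
    omega
  have hdisj : Disjoint (Finset.univ.filter (fun i : Fin n => (i : ℕ) < t))
      (Finset.univ.filter (fun i : Fin n => t ≤ (i : ℕ) ∧ (i : ℕ) < k)) := by
    rw [Finset.disjoint_filter]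
    intro i _ h1
    omega
  have h1 : pos (reflW M ω) k =
      (∑ i ∈ Finset.univ.filter (fun i : Fin n => (i : ℕ) < t), ε (ω i)) +
      (∑ i ∈ Finset.univ.filter (fun i : Fin n => t ≤ (i : ℕ) ∧ (i : ℕ) < k), -ε (ω i)) := by
    rw [pos, hsplit, Finset.sum_union hdisj]
    congr 1
    · refine Finset.sum_congr rfl fun i hi => ?_
      simp only [Finset.mem_filter] at hi
      have hi2 : (i : ℕ) < tau M ω := hi.2
      simp [reflW, hi2]
    · refine Finset.sum_congr rfl fun i hi => ?_
      simp only [Finset.mem_filter] at hi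
      have : ¬ ((i : ℕ) < tau M ω) := by omega
      rw [reflW]
      simp only [this, if_false]
      exact eps_flip (ω i)
  have h2 : pos ω k =
      (∑ i ∈ Finset.univ.filter (fun i : Fin n => (i : ℕ) < t), ε (ω i)) +
      (∑ i ∈ Finset.univ.filter (fun i : Fin n => t ≤ (i : ℕ) ∧ (i : ℕ) < k), ε (ω i)) := by
    rw [pos, hsplit, Finset.sum_union hdisj]
  have h3 : pos ω t = ∑ i ∈ Finset.univ.filter (fun i : Fin n => (i : ℕ) < t), ε (ω i) := rfl
  have h4 := pos_tau h
  rw [h1, Finset.sum_neg_distrib]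
  rw [← ht] at h4
  omega

lemma tau_reflW {n : ℕ} {M : ℤ} {ω : Ω n} (h : ω ∈ hits n M) : tau M (reflW M ω) = tau M ω := by
  rw [tau, Nat.find_eq_iff]
  constructor
  · left
    rw [pos_reflW_le M ω (le_refl _)]
    exact pos_tau h
  · intro k hk
    push_neg
    constructor
    · rw [pos_reflW_le M ω (le_of_lt hk)]
      exact pos_lt_tau ω hk
    · have := tau_le h
      omega

lemma reflW_hits {n : ℕ} {M : ℤ} {ω : Ω n} (h : ω ∈ hits n M) : reflW M ω ∈ hits n M :=
  ⟨tau M ω, tau_le h, by rw [pos_reflW_le M ω (le_refl _)]; exact pos_tau h⟩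

lemma reflW_reflW {n : ℕ} {M : ℤ} {ω : Ω n} (h : ω ∈ hits n M) : reflW M (reflW M ω) = ω := by
  funext i
  rw [reflW, tau_reflW h, reflW]
  rcases lt_or_ge (i : ℕ) (tau M ω) with h' | h'
  · simp [h']
  · have h'' : ¬ ((i : ℕ) < tau M ω) := not_lt.mpr h'
    simp [h'']

/-! ### Counting -/

lemma hits_of_le {n : ℕ} {M : ℤ} (hM : 0 ≤ M) {ω : Ω n} {k : ℕ} (hk : k ≤ n)
    (h : M ≤ pos ω k) : ω ∈ hits n M := by
  obtain ⟨j, _, hjk, hj⟩ := int_ivt (pos ω) (pos_step ω) (Nat.zero_le k)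
    (by rw [pos_zero]; exact hM) h
  exact ⟨j, hjk.trans hk, hj⟩

lemma card_hits {n : ℕ} {M : ℤ} (hM : 1 ≤ M) :
    (hits n M).ncard =
      {ω : Ω n | M ≤ pos ω n}.ncard + {ω : Ω n | M + 1 ≤ pos ω n}.ncard := by
  classical
  set S1 : Set (Ω n) := {ω | M ≤ pos ω n}
  set S2 : Set (Ω n) := hits n M ∩ {ω | pos ω n < M}
  have hsub : S1 ⊆ hits n M := fun ω h => hits_of_le (by linarith) (le_refl n) h
  have hunion : hits n M = S1 ∪ S2 := by
    ext ω
    constructor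
    · intro h
      rcases le_or_gt M (pos ω n) with h' | h'
      · exact Or.inl h'
      · exact Or.inr ⟨h, h'⟩
    · rintro (h | h)
      · exact hsub h
      · exact h.1
  have hdisj : Disjoint S1 S2 := by
    rw [Set.disjoint_left]
    rintro ω h1 ⟨_, h2⟩
    simp only [S1, Set.mem_setOf_eq] at h1
    simp only [Set.mem_setOf_eq] at h2
    omega
  have hS2 : S2.ncard = {ω : Ω n | M + 1 ≤ pos ω n}.ncard := by
    have himg : reflW M '' S2 = {ω : Ω n | M + 1 ≤ pos ω n} := by
      ext ρ
      constructor
      · rintro ⟨ω, ⟨hω, hlt⟩, rfl⟩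
        have := pos_reflW_ge M hω (tau_le hω)
        simp only [Set.mem_setOf_eq] at hlt ⊢
        omega
      · intro hρ
        simp only [Set.mem_setOf_eq] at hρ
        have hρhit : ρ ∈ hits n M := hits_of_le (by linarith) (le_refl n) (by linarith)
        refine ⟨reflW M ρ, ⟨reflW_hits hρhit, ?_⟩, reflW_reflW hρhit⟩
        have := pos_reflW_ge M hρhit (tau_le hρhit)
        simp only [Set.mem_setOf_eq]
        omega
    have hinj : Set.InjOn (reflW M) S2 := by
      intro ω1 h1 ω2 h2 he
      have := congrArg (reflW M) he
      rwa [reflW_reflW h1.1, reflW_reflW h2.1] at this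
    rw [← himg, Set.ncard_image_of_injOn hinj]
  rw [hunion, Set.ncard_union_eq hdisj, hS2]

def Rs {n : ℕ} (ω : Ω n) : Finset ℤ := (Finset.range (n + 1)).image (pos ω)

lemma Rs_nonempty {n : ℕ} (ω : Ω n) : (Rs ω).Nonempty :=
  ⟨pos ω 0, Finset.mem_image_of_mem _ (Finset.mem_range.mpr (Nat.succ_pos n))⟩

lemma mem_Rs_iff {n : ℕ} (ω : Ω n) (c : ℤ) : c ∈ Rs ω ↔ ∃ k, k ≤ n ∧ pos ω k = c := by
  simp [Rs, Nat.lt_succ_iff]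

noncomputable def maxV {n : ℕ} (ω : Ω n) : ℤ := (Rs ω).max' (Rs_nonempty ω)
noncomputable def minV {n : ℕ} (ω : Ω n) : ℤ := (Rs ω).min' (Rs_nonempty ω)

lemma le_maxV {n : ℕ} (ω : Ω n) {k : ℕ} (hk : k ≤ n) : pos ω k ≤ maxV ω :=
  Finset.le_max' _ _ ((mem_Rs_iff ω _).mpr ⟨k, hk, rfl⟩)

lemma minV_le {n : ℕ} (ω : Ω n) {k : ℕ} (hk : k ≤ n) : minV ω ≤ pos ω k :=
  Finset.min'_le _ _ ((mem_Rs_iff ω _).mpr ⟨k, hk, rfl⟩)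

lemma maxV_mem {n : ℕ} (ω : Ω n) : ∃ k, k ≤ n ∧ pos ω k = maxV ω :=
  (mem_Rs_iff ω _).mp (Finset.max'_mem _ _)

lemma minV_mem {n : ℕ} (ω : Ω n) : ∃ k, k ≤ n ∧ pos ω k = minV ω :=
  (mem_Rs_iff ω _).mp (Finset.min'_mem _ _)

lemma maxV_nonneg {n : ℕ} (ω : Ω n) : 0 ≤ maxV ω := by
  have := le_maxV ω (Nat.zero_le n)
  rwa [pos_zero] at this

lemma maxV_eq_iff {n : ℕ} {M : ℤ} (hM : 0 ≤ M) :
    {ω : Ω n | maxV ω = M} = hits n M \ hits n (M + 1) := by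
  ext ω
  simp only [Set.mem_setOf_eq, Set.mem_diff]
  constructor
  · rintro rfl
    refine ⟨?_, ?_⟩
    · obtain ⟨k, hk, hpos⟩ := maxV_mem ω
      exact ⟨k, hk, hpos⟩
    · rintro ⟨k, hk, hpos⟩
      have := le_maxV ω hk
      omega
  · rintro ⟨⟨k, hk, hpos⟩, hnot⟩
    have h1 : M ≤ maxV ω := hpos ▸ le_maxV ω hk
    by_contra hne
    have h2 : M + 1 ≤ maxV ω := by omega
    obtain ⟨k', hk', hpos'⟩ := maxV_mem ω
    exact hnot (hits_of_le (by omega) hk' (by omega))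

lemma card_maxV {n : ℕ} {M : ℤ} (hM : 1 ≤ M) :
    {ω : Ω n | maxV ω = M}.ncard =
      {ω : Ω n | pos ω n = M}.ncard + {ω : Ω n | pos ω n = M + 1}.ncard := by
  have h1 := card_hits (n := n) hM
  have h2 := card_hits (n := n) (show (1:ℤ) ≤ M + 1 by omega)
  simp only [show M + 1 + 1 = M + 2 from by ring] at h2
  have h4 : hits n (M + 1) ⊆ hits n M := by
    rintro ω ⟨k, hk, hpos⟩
    exact hits_of_le (by omega) hk (by omega)
  have h3 : {ω : Ω n | maxV ω = M} = hits n M \ hits n (M + 1) := maxV_eq_iff (by omega)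
  have h5 : (hits n M \ hits n (M + 1)).ncard + (hits n (M + 1)).ncard = (hits n M).ncard :=
    Set.ncard_diff_add_ncard_of_subset h4
  have h6 : {ω : Ω n | M ≤ pos ω n}.ncard =
      {ω : Ω n | pos ω n = M}.ncard + ({ω : Ω n | pos ω n = M + 1}.ncard +
        {ω : Ω n | M + 2 ≤ pos ω n}.ncard) := by
    have e1 : {ω : Ω n | M ≤ pos ω n} =
        {ω : Ω n | pos ω n = M} ∪ ({ω : Ω n | pos ω n = M + 1} ∪ {ω : Ω n | M + 2 ≤ pos ω n}) := by
      ext ω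
      simp only [Set.mem_setOf_eq, Set.mem_union]
      omega
    have d1 : Disjoint {ω : Ω n | pos ω n = M}
        ({ω : Ω n | pos ω n = M + 1} ∪ {ω : Ω n | M + 2 ≤ pos ω n}) := by
      rw [Set.disjoint_left]
      rintro ω h1 (h2 | h2) <;> simp only [Set.mem_setOf_eq] at h1 h2 <;> omega
    have d2 : Disjoint {ω : Ω n | pos ω n = M + 1} {ω : Ω n | M + 2 ≤ pos ω n} := by
      rw [Set.disjoint_left]
      rintro ω h1 h2
      simp only [Set.mem_setOf_eq] at h1 h2
      omega
    rw [e1, Set.ncard_union_eq d1, Set.ncard_union_eq d2]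
  have h7 : {ω : Ω n | M + 1 ≤ pos ω n}.ncard =
      {ω : Ω n | pos ω n = M + 1}.ncard + {ω : Ω n | M + 2 ≤ pos ω n}.ncard := by
    have e1 : {ω : Ω n | M + 1 ≤ pos ω n} =
        {ω : Ω n | pos ω n = M + 1} ∪ {ω : Ω n | M + 2 ≤ pos ω n} := by
      ext ω
      simp only [Set.mem_setOf_eq, Set.mem_union]
      omega
    have d2 : Disjoint {ω : Ω n | pos ω n = M + 1} {ω : Ω n | M + 2 ≤ pos ω n} := by
      rw [Set.disjoint_left]
      rintro ω h1 h2
      simp only [Set.mem_setOf_eq] at h1 h2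
      omega
    rw [e1, Set.ncard_union_eq d2]
  rw [h3]
  omega

/-- The endpoint in terms of the number of `true` coordinates. -/
lemma pos_n {n : ℕ} (ω : Ω n) :
    pos ω n = 2 * ((Finset.univ.filter (fun i : Fin n => (ω i).2)).card : ℤ) - n := by
  classical
  have huniv : Finset.univ.filter (fun i : Fin n => (i : ℕ) < n) = Finset.univ := by
    ext i
    simp [i.2]
  rw [pos, huniv]
  rw [← Finset.sum_filter_add_sum_filter_not Finset.univ (fun i : Fin n => (ω i).2)]
  have e1 : ∑ i ∈ Finset.univ.filter (fun i : Fin n => (ω i).2), ε (ω i) =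
      ((Finset.univ.filter (fun i : Fin n => (ω i).2)).card : ℤ) := by
    rw [Finset.sum_congr rfl (fun i hi => ?_), Finset.sum_const, nsmul_eq_mul, mul_one]
    simp only [Finset.mem_filter] at hi
    simp [ε, hi.2]
  have e2 : ∑ i ∈ Finset.univ.filter (fun i : Fin n => ¬ (ω i).2), ε (ω i) =
      -((Finset.univ.filter (fun i : Fin n => ¬ (ω i).2)).card : ℤ) := by
    rw [Finset.sum_congr rfl (fun i hi => ?_), Finset.sum_const, nsmul_eq_mul, mul_neg_one]
    simp only [Finset.mem_filter, Bool.not_eq_true] at hi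
    simp [ε, hi.2]
  have e3 : (Finset.univ.filter (fun i : Fin n => (ω i).2)).card +
      (Finset.univ.filter (fun i : Fin n => ¬ (ω i).2)).card = n := by
    rw [Finset.card_filter_add_card_filter_not]
    simp
  rw [e1, e2]
  omega

lemma endpoint_card_le {n : ℕ} (j : ℤ) :
    {ω : Ω n | pos ω n = j}.ncard ≤ n.choose (n / 2) := by
  classical
  by_cases hpar : ∃ t : ℕ, (n : ℤ) + j = 2 * t
  · obtain ⟨t, ht⟩ := hpar
    have hset : {ω : Ω n | pos ω n = j} =
        {ω : Ω n | (Finset.univ.filter (fun i : Fin n => (ω i).2)).card = t} := by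
      ext ω
      have := pos_n ω
      simp only [Set.mem_setOf_eq]
      constructor
      · intro h
        have : 2 * ((Finset.univ.filter (fun i : Fin n => (ω i).2)).card : ℤ) = 2 * t := by omega
        exact_mod_cast (by omega : ((Finset.univ.filter (fun i : Fin n => (ω i).2)).card : ℤ) = t)
      · intro h
        rw [this, h]
        omega
    rw [hset]
    have hinj : Set.InjOn (fun ω : Ω n => Finset.univ.filter (fun i : Fin n => (ω i).2))
        {ω : Ω n | (Finset.univ.filter (fun i : Fin n => (ω i).2)).card = t} := by
      intro ω1 _ ω2 _ he
      funext i
      have h1 : (ω1 i).2 = (ω2 i).2 := by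
        have := Finset.ext_iff.mp he i
        simp only [Finset.mem_filter, Finset.mem_univ, true_and] at this
        rcases Bool.eq_false_or_eq_true (ω1 i).2 with h | h <;>
          rcases Bool.eq_false_or_eq_true (ω2 i).2 with h' | h' <;> simp_all
      exact Prod.ext (Subsingleton.elim _ _) h1
    have hmaps : (fun ω : Ω n => Finset.univ.filter (fun i : Fin n => (ω i).2)) ''
        {ω : Ω n | (Finset.univ.filter (fun i : Fin n => (ω i).2)).card = t} ⊆
        ↑(Finset.powersetCard t (Finset.univ : Finset (Fin n))) := by
      rintro s ⟨ω, hω, rfl⟩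
      simp only [Finset.mem_coe, Finset.mem_powersetCard]
      exact ⟨Finset.subset_univ _, hω⟩
    calc {ω : Ω n | (Finset.univ.filter (fun i : Fin n => (ω i).2)).card = t}.ncard
        = ((fun ω : Ω n => Finset.univ.filter (fun i : Fin n => (ω i).2)) ''
          {ω : Ω n | (Finset.univ.filter (fun i : Fin n => (ω i).2)).card = t}).ncard :=
          (Set.ncard_image_of_injOn hinj).symm
      _ ≤ (↑(Finset.powersetCard t (Finset.univ : Finset (Fin n))) : Set (Finset (Fin n))).ncard :=
          Set.ncard_le_ncard hmaps (Set.toFinite _)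
      _ = (Finset.powersetCard t (Finset.univ : Finset (Fin n))).card := Set.ncard_coe_finset _
      _ = n.choose t := by rw [Finset.card_powersetCard]; simp
      _ ≤ n.choose (n / 2) := Nat.choose_le_middle t n
  · have : {ω : Ω n | pos ω n = j} = ∅ := by
      ext ω
      simp only [Set.mem_setOf_eq, Set.mem_empty_iff_false, iff_false]
      intro h
      exact hpar ⟨(Finset.univ.filter (fun i : Fin n => (ω i).2)).card, by rw [← h, pos_n]; ring⟩
    rw [this, Set.ncard_empty]
    exact Nat.zero_le _

lemma endpoint_parity {n : ℕ} {j : ℤ} (ω : Ω n) (h : pos ω n = j) : (2 : ℤ) ∣ ((n : ℤ) + j) :=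
  ⟨(Finset.univ.filter (fun i : Fin n => (ω i).2)).card, by rw [← h, pos_n]; ring⟩

lemma card_maxV_le {n : ℕ} {M : ℤ} (hM : 1 ≤ M) :
    {ω : Ω n | maxV ω = M}.ncard ≤ n.choose (n / 2) := by
  rw [card_maxV hM]
  by_cases h2 : (2 : ℤ) ∣ ((n : ℤ) + M)
  · have : {ω : Ω n | pos ω n = M + 1} = ∅ := by
      ext ω
      simp only [Set.mem_setOf_eq, Set.mem_empty_iff_false, iff_false]
      intro h
      have := endpoint_parity ω h
      omega
    rw [this, Set.ncard_empty, Nat.add_zero]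
    exact endpoint_card_le M
  · have : {ω : Ω n | pos ω n = M} = ∅ := by
      ext ω
      simp only [Set.mem_setOf_eq, Set.mem_empty_iff_false, iff_false]
      intro h
      have := endpoint_parity ω h
      omega
    rw [this, Set.ncard_empty, Nat.zero_add]
    exact endpoint_card_le (M + 1)

/-! ### The range as a finset, and the fiber bound -/

lemma rangeW_eq_image {n : ℕ} (ω : Ω n) :
    rangeW (0 : Fin 1 → ℤ) ω = (Rs ω).image (fun c => fun _ : Fin 1 => c) := by
  unfold rangeW Rs
  rw [Finset.image_image]
  refine Finset.image_congr fun k _ => ?_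
  exact walk_eq ω k

lemma image_ev {n : ℕ} (ω : Ω n) :
    (rangeW (0 : Fin 1 → ℤ) ω).image (fun f => f 0) = Rs ω := by
  rw [rangeW_eq_image, Finset.image_image]
  have : ((fun f : Fin 1 → ℤ => f 0) ∘ fun c => fun _ : Fin 1 => c) = id := rfl
  rw [this, Finset.image_id]

lemma Rs_eq_of_rangeW_eq {n : ℕ} {ω ω' : Ω n}
    (h : rangeW (0 : Fin 1 → ℤ) ω = rangeW (0 : Fin 1 → ℤ) ω') : Rs ω = Rs ω' := by
  rw [← image_ev ω, ← image_ev ω', h]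

lemma maxV_eq_of_Rs_eq {n : ℕ} {ω ω' : Ω n} (h : Rs ω = Rs ω') : maxV ω = maxV ω' := by
  refine le_antisymm (Finset.max'_le _ _ _ fun c hc => ?_) (Finset.max'_le _ _ _ fun c hc => ?_)
  · exact Finset.le_max' _ _ (h ▸ hc)
  · exact Finset.le_max' _ _ (h ▸ hc)

def negΩ {n : ℕ} (ω : Ω n) : Ω n := fun i => ((ω i).1, !(ω i).2)

lemma pos_negΩ {n : ℕ} (ω : Ω n) (k : ℕ) : pos (negΩ ω) k = -pos ω k := by
  unfold pos
  rw [← Finset.sum_neg_distrib]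
  exact Finset.sum_congr rfl fun i _ => eps_flip (ω i)

lemma negΩ_negΩ {n : ℕ} (ω : Ω n) : negΩ (negΩ ω) = ω := by
  funext i
  exact Prod.ext rfl (Bool.not_not _)

lemma rangeW_negΩ {n : ℕ} (ω : Ω n) :
    rangeW (0 : Fin 1 → ℤ) (negΩ ω) = (rangeW (0 : Fin 1 → ℤ) ω).image (fun f => -f) := by
  rw [rangeW_eq_image, rangeW_eq_image, Finset.image_image]
  unfold Rs
  rw [Finset.image_image, Finset.image_image]
  refine Finset.image_congr fun k _ => ?_
  funext j
  simp [Function.comp, pos_negΩ]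

lemma fiber_card_le_aux {n : ℕ} (A : Finset (Fin 1 → ℤ)) (ω₀ : Ω n)
    (h0 : rangeW (0 : Fin 1 → ℤ) ω₀ = A) (hM : 1 ≤ maxV ω₀) :
    {ω : Ω n | rangeW (0 : Fin 1 → ℤ) ω = A}.ncard ≤ n.choose (n / 2) := by
  have hsub : {ω : Ω n | rangeW (0 : Fin 1 → ℤ) ω = A} ⊆ {ω : Ω n | maxV ω = maxV ω₀} := by
    intro ω hω
    simp only [Set.mem_setOf_eq] at hω ⊢
    exact maxV_eq_of_Rs_eq (Rs_eq_of_rangeW_eq (hω.trans h0.symm))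
  exact le_trans (Set.ncard_le_ncard hsub (Set.toFinite _)) (card_maxV_le hM)

lemma fiber_card_le {n : ℕ} (hn : 1 ≤ n) (A : Finset (Fin 1 → ℤ)) :
    {ω : Ω n | rangeW (0 : Fin 1 → ℤ) ω = A}.ncard ≤ n.choose (n / 2) := by
  rcases Set.eq_empty_or_nonempty {ω : Ω n | rangeW (0 : Fin 1 → ℤ) ω = A} with he | ⟨ω₀, h0⟩
  · rw [he, Set.ncard_empty]
    exact Nat.zero_le _
  simp only [Set.mem_setOf_eq] at h0
  rcases le_or_gt 1 (maxV ω₀) with hM | hM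
  · exact fiber_card_le_aux A ω₀ h0 hM
  -- maxV ω₀ = 0 : pass to the reflected walk
  have hM0 : maxV ω₀ = 0 := le_antisymm (by omega) (maxV_nonneg ω₀)
  have hcard : {ω : Ω n | rangeW (0 : Fin 1 → ℤ) ω = A}.ncard =
      {ω : Ω n | rangeW (0 : Fin 1 → ℤ) ω = A.image (fun f => -f)}.ncard := by
    have himg : negΩ '' {ω : Ω n | rangeW (0 : Fin 1 → ℤ) ω = A} =
        {ω : Ω n | rangeW (0 : Fin 1 → ℤ) ω = A.image (fun f => -f)} := by
      ext ρ
      constructor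
      · rintro ⟨ω, hω, rfl⟩
        simp only [Set.mem_setOf_eq] at hω ⊢
        rw [rangeW_negΩ, hω]
      · intro hρ
        simp only [Set.mem_setOf_eq] at hρ
        refine ⟨negΩ ρ, ?_, negΩ_negΩ ρ⟩
        simp only [Set.mem_setOf_eq]
        rw [rangeW_negΩ, hρ, Finset.image_image]
        have : ((fun f : Fin 1 → ℤ => -f) ∘ (fun f : Fin 1 → ℤ => -f)) = id :=
          funext fun f => neg_neg f
        rw [this, Finset.image_id]
    have hinj : Set.InjOn negΩ {ω : Ω n | rangeW (0 : Fin 1 → ℤ) ω = A} := by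
      intro a _ b _ hab
      have := congrArg negΩ hab
      rwa [negΩ_negΩ, negΩ_negΩ] at this
    rw [← himg, Set.ncard_image_of_injOn hinj]
  rw [hcard]
  have h1n : pos ω₀ 1 = -1 := by
    have hstep := pos_succ ω₀ (show 0 < n from hn)
    rw [pos_zero, zero_add] at hstep
    have hle := le_maxV ω₀ (show 1 ≤ n from hn)
    rw [hM0] at hle
    rcases Bool.eq_false_or_eq_true (ω₀ ⟨0, hn⟩).2 with h | h
    · exfalso
      rw [hstep] at hle
      simp [ε, h] at hle
    · rw [hstep]
      simp [ε, h]
  refine fiber_card_le_aux _ (negΩ ω₀) (by rw [rangeW_negΩ, h0]) ?_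
  have hpos1 : pos (negΩ ω₀) 1 = 1 := by rw [pos_negΩ, h1n]; ring
  have := le_maxV (negΩ ω₀) (show 1 ≤ n from hn)
  omega

/-! ### The number of possible ranges -/

lemma pos_bound {n : ℕ} (ω : Ω n) (k : ℕ) : -(k : ℤ) ≤ pos ω k ∧ pos ω k ≤ k := by
  induction k with
  | zero => simp [pos_zero]
  | succ k ih =>
    rcases pos_step ω k with h | h | h <;> push_cast <;> omega

lemma minV_nonpos {n : ℕ} (ω : Ω n) : minV ω ≤ 0 := by
  have := minV_le ω (Nat.zero_le n)
  rwa [pos_zero] at this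

lemma neg_le_minV {n : ℕ} (ω : Ω n) : -(n : ℤ) ≤ minV ω := by
  obtain ⟨k, hk, hp⟩ := minV_mem ω
  have := (pos_bound ω k).1
  omega

lemma maxV_le {n : ℕ} (ω : Ω n) : maxV ω ≤ (n : ℤ) := by
  obtain ⟨k, hk, hp⟩ := maxV_mem ω
  have := (pos_bound ω k).2
  omega

lemma Rs_eq_Icc {n : ℕ} (ω : Ω n) : Rs ω = Finset.Icc (minV ω) (maxV ω) := by
  ext c
  simp only [Finset.mem_Icc]
  constructor
  · intro hc
    exact ⟨Finset.min'_le _ _ hc, Finset.le_max' _ _ hc⟩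
  · rintro ⟨h1, h2⟩
    obtain ⟨k1, hk1, hp1⟩ := minV_mem ω
    obtain ⟨k2, hk2, hp2⟩ := maxV_mem ω
    rcases le_or_gt k1 k2 with hk | hk
    · obtain ⟨k, _, hkk, hk3⟩ := int_ivt (pos ω) (pos_step ω) hk (c := c) (by omega) (by omega)
      exact (mem_Rs_iff ω c).mpr ⟨k, hkk.trans hk2, hk3⟩
    · have hstep' : ∀ k, (fun k => -pos ω k) (k + 1) = (fun k => -pos ω k) k + 1 ∨
          (fun k => -pos ω k) (k + 1) = (fun k => -pos ω k) k ∨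
          (fun k => -pos ω k) (k + 1) = (fun k => -pos ω k) k - 1 := by
        intro k
        have := pos_step ω k
        dsimp only
        omega
      obtain ⟨k, _, hkk, hk3⟩ := int_ivt (fun k => -pos ω k) hstep'
        (le_of_lt hk) (c := -c) (by omega) (by omega)
      have hk3' : -pos ω k = -c := hk3
      exact (mem_Rs_iff ω c).mpr ⟨k, hkk.trans hk1, by omega⟩

lemma card_ranges_le (n : ℕ) :
    (Finset.image (fun ω : Ω n => rangeW (0 : Fin 1 → ℤ) ω) Finset.univ).card ≤ (n + 1) ^ 2 := by
  classical
  have hbd : (Finset.image (fun ω : Ω n => rangeW (0 : Fin 1 → ℤ) ω) Finset.univ).card ≤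
      ((Finset.Icc (-(n : ℤ)) 0) ×ˢ (Finset.Icc (0 : ℤ) n)).card := by
    refine Finset.card_le_card_of_injOn
      (fun A => (((A.image (fun f => f 0)).min.untopD 0 : ℤ),
                 ((A.image (fun f => f 0)).max.unbotD 0 : ℤ))) ?_ ?_
    · intro A hA
      obtain ⟨ω, _, rfl⟩ := Finset.mem_image.mp hA
      dsimp only
      rw [image_ev]
      have hmin : (Rs ω).min = (minV ω : WithTop ℤ) := (Finset.coe_min' _).symm
      have hmax : (Rs ω).max = (maxV ω : WithBot ℤ) := (Finset.coe_max' _).symm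
      rw [hmin, hmax, WithTop.untopD_coe, WithBot.unbotD_coe]
      simp only [Finset.mem_coe, Finset.mem_product, Finset.mem_Icc]
      exact ⟨⟨neg_le_minV ω, minV_nonpos ω⟩, ⟨maxV_nonneg ω, maxV_le ω⟩⟩
    · intro A hA B hB hAB
      obtain ⟨ω, _, rfl⟩ := Finset.mem_image.mp (by exact hA)
      obtain ⟨ω', _, rfl⟩ := Finset.mem_image.mp (by exact hB)
      dsimp only at hAB
      rw [image_ev, image_ev] at hAB
      have hmin : (Rs ω).min = (minV ω : WithTop ℤ) := (Finset.coe_min' _).symm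
      have hmax : (Rs ω).max = (maxV ω : WithBot ℤ) := (Finset.coe_max' _).symm
      have hmin' : (Rs ω').min = (minV ω' : WithTop ℤ) := (Finset.coe_min' _).symm
      have hmax' : (Rs ω').max = (maxV ω' : WithBot ℤ) := (Finset.coe_max' _).symm
      rw [hmin, hmax, hmin', hmax', WithTop.untopD_coe, WithBot.unbotD_coe,
        WithTop.untopD_coe, WithBot.unbotD_coe, Prod.mk.injEq] at hAB
      have hRs : Rs ω = Rs ω' := by
        rw [Rs_eq_Icc, Rs_eq_Icc, hAB.1, hAB.2]
      rw [rangeW_eq_image, rangeW_eq_image, hRs]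
  refine hbd.trans ?_
  rw [Finset.card_product, Int.card_Icc, Int.card_Icc]
  have : ((0 : ℤ) + 1 - (-(n : ℤ))).toNat = n + 1 := by omega
  have h2 : ((n : ℤ) + 1 - 0).toNat = n + 1 := by omega
  rw [this, h2, sq]

/-! ### Binomial coefficient bound -/

lemma central_sq (m : ℕ) : (Nat.centralBinom m) ^ 2 * (2 * m + 1) ≤ 16 ^ m := by
  induction m with
  | zero => simp [Nat.centralBinom]
  | succ m ih =>
    have key := Nat.succ_mul_centralBinom_succ m
    have hpos : 0 < (m + 1) ^ 2 := by positivity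
    refine Nat.le_of_mul_le_mul_left ?_ hpos
    have h1 : (m + 1) ^ 2 * ((Nat.centralBinom (m + 1)) ^ 2 * (2 * (m + 1) + 1)) =
        ((m + 1) * Nat.centralBinom (m + 1)) ^ 2 * (2 * m + 3) := by ring
    rw [h1, key]
    calc (2 * (2 * m + 1) * Nat.centralBinom m) ^ 2 * (2 * m + 3)
        = ((2 * m + 1) * (2 * m + 3)) * (4 * ((Nat.centralBinom m) ^ 2 * (2 * m + 1))) := by ring
      _ ≤ ((2 * m + 1) * (2 * m + 3)) * (4 * 16 ^ m) :=
          Nat.mul_le_mul_left _ (Nat.mul_le_mul_left 4 ih)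
      _ ≤ ((2 * m + 2) * (2 * m + 2)) * (4 * 16 ^ m) :=
          Nat.mul_le_mul_right _ (by nlinarith)
      _ = (m + 1) ^ 2 * 16 ^ (m + 1) := by ring

lemma choose_half_sq (n : ℕ) : (n.choose (n / 2)) ^ 2 * n ≤ 4 ^ n := by
  rcases Nat.even_or_odd n with ⟨m, hm⟩ | ⟨m, hm⟩
  · subst hm
    have hdiv : (m + m) / 2 = m := by omega
    rw [hdiv]
    have hcb : (m + m).choose m = Nat.centralBinom m := by
      rw [Nat.centralBinom]
      congr 1
      omega
    rw [hcb]
    calc (Nat.centralBinom m) ^ 2 * (m + m) ≤ (Nat.centralBinom m) ^ 2 * (2 * m + 1) :=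
          Nat.mul_le_mul_left _ (by omega)
      _ ≤ 16 ^ m := central_sq m
      _ ≤ 4 ^ (m + m) := by
          rw [show (16 : ℕ) = 4 ^ 2 from rfl, ← pow_mul]
          exact Nat.pow_le_pow_right (by norm_num) (by omega)
  · subst hm
    have hdiv : (2 * m + 1) / 2 = m := by omega
    rw [hdiv]
    have hid : 2 * ((2 * m + 1).choose m) = Nat.centralBinom (m + 1) := by
      have hps := Nat.choose_succ_succ (2 * m + 1) m
      have hsymm := Nat.choose_symm (show m + 1 ≤ 2 * m + 1 by omega)
      have hsub : 2 * m + 1 - (m + 1) = m := by omega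
      rw [hsub] at hsymm
      rw [Nat.centralBinom]
      have h2 : 2 * (m + 1) = 2 * m + 1 + 1 := by omega
      rw [h2, hps, ← hsymm]
      omega
    have hsq : 4 * ((2 * m + 1).choose m) ^ 2 * (2 * m + 1) ≤ 16 ^ (m + 1) := by
      calc 4 * ((2 * m + 1).choose m) ^ 2 * (2 * m + 1)
          = (2 * ((2 * m + 1).choose m)) ^ 2 * (2 * m + 1) := by ring
        _ = (Nat.centralBinom (m + 1)) ^ 2 * (2 * m + 1) := by rw [hid]
        _ ≤ (Nat.centralBinom (m + 1)) ^ 2 * (2 * (m + 1) + 1) :=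
            Nat.mul_le_mul_left _ (by omega)
        _ ≤ 16 ^ (m + 1) := central_sq (m + 1)
    have h16 : (16 : ℕ) ^ (m + 1) = 4 * 4 ^ (2 * m + 1) := by
      rw [show (16 : ℕ) = 4 ^ 2 from rfl, ← pow_mul,
        show 2 * (m + 1) = (2 * m + 1) + 1 from by ring, pow_succ]
      ring
    rw [h16] at hsq
    have hsq' : 4 * (((2 * m + 1).choose m) ^ 2 * (2 * m + 1)) ≤ 4 * 4 ^ (2 * m + 1) := by
      calc 4 * (((2 * m + 1).choose m) ^ 2 * (2 * m + 1))
          = 4 * ((2 * m + 1).choose m) ^ 2 * (2 * m + 1) := by ring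
        _ ≤ 4 * 4 ^ (2 * m + 1) := hsq
    exact Nat.le_of_mul_le_mul_left hsq' (by norm_num)

lemma choose_half_real {n : ℕ} (hn : 1 ≤ n) :
    (n.choose (n / 2) : ℝ) * Real.sqrt n ≤ 2 ^ n := by
  have h4 : ((n.choose (n / 2) : ℝ) * Real.sqrt n) ^ 2 ≤ ((2 : ℝ) ^ n) ^ 2 := by
    rw [mul_pow, Real.sq_sqrt (by positivity : (0:ℝ) ≤ (n:ℝ))]
    have := choose_half_sq n
    have hc : ((n.choose (n / 2)) ^ 2 * n : ℝ) ≤ ((4 : ℝ) ^ n) := by exact_mod_cast this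
    calc ((n.choose (n / 2) : ℝ)) ^ 2 * (n : ℝ) ≤ (4 : ℝ) ^ n := hc
      _ = ((2 : ℝ) ^ n) ^ 2 := by
          rw [show (4 : ℝ) = 2 ^ 2 from by norm_num, ← pow_mul, ← pow_mul, Nat.mul_comm]
  have h5 := Real.sqrt_le_sqrt h4
  rwa [Real.sqrt_sq (by positivity), Real.sqrt_sq (by positivity)] at h5

/-! ### Probability lemmas -/

lemma prW_def (n : ℕ) (E : Set (Ω n)) : prW 1 n E = (E.ncard : ℝ) / 2 ^ n := by
  simp [prW]

lemma ncard_fiber_eq (n : ℕ) (A : Finset (Fin 1 → ℤ)) :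
    {ω : Ω n | rangeW (0 : Fin 1 → ℤ) ω = A}.ncard =
      (Finset.univ.filter (fun ω : Ω n => rangeW (0 : Fin 1 → ℤ) ω = A)).card := by
  rw [Set.ncard_eq_toFinset_card']
  simp [Set.toFinset_setOf]

lemma sum_prW (n : ℕ) :
    ∑ A ∈ Finset.image (fun ω : Ω n => rangeW (0 : Fin 1 → ℤ) ω) Finset.univ,
      prW 1 n {ω : Ω n | rangeW (0 : Fin 1 → ℤ) ω = A} = 1 := by
  classical
  have h := Finset.card_eq_sum_card_fiberwise
    (f := fun ω : Ω n => rangeW (0 : Fin 1 → ℤ) ω) (s := Finset.univ)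
    (t := Finset.image (fun ω : Ω n => rangeW (0 : Fin 1 → ℤ) ω) Finset.univ)
    (fun ω _ => Finset.mem_image_of_mem _ (Finset.mem_univ ω))
  have hcard : (Finset.univ : Finset (Ω n)).card = 2 ^ n := by
    simp [Finset.card_univ]
  have hstep : ∀ A ∈ Finset.image (fun ω : Ω n => rangeW (0 : Fin 1 → ℤ) ω) Finset.univ,
      prW 1 n {ω : Ω n | rangeW (0 : Fin 1 → ℤ) ω = A} =
        ((Finset.univ.filter (fun ω : Ω n => rangeW (0 : Fin 1 → ℤ) ω = A)).card : ℝ) / 2 ^ n :=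
    fun A _ => by rw [prW_def, ncard_fiber_eq]
  rw [Finset.sum_congr rfl hstep, ← Finset.sum_div, ← Nat.cast_sum, ← h, hcard]
  simp

end SRW

/-- For `d = 1`, the entropy of the range of `n`-step SRW on `ℤ` is of order `log n`. -/
theorem entropy_range_one_dim :
    ∃ c C : ℝ, 0 < c ∧ 0 < C ∧ ∀ n : ℕ, 2 ≤ n →
      c * Real.log n ≤ entW 1 n (rangeW (0 : Fin 1 → ℤ)) ∧
      entW 1 n (rangeW (0 : Fin 1 → ℤ)) ≤ C * Real.log n := by
  classical
  have hlog2 : (0 : ℝ) < Real.log 2 := Real.log_pos one_lt_two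
  refine ⟨1 / (2 * Real.log 2), 4 / Real.log 2,
    div_pos one_pos (by linarith), div_pos (by norm_num) hlog2, ?_⟩
  intro n hn
  have hn' : (1 : ℕ) ≤ n := by omega
  set F := Finset.image (fun ω : SRW.Ω n => rangeW (0 : Fin 1 → ℤ) ω) Finset.univ with hF
  set p : Finset (Fin 1 → ℤ) → ℝ :=
    fun A => prW 1 n {ω : SRW.Ω n | rangeW (0 : Fin 1 → ℤ) ω = A} with hp
  have hent : entW 1 n (rangeW (0 : Fin 1 → ℤ)) = ∑ A ∈ F, -(p A * logb 2 (p A)) := by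
    refine tsum_eq_sum ?_
    intro A hA
    have hempty : {ω : SRW.Ω n | rangeW (0 : Fin 1 → ℤ) ω = A} = ∅ := by
      ext ω
      simp only [Set.mem_setOf_eq, Set.mem_empty_iff_false, iff_false]
      intro h
      exact hA (hF ▸ Finset.mem_image.mpr ⟨ω, Finset.mem_univ ω, h⟩)
    have : prW 1 n {ω : SRW.Ω n | rangeW (0 : Fin 1 → ℤ) ω = A} = 0 := by
      rw [hempty, SRW.prW_def, Set.ncard_empty]
      simp
    rw [this]
    simp
  have hNn : (0 : ℝ) < (n : ℝ) := by positivity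
  have hsqrt : 0 < Real.sqrt n := Real.sqrt_pos.mpr hNn
  have hppos : ∀ A ∈ F, 0 < p A := by
    intro A hA
    obtain ⟨ω, _, hω⟩ := Finset.mem_image.mp (hF ▸ hA)
    show (0 : ℝ) < prW 1 n {ω' : SRW.Ω n | rangeW (0 : Fin 1 → ℤ) ω' = A}
    rw [SRW.prW_def]
    refine div_pos ?_ (by positivity)
    have : ({ω' : SRW.Ω n | rangeW (0 : Fin 1 → ℤ) ω' = A}).Nonempty := ⟨ω, hω⟩
    have := (Set.ncard_pos (Set.toFinite _)).mpr this
    exact_mod_cast this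
  have hple : ∀ A, p A ≤ 1 / Real.sqrt n := by
    intro A
    show prW 1 n {ω : SRW.Ω n | rangeW (0 : Fin 1 → ℤ) ω = A} ≤ 1 / Real.sqrt n
    rw [SRW.prW_def]
    have h1 : ({ω : SRW.Ω n | rangeW (0 : Fin 1 → ℤ) ω = A}.ncard : ℝ) ≤
        (n.choose (n / 2) : ℝ) := by exact_mod_cast SRW.fiber_card_le hn' A
    have h2 : (n.choose (n / 2) : ℝ) ≤ 2 ^ n / Real.sqrt n := by
      rw [le_div_iff₀ hsqrt]
      exact SRW.choose_half_real hn'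
    calc ({ω : SRW.Ω n | rangeW (0 : Fin 1 → ℤ) ω = A}.ncard : ℝ) / 2 ^ n
        ≤ (2 ^ n / Real.sqrt n) / 2 ^ n := by gcongr; exact h1.trans h2
      _ = 1 / Real.sqrt n := by
          field_simp
  have hsum1 : ∑ A ∈ F, p A = 1 := SRW.sum_prW n
  have hsplit : entW 1 n (rangeW (0 : Fin 1 → ℤ)) =
      (∑ A ∈ F, -(p A * Real.log (p A))) / Real.log 2 := by
    rw [hent, Finset.sum_div]
    refine Finset.sum_congr rfl fun A _ => ?_
    simp only [Real.logb]
    ring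
  constructor
  · -- lower bound
    have hlow : Real.log (Real.sqrt n) ≤ ∑ A ∈ F, -(p A * Real.log (p A)) := by
      calc Real.log (Real.sqrt n) = (∑ A ∈ F, p A) * Real.log (Real.sqrt n) := by
            rw [hsum1, one_mul]
        _ = ∑ A ∈ F, p A * Real.log (Real.sqrt n) := by rw [Finset.sum_mul]
        _ ≤ ∑ A ∈ F, -(p A * Real.log (p A)) := by
            refine Finset.sum_le_sum fun A hA => ?_
            have hlp : Real.log (p A) ≤ -Real.log (Real.sqrt n) := by
              have := Real.log_le_log (hppos A hA) (hple A)
              rwa [one_div, Real.log_inv] at this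
            nlinarith [mul_le_mul_of_nonneg_left hlp (le_of_lt (hppos A hA))]
    rw [hsplit]
    have heq : 1 / (2 * Real.log 2) * Real.log n = (Real.log n / 2) / Real.log 2 := by
      field_simp
    rw [heq, div_le_div_iff_of_pos_right hlog2]
    calc Real.log n / 2 = Real.log (Real.sqrt n) := (Real.log_sqrt (le_of_lt hNn)).symm
      _ ≤ _ := hlow
  · -- upper bound
    have hFne : F.Nonempty := ⟨rangeW (0 : Fin 1 → ℤ) (fun _ => (0, true)),
      hF ▸ Finset.mem_image_of_mem _ (Finset.mem_univ _)⟩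
    have hN1 : (1 : ℝ) ≤ (F.card : ℝ) := by
      have := Finset.card_pos.mpr hFne
      exact_mod_cast this
    have hNpos : (0 : ℝ) < (F.card : ℝ) := by linarith
    have hgibbs : ∑ A ∈ F, -(p A * Real.log (p A)) ≤ Real.log F.card := by
      have key : ∀ A ∈ F, -(p A * Real.log (p A)) ≤
          1 / (F.card : ℝ) - p A + p A * Real.log F.card := by
        intro A hA
        have hpA := hppos A hA
        have hlog : Real.log (1 / (p A * F.card)) ≤ 1 / (p A * F.card) - 1 :=
          Real.log_le_sub_one_of_pos (by positivity)
        have hexp : Real.log (1 / (p A * F.card)) = -Real.log (p A) - Real.log F.card := by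
          rw [one_div, Real.log_inv, Real.log_mul (ne_of_gt hpA) (ne_of_gt hNpos)]
          ring
        have hmul := mul_le_mul_of_nonneg_left hlog (le_of_lt hpA)
        have e1 : p A * (1 / (p A * (F.card : ℝ)) - 1) = 1 / (F.card : ℝ) - p A := by
          field_simp
        rw [e1, hexp] at hmul
        nlinarith [hmul]
      calc ∑ A ∈ F, -(p A * Real.log (p A))
          ≤ ∑ A ∈ F, (1 / (F.card : ℝ) - p A + p A * Real.log F.card) :=
            Finset.sum_le_sum key
        _ = Real.log F.card := by
            rw [Finset.sum_add_distrib, Finset.sum_sub_distrib, Finset.sum_const,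
              nsmul_eq_mul, ← Finset.sum_mul, hsum1]
            field_simp
            ring
    have hcardle : (F.card : ℝ) ≤ ((n : ℝ) + 1) ^ 2 := by
      have := SRW.card_ranges_le n
      have h2 : (F.card : ℝ) ≤ (((n + 1) ^ 2 : ℕ) : ℝ) := by exact_mod_cast this
      calc (F.card : ℝ) ≤ (((n + 1) ^ 2 : ℕ) : ℝ) := h2
        _ = ((n : ℝ) + 1) ^ 2 := by push_cast; ring
    have hn2 : (2 : ℝ) ≤ (n : ℝ) := by exact_mod_cast hn
    have hlogF : Real.log F.card ≤ 4 * Real.log n := by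
      calc Real.log F.card ≤ Real.log (((n : ℝ) + 1) ^ 2) :=
            Real.log_le_log hNpos hcardle
        _ = 2 * Real.log ((n : ℝ) + 1) := by
            rw [Real.log_pow]
            norm_num
        _ ≤ 2 * (2 * Real.log n) := by
            have h1 : (n : ℝ) + 1 ≤ (n : ℝ) ^ 2 := by nlinarith
            have h2 : Real.log ((n : ℝ) + 1) ≤ Real.log ((n : ℝ) ^ 2) :=
              Real.log_le_log (by linarith) h1
            rw [Real.log_pow] at h2
            push_cast at h2
            linarith
        _ = 4 * Real.log n := by ring
    rw [hsplit]
    rw [div_le_iff₀ hlog2]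
    calc ∑ A ∈ F, -(p A * Real.log (p A)) ≤ Real.log F.card := hgibbs
      _ ≤ 4 * Real.log n := hlogF
      _ = 4 / Real.log 2 * Real.log ↑n * Real.log 2 := by
          field_simp
end

section
/- For simple random walk on ℤ^d (d ≥ 1) started at the origin and any finite set A ⊂ ℤ^d, the probability that the range of the n-step walk equals A satisfies P[R(n) = A] ≤ (1 − 1/(2d))^{|∂A| − 1}, where |∂A| is the cardinality of the inner boundary of A. -/
open Real

namespace SRWAux

variable {d : ℕ}

/-- Walk driven by an infinite step sequence. -/
def walkN (g : ℕ → Fin d × Bool) (k : ℕ) : Fin d → ℤ :=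
  ∑ i ∈ Finset.range k, step (g i)

lemma walkN_succ (g : ℕ → Fin d × Bool) (k : ℕ) :
    walkN g (k + 1) = walkN g k + step (g k) := by
  simp [walkN, Finset.sum_range_succ]

lemma walkN_congr {g g' : ℕ → Fin d × Bool} {k : ℕ} (h : ∀ i < k, g i = g' i) :
    walkN g k = walkN g' k :=
  Finset.sum_congr rfl (fun i hi => by rw [h i (Finset.mem_range.mp hi)])

/-- Extend a finite step sequence by junk. -/
def extF {n : ℕ} (hd : 0 < d) (ω : Fin n → Fin d × Bool) : ℕ → Fin d × Bool :=
  fun i => if h : i < n then ω ⟨i, h⟩ else (⟨0, hd⟩, true)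

lemma walk_eq_walkN {n : ℕ} (hd : 0 < d) (ω : Fin n → Fin d × Bool) :
    ∀ k, k ≤ n → walk (0 : Fin d → ℤ) ω k = walkN (extF hd ω) k := by
  intro k
  induction k with
  | zero =>
    intro _
    have : Finset.univ.filter (fun i : Fin n => (i : ℕ) < 0) = ∅ := by simp
    simp [walk, walkN, this]
  | succ k ih =>
    intro hk
    have hkn : k < n := hk
    have hfil : Finset.univ.filter (fun i : Fin n => (i : ℕ) < k + 1) =
        insert ⟨k, hkn⟩ (Finset.univ.filter (fun i : Fin n => (i : ℕ) < k)) := by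
      ext i
      simp only [Finset.mem_filter, Finset.mem_univ, true_and, Finset.mem_insert]
      constructor
      · intro hi
        rcases Nat.lt_succ_iff_lt_or_eq.mp hi with h | h
        · exact Or.inr h
        · exact Or.inl (Fin.ext h)
      · rintro (rfl | h)
        · exact Nat.lt_succ_self k
        · exact Nat.lt_succ_of_lt h
    have hnot : (⟨k, hkn⟩ : Fin n) ∉ Finset.univ.filter (fun i : Fin n => (i : ℕ) < k) := by
      simp
    have hext : extF hd ω k = ω ⟨k, hkn⟩ := dif_pos hkn
    calc walk (0 : Fin d → ℤ) ω (k + 1)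
        = 0 + (step (ω ⟨k, hkn⟩) +
            ∑ i ∈ Finset.univ.filter (fun i : Fin n => (i : ℕ) < k), step (ω i)) := by
          rw [walk, hfil, Finset.sum_insert hnot]
      _ = walk (0 : Fin d → ℤ) ω k + step (ω ⟨k, hkn⟩) := by
          rw [walk]; abel
      _ = walkN (extF hd ω) k + step (extF hd ω k) := by
          rw [ih (le_of_lt hk), hext]
      _ = walkN (extF hd ω) (k + 1) := (walkN_succ _ _).symm

/-- Time `s` is marked: the walk is at a boundary point it has never visited before. -/
def markP (A : Finset (Fin d → ℤ)) (g : ℕ → Fin d × Bool) (s : ℕ) : Prop :=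
  walkN g s ∈ innerBdry A ∧ ∀ k < s, walkN g k ≠ walkN g s

instance (A : Finset (Fin d → ℤ)) (g : ℕ → Fin d × Bool) (s : ℕ) :
    Decidable (markP A g s) := by unfold markP; infer_instance

lemma markP_congr {A : Finset (Fin d → ℤ)} {g g' : ℕ → Fin d × Bool} {s : ℕ}
    (h : ∀ i < s, g i = g' i) : markP A g s ↔ markP A g' s := by
  have hw : ∀ k ≤ s, walkN g k = walkN g' k := fun k hk =>
    walkN_congr (fun i hi => h i (lt_of_lt_of_le hi hk))
  unfold markP
  rw [hw s le_rfl]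
  constructor
  · rintro ⟨h1, h2⟩
    exact ⟨h1, fun k hk => by rw [← hw k hk.le]; exact h2 k hk⟩
  · rintro ⟨h1, h2⟩
    exact ⟨h1, fun k hk => by rw [hw k hk.le]; exact h2 k hk⟩

/-- The forbidden step at a boundary point. -/
noncomputable def forbF (hd : 0 < d) (A : Finset (Fin d → ℤ)) (x : Fin d → ℤ) :
    Fin d × Bool :=
  if h : ∃ a : Fin d × Bool, x + step a ∉ A then h.choose else (⟨0, hd⟩, true)

lemma forbF_spec (hd : 0 < d) {A : Finset (Fin d → ℤ)} {x : Fin d → ℤ}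
    (hx : x ∈ innerBdry A) : x + step (forbF hd A x) ∉ A := by
  have h : ∃ a : Fin d × Bool, x + step a ∉ A := (Finset.mem_filter.mp hx).2
  rw [forbF, dif_pos h]
  exact h.choose_spec

/-- Number of marked times strictly before `n`. -/
def marksC (hd : 0 < d) (A : Finset (Fin d → ℤ)) {n : ℕ} (ω : Fin n → Fin d × Bool) : ℕ :=
  ((Finset.range n).filter (markP A (extF hd ω))).card

/-- At every marked time the step avoids the forbidden direction. -/
def goodP (hd : 0 < d) (A : Finset (Fin d → ℤ)) {n : ℕ} (ω : Fin n → Fin d × Bool) : Prop :=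
  ∀ s < n, markP A (extF hd ω) s → extF hd ω s ≠ forbF hd A (walkN (extF hd ω) s)

lemma extF_snoc_lt {n : ℕ} (hd : 0 < d) (ω' : Fin n → Fin d × Bool) (b : Fin d × Bool)
    {i : ℕ} (hi : i < n) : extF hd (Fin.snoc ω' b) i = extF hd ω' i := by
  unfold extF
  rw [dif_pos (Nat.lt_succ_of_lt hi), dif_pos hi]
  simp [Fin.snoc, hi]

lemma extF_snoc_last {n : ℕ} (hd : 0 < d) (ω' : Fin n → Fin d × Bool) (b : Fin d × Bool) :
    extF hd (Fin.snoc ω' b) n = b := by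
  unfold extF
  rw [dif_pos (Nat.lt_succ_self n)]
  simp [Fin.snoc]

lemma walkN_snoc {n : ℕ} (hd : 0 < d) (ω' : Fin n → Fin d × Bool) (b : Fin d × Bool)
    {k : ℕ} (hk : k ≤ n) :
    walkN (extF hd (Fin.snoc ω' b)) k = walkN (extF hd ω') k :=
  walkN_congr (fun i hi => extF_snoc_lt hd ω' b (lt_of_lt_of_le hi hk))

lemma markP_snoc {n : ℕ} (hd : 0 < d) (A : Finset (Fin d → ℤ)) (ω' : Fin n → Fin d × Bool)
    (b : Fin d × Bool) {s : ℕ} (hs : s ≤ n) :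
    markP A (extF hd (Fin.snoc ω' b)) s ↔ markP A (extF hd ω') s :=
  markP_congr (fun i hi => extF_snoc_lt hd ω' b (lt_of_lt_of_le hi hs))

lemma marksC_snoc {n : ℕ} (hd : 0 < d) (A : Finset (Fin d → ℤ)) (ω' : Fin n → Fin d × Bool)
    (b : Fin d × Bool) :
    marksC hd A (Fin.snoc ω' b : Fin (n+1) → Fin d × Bool) =
      marksC hd A ω' + (if markP A (extF hd ω') n then 1 else 0) := by
  unfold marksC
  rw [Finset.range_add_one, Finset.filter_insert]
  have hfe : (Finset.range n).filter (markP A (extF hd (Fin.snoc ω' b))) =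
      (Finset.range n).filter (markP A (extF hd ω')) := by
    apply Finset.filter_congr
    intro s hs
    have := markP_snoc hd A ω' b (le_of_lt (Finset.mem_range.mp hs))
    simp [this]
  by_cases hm : markP A (extF hd ω') n
  · rw [if_pos ((markP_snoc hd A ω' b le_rfl).mpr hm), if_pos hm, hfe,
      Finset.card_insert_of_notMem (by simp)]
  · rw [if_neg (fun h => hm ((markP_snoc hd A ω' b le_rfl).mp h)), if_neg hm, hfe, add_zero]

lemma goodP_snoc {n : ℕ} (hd : 0 < d) (A : Finset (Fin d → ℤ)) (ω' : Fin n → Fin d × Bool)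
    (b : Fin d × Bool) :
    goodP hd A (Fin.snoc ω' b : Fin (n+1) → Fin d × Bool) ↔
      goodP hd A ω' ∧ (markP A (extF hd ω') n → b ≠ forbF hd A (walkN (extF hd ω') n)) := by
  constructor
  · intro hg
    constructor
    · intro s hs hm
      have h1 := hg s (Nat.lt_succ_of_lt hs) ((markP_snoc hd A ω' b hs.le).mpr hm)
      rwa [extF_snoc_lt hd ω' b hs, walkN_snoc hd ω' b hs.le] at h1
    · intro hm
      have h1 := hg n (Nat.lt_succ_self n) ((markP_snoc hd A ω' b le_rfl).mpr hm)
      rwa [extF_snoc_last, walkN_snoc hd ω' b le_rfl] at h1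
  · rintro ⟨hg, hb⟩ s hs hm
    rcases Nat.lt_succ_iff_lt_or_eq.mp hs with h | rfl
    · have := hg s h ((markP_snoc hd A ω' b h.le).mp hm)
      rwa [extF_snoc_lt hd ω' b h, walkN_snoc hd ω' b h.le]
    · have := hb ((markP_snoc hd A ω' b le_rfl).mp hm)
      rwa [extF_snoc_last, walkN_snoc hd ω' b le_rfl]

open scoped Classical in
/-- Weighted count of good step sequences. -/
noncomputable def Wsum (hd : 0 < d) (A : Finset (Fin d → ℤ)) (t : ℝ) (n : ℕ) : ℝ :=
  ∑ ω : Fin n → Fin d × Bool, if goodP hd A ω then t ^ marksC hd A ω else 0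

open scoped Classical in
lemma Wsum_le (hd : 0 < d) (A : Finset (Fin d → ℤ)) (t : ℝ)
    (ht : (2 * d - 1 : ℝ) * t = 2 * d) : ∀ n, Wsum hd A t n ≤ (2 * d) ^ n := by
  intro n
  induction n with
  | zero =>
    have : Wsum hd A t 0 = 1 := by
      rw [Wsum, Fintype.sum_unique]
      have hg : goodP hd A (default : Fin 0 → Fin d × Bool) := by
        intro s hs; omega
      rw [if_pos hg]
      have : marksC hd A (default : Fin 0 → Fin d × Bool) = 0 := by
        simp [marksC]
      rw [this, pow_zero]
    rw [this, pow_zero]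
  | succ n ih =>
    have hcard : (Finset.univ : Finset (Fin d × Bool)).card = 2 * d := by
      simp [Finset.card_univ, mul_comm]
    have hsplit : Wsum hd A t (n + 1) =
        ∑ p : (Fin d × Bool) × (Fin n → Fin d × Bool),
          (if goodP hd A (Fin.snoc p.2 p.1 : Fin (n+1) → Fin d × Bool)
            then t ^ marksC hd A (Fin.snoc p.2 p.1 : Fin (n+1) → Fin d × Bool) else 0) := by
      rw [Wsum]
      exact (Fintype.sum_equiv (Fin.snocEquiv (fun _ => Fin d × Bool)) _ _
        (fun p => rfl)).symm
    rw [hsplit, Fintype.sum_prod_type_right]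
    have hinner : ∀ ω' : Fin n → Fin d × Bool,
        (∑ b : Fin d × Bool,
          if goodP hd A (Fin.snoc ω' b : Fin (n+1) → Fin d × Bool)
            then t ^ marksC hd A (Fin.snoc ω' b : Fin (n+1) → Fin d × Bool) else 0)
        = (2 * d) * (if goodP hd A ω' then t ^ marksC hd A ω' else 0) := by
      intro ω'
      by_cases hg : goodP hd A ω'
      · by_cases hm : markP A (extF hd ω') n
        · have : ∀ b : Fin d × Bool,
              (if goodP hd A (Fin.snoc ω' b : Fin (n+1) → Fin d × Bool)
                then t ^ marksC hd A (Fin.snoc ω' b : Fin (n+1) → Fin d × Bool) else 0)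
              = (if b = forbF hd A (walkN (extF hd ω') n) then 0
                  else t * t ^ marksC hd A ω') := by
            intro b
            rw [marksC_snoc, if_pos hm]
            by_cases hb : b = forbF hd A (walkN (extF hd ω') n)
            · rw [if_pos hb, if_neg]
              rw [goodP_snoc]
              rintro ⟨-, h2⟩
              exact h2 hm hb
            · rw [if_neg hb, if_pos, pow_succ, mul_comm]
              rw [goodP_snoc]
              exact ⟨hg, fun _ => hb⟩
          rw [Finset.sum_congr rfl (fun b _ => this b)]
          set c := forbF hd A (walkN (extF hd ω') n)
          set x := t * t ^ marksC hd A ω' with hx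
          have h1 : ∀ b : Fin d × Bool, (if b = c then (0:ℝ) else x)
              = x - (if b = c then x else 0) := by
            intro b; by_cases hb : b = c <;> simp [hb]
          rw [Finset.sum_congr rfl (fun b _ => h1 b), Finset.sum_sub_distrib,
            Finset.sum_const, hcard, Finset.sum_ite_eq' Finset.univ c (fun _ => x),
            if_pos (Finset.mem_univ c), nsmul_eq_mul, if_pos hg, hx]
          push_cast
          linear_combination (t ^ marksC hd A ω') * ht
        · have : ∀ b : Fin d × Bool,
              (if goodP hd A (Fin.snoc ω' b : Fin (n+1) → Fin d × Bool)
                then t ^ marksC hd A (Fin.snoc ω' b : Fin (n+1) → Fin d × Bool) else 0)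
              = t ^ marksC hd A ω' := by
            intro b
            rw [marksC_snoc, if_neg hm, add_zero, if_pos]
            rw [goodP_snoc]
            exact ⟨hg, fun h => absurd h hm⟩
          rw [Finset.sum_congr rfl (fun b _ => this b), Finset.sum_const, hcard,
            if_pos hg, nsmul_eq_mul]
          push_cast
          ring
      · have : ∀ b : Fin d × Bool,
            (if goodP hd A (Fin.snoc ω' b : Fin (n+1) → Fin d × Bool)
              then t ^ marksC hd A (Fin.snoc ω' b : Fin (n+1) → Fin d × Bool) else 0) = 0 := by
          intro b
          rw [if_neg]
          rw [goodP_snoc]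
          rintro ⟨h1, -⟩
          exact hg h1
        rw [Finset.sum_congr rfl (fun b _ => this b), Finset.sum_const, if_neg hg,
          smul_zero, mul_zero]
    rw [Finset.sum_congr rfl (fun ω' _ => hinner ω'), ← Finset.mul_sum]
    calc (2 * (d:ℝ)) * ∑ ω' : Fin n → Fin d × Bool,
          (if goodP hd A ω' then t ^ marksC hd A ω' else 0)
        ≤ (2 * d) * (2 * d) ^ n := by
          apply mul_le_mul_of_nonneg_left _ (by positivity)
          exact ih
      _ = (2 * d) ^ (n + 1) := by ring

end SRWAux

open SRWAux in
open scoped Classical in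
/-- `P[R(n) = A] ≤ (1 - 1/(2d))^(|∂A| - 1)` for SRW on `ℤ^d` started at the origin. -/
theorem prob_range_eq_le :
    ∀ d : ℕ, 1 ≤ d → ∀ n : ℕ, ∀ A : Finset (Fin d → ℤ),
      prW d n {ω | rangeW (0 : Fin d → ℤ) ω = A} ≤
        (1 - 1 / (2 * (d : ℝ))) ^ ((innerBdry A).card - 1) := by
  intro d hd n A
  have hd' : 0 < d := hd
  have hdr : (1 : ℝ) ≤ (d : ℝ) := by exact_mod_cast hd
  have h2d : (0:ℝ) < 2 * d := by linarith
  have h2d1 : (0:ℝ) < 2 * d - 1 := by linarith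
  set t : ℝ := (2*d)/(2*d-1) with htdef
  have ht : (2*(d:ℝ)-1)*t = 2*d := by rw [htdef]; field_simp
  have ht1 : 1 ≤ t := (le_div_iff₀ h2d1).mpr (by linarith)
  have ht0 : 0 ≤ t := le_trans zero_le_one ht1
  set u : ℝ := 1 - 1/(2*(d:ℝ)) with hu
  have hu0 : 0 ≤ u := by
    rw [hu, sub_nonneg, div_le_one h2d]; linarith
  have hut : t * u = 1 := by
    rw [hu, htdef]
    field_simp
  set m₀ := (innerBdry A).card - 1 with hm₀
  set Efin := Finset.univ.filter
    (fun ω : Fin n → Fin d × Bool => rangeW (0 : Fin d → ℤ) ω = A) with hE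
  have hset : {ω : Fin n → Fin d × Bool | rangeW (0 : Fin d → ℤ) ω = A}.ncard
      = Efin.card := by
    rw [Set.ncard_eq_toFinset_card', Set.toFinset_setOf, hE]
  -- per-ω facts
  have hfacts : ∀ ω ∈ Efin, goodP hd' A ω ∧ m₀ ≤ marksC hd' A ω := by
    intro ω hω
    have hA : rangeW (0 : Fin d → ℤ) ω = A := (Finset.mem_filter.mp hω).2
    have hmem : ∀ k, k ≤ n → walkN (extF hd' ω) k ∈ A := by
      intro k hk
      rw [← walk_eq_walkN hd' ω k hk, ← hA, rangeW]
      exact Finset.mem_image_of_mem _ (Finset.mem_range.mpr (Nat.lt_succ_of_le hk))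
    constructor
    · intro s hs hmark heq
      have h1 : walkN (extF hd' ω) (s+1) =
          walkN (extF hd' ω) s + step (forbF hd' A (walkN (extF hd' ω) s)) := by
        rw [walkN_succ, heq]
      have h2 := forbF_spec hd' hmark.1
      rw [← h1] at h2
      exact h2 (hmem (s+1) hs)
    · have hxall : ∀ z ∈ innerBdry A, ∃ k, k ≤ n ∧ walk (0 : Fin d → ℤ) ω k = z := by
        intro z hz
        have hzA : z ∈ A := (Finset.mem_filter.mp hz).1
        rw [← hA, rangeW] at hzA
        obtain ⟨k, hk, hkz⟩ := Finset.mem_image.mp hzA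
        exact ⟨k, Nat.lt_succ_iff.mp (Finset.mem_range.mp hk), hkz⟩
      set f : (Fin d → ℤ) → ℕ := fun z =>
        if h : ∃ k, k ≤ n ∧ walk (0 : Fin d → ℤ) ω k = z then Nat.find h else 0 with hf
      have hfprop : ∀ z ∈ innerBdry A, f z ≤ n ∧ walk (0 : Fin d → ℤ) ω (f z) = z ∧
          ∀ j < f z, ¬(j ≤ n ∧ walk (0 : Fin d → ℤ) ω j = z) := by
        intro z hz
        have h := hxall z hz
        have : f z = Nat.find h := dif_pos h
        rw [this]
        exact ⟨(Nat.find_spec h).1, (Nat.find_spec h).2, fun j hj => Nat.find_min h hj⟩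
      have hcard1 : (innerBdry A).card ≤
          ((Finset.range (n+1)).filter (markP A (extF hd' ω))).card := by
        apply Finset.card_le_card_of_injOn f
        · intro z hz
          obtain ⟨h1, h2, h3⟩ := hfprop z hz
          rw [Finset.mem_coe, Finset.mem_filter, Finset.mem_range]
          refine ⟨Nat.lt_succ_of_le h1, ?_, ?_⟩
          · rw [← walk_eq_walkN hd' ω (f z) h1] at *
            rw [h2]; exact hz
          · intro k hk heq
            rw [← walk_eq_walkN hd' ω k (le_trans (le_of_lt hk) h1),
              ← walk_eq_walkN hd' ω (f z) h1, h2] at heq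
            exact h3 k hk ⟨le_trans (le_of_lt hk) h1, heq⟩
        · intro z1 hz1 z2 hz2 hfz
          have h1 := (hfprop z1 hz1).2.1
          have h2 := (hfprop z2 hz2).2.1
          rw [← h1, ← h2, hfz]
      have hcard2 : ((Finset.range (n+1)).filter (markP A (extF hd' ω))).card ≤
          marksC hd' A ω + 1 := by
        rw [Finset.range_add_one, Finset.filter_insert, marksC]
        by_cases hm : markP A (extF hd' ω) n
        · rw [if_pos hm]
          exact le_trans (Finset.card_insert_le _ _) le_rfl
        · rw [if_neg hm]
          omega
      omega
  -- key inequality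
  have key : (Efin.card : ℝ) * t ^ m₀ ≤ (2*d) ^ n := by
    calc (Efin.card : ℝ) * t ^ m₀ = ∑ _ω ∈ Efin, t ^ m₀ := by
          rw [Finset.sum_const, nsmul_eq_mul]
      _ ≤ ∑ ω ∈ Efin, (if goodP hd' A ω then t ^ marksC hd' A ω else 0) := by
          apply Finset.sum_le_sum
          intro ω hω
          obtain ⟨hg, hmk⟩ := hfacts ω hω
          rw [if_pos hg]
          exact pow_le_pow_right₀ ht1 hmk
      _ ≤ Wsum hd' A t n := by
          apply Finset.sum_le_sum_of_subset_of_nonneg (Finset.subset_univ _)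
          intro ω _ _
          split
          · positivity
          · exact le_rfl
      _ ≤ (2*d) ^ n := Wsum_le hd' A t ht n
  rw [prW, hset]
  rw [div_le_iff₀ (pow_pos h2d n)]
  have htu : t ^ m₀ * u ^ m₀ = 1 := by
    rw [← mul_pow, hut, one_pow]
  calc (Efin.card : ℝ) = ((Efin.card : ℝ) * t ^ m₀) * u ^ m₀ := by
        rw [mul_assoc, htu, mul_one]
    _ ≤ (2*d) ^ n * u ^ m₀ :=
        mul_le_mul_of_nonneg_right key (pow_nonneg hu0 _)
    _ = u ^ m₀ * (2*d) ^ n := mul_comm _ _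
end

section
/- For simple random walk on ℤ^d (d ≥ 1) started at the origin and every n ∈ ℕ, the Shannon entropy of the range satisfies H(R(n)) ≥ −log₂(1 − 1/(2d)) · E[ |∂R(n)| − 1 ]. -/
open Real

lemma innerBdry_nonempty {d : ℕ} (hd : 1 ≤ d) {A : Finset (Fin d → ℤ)} (hA : A.Nonempty) :
    (innerBdry A).Nonempty := by
  classical
  set i0 : Fin d := ⟨0, hd⟩
  obtain ⟨x, hxA, hmax⟩ := Finset.exists_max_image A (fun x => x i0) hA
  refine ⟨x, Finset.mem_filter.mpr ⟨hxA, ⟨(i0, true), fun hc => ?_⟩⟩⟩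
  have h := hmax _ hc
  simp [step] at h

lemma walk_zero {d n : ℕ} (z : Fin d → ℤ) (ω : Fin n → Fin d × Bool) : walk z ω 0 = z := by
  simp [walk]

lemma walk_succ {d n : ℕ} (z : Fin d → ℤ) (ω : Fin (n+1) → Fin d × Bool) (j : ℕ) :
    walk z ω (j+1) = walk (z + step (ω 0)) (fun i => ω i.succ) j := by
  unfold walk
  rw [Finset.sum_filter, Finset.sum_filter, Fin.sum_univ_succ]
  simp [Fin.val_succ, Nat.succ_lt_succ_iff, add_assoc]

open Classical in
noncomputable def Ek (d : ℕ) (A : Finset (Fin d → ℤ)) (k : ℕ) (z : Fin d → ℤ)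
    (V : Finset (Fin d → ℤ)) : Finset (Fin k → Fin d × Bool) :=
  Finset.univ.filter (fun ω =>
    (∀ j ≤ k, walk z ω j ∈ A) ∧ A ⊆ V ∪ (Finset.range (k+1)).image (walk z ω))

lemma mem_Ek_succ {d k : ℕ} {A : Finset (Fin d → ℤ)} {z : Fin d → ℤ}
    {V : Finset (Fin d → ℤ)} {ω : Fin (k+1) → Fin d × Bool} :
    ω ∈ Ek d A (k+1) z V ↔
      z ∈ A ∧ (fun i => ω i.succ) ∈ Ek d A k (z + step (ω 0)) (insert z V) := by
  classical
  have himg : (Finset.range (k+2)).image (walk z ω)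
      = insert z ((Finset.range (k+1)).image (walk (z + step (ω 0)) (fun i => ω i.succ))) := by
    ext x
    simp only [Finset.mem_image, Finset.mem_range, Finset.mem_insert]
    constructor
    · rintro ⟨j, hj, rfl⟩
      cases j with
      | zero => left; exact (walk_zero z ω).symm ▸ rfl
      | succ j => right; exact ⟨j, by omega, (walk_succ z ω j).symm⟩
    · rintro (rfl | ⟨j, hj, rfl⟩)
      · exact ⟨0, by omega, walk_zero _ ω⟩
      · exact ⟨j+1, by omega, walk_succ _ ω j⟩
  simp only [Ek, Finset.mem_filter, Finset.mem_univ, true_and]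
  constructor
  · rintro ⟨h1, h2⟩
    have hz : z ∈ A := by have := h1 0 (by omega); rwa [walk_zero] at this
    refine ⟨hz, ⟨fun j hj => by rw [← walk_succ]; exact h1 (j+1) (by omega), ?_⟩⟩
    intro x hx
    have := h2 hx
    rw [himg, Finset.union_insert] at this
    rw [Finset.insert_union]
    rcases Finset.mem_insert.mp this with rfl | h
    · exact Finset.mem_insert_self _ _
    · exact Finset.mem_insert_of_mem h
  · rintro ⟨hz, h1, h2⟩
    constructor
    · intro j hj
      cases j with
      | zero => rwa [walk_zero]
      | succ j => rw [walk_succ]; exact h1 j (by omega)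
    · intro x hx
      have := h2 hx
      rw [Finset.insert_union] at this
      rw [himg, Finset.union_insert]
      exact this

lemma Ek_eq_empty_of_not_mem {d k : ℕ} {A : Finset (Fin d → ℤ)} {z : Fin d → ℤ}
    {V : Finset (Fin d → ℤ)} (hz : z ∉ A) : Ek d A k z V = ∅ := by
  classical
  ext ω
  simp only [Ek, Finset.mem_filter, Finset.mem_univ, true_and, Finset.notMem_empty, iff_false]
  rintro ⟨h1, -⟩
  exact hz (by have := h1 0 (by omega); rwa [walk_zero] at this)

lemma card_Ek_succ_le {d k : ℕ} (A : Finset (Fin d → ℤ)) (z : Fin d → ℤ)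
    (V : Finset (Fin d → ℤ)) :
    (Ek d A (k+1) z V).card ≤
      ∑ δ : Fin d × Bool, (Ek d A k (z + step δ) (insert z V)).card := by
  classical
  rw [Finset.card_eq_sum_card_fiberwise
    (f := fun ω : Fin (k+1) → Fin d × Bool => ω 0) (t := Finset.univ)
    (fun x _ => Finset.mem_univ _)]
  apply Finset.sum_le_sum
  intro δ _
  apply Finset.card_le_card_of_injOn (fun ω => fun i => ω i.succ)
  · intro ω hω
    simp only [Finset.mem_coe, Finset.mem_filter] at hω
    obtain ⟨hmem, h0⟩ := hω
    have := (mem_Ek_succ.mp hmem).2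
    rwa [h0] at this
  · intro ω hω ω' hω' h
    simp only [Finset.mem_coe, Finset.mem_filter] at hω hω'
    funext i
    cases i using Fin.cases with
    | zero => rw [hω.2, hω'.2]
    | succ i => exact congrFun h i


lemma card_Ek_le {d : ℕ} (hd : 1 ≤ d) (A : Finset (Fin d → ℤ)) :
    ∀ (k : ℕ) (z : Fin d → ℤ) (V : Finset (Fin d → ℤ)),
      ((Ek d A k z V).card : ℝ) ≤
        (2*(d:ℝ))^k * (1 - 1/(2*(d:ℝ))) ^ ((innerBdry A \ V).card - 1) := by
  classical
  have hd1 : (1:ℝ) ≤ (d:ℝ) := by exact_mod_cast hd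
  have h2d : (0:ℝ) < 2*(d:ℝ) := by linarith
  set q : ℝ := 1 - 1/(2*(d:ℝ)) with hq
  have hq0 : 0 < q := by
    rw [hq]
    have : 1/(2*(d:ℝ)) ≤ 1/2 := by
      apply div_le_div_of_nonneg_left <;> linarith
    linarith
  have hq1 : q ≤ 1 := by
    rw [hq]
    have : 0 < 1/(2*(d:ℝ)) := by positivity
    linarith
  have hmul : 2*(d:ℝ) * q = 2*(d:ℝ) - 1 := by
    rw [hq]; field_simp
  have hcard2d : ((Finset.univ : Finset (Fin d × Bool)).card : ℝ) = 2*(d:ℝ) := by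
    have : (Finset.univ : Finset (Fin d × Bool)).card = 2*d := by
      simp [Finset.card_univ, mul_comm]
    rw [this]; push_cast; ring
  intro k
  induction k with
  | zero =>
    intro z V
    by_cases h : (Ek d A 0 z V).Nonempty
    · obtain ⟨ω, hω⟩ := h
      simp only [Ek, Finset.mem_filter, Finset.mem_univ, true_and] at hω
      have hsub : innerBdry A \ V ⊆ {z} := by
        intro x hx
        rcases Finset.mem_sdiff.mp hx with ⟨hx1, hx2⟩
        have hxA : x ∈ A := Finset.filter_subset _ _ hx1
        have := hω.2 hxA
        rcases Finset.mem_union.mp this with h | h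
        · exact absurd h hx2
        · simp only [Finset.mem_image, Finset.mem_range] at h
          obtain ⟨j, hj, hjx⟩ := h
          interval_cases j
          rw [walk_zero] at hjx
          simp [hjx]
      have hle : (innerBdry A \ V).card ≤ 1 := by
        calc (innerBdry A \ V).card ≤ ({z} : Finset _).card := Finset.card_le_card hsub
        _ = 1 := Finset.card_singleton z
      have hzero : (innerBdry A \ V).card - 1 = 0 := by omega
      rw [hzero, pow_zero, pow_zero, mul_one]
      have : (Ek d A 0 z V).card ≤ 1 := by
        calc (Ek d A 0 z V).card ≤ Fintype.card (Fin 0 → Fin d × Bool) := Finset.card_le_univ _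
        _ = 1 := by simp
      exact_mod_cast this
    · rw [Finset.not_nonempty_iff_eq_empty] at h
      rw [h]
      simp only [Finset.card_empty, Nat.cast_zero]
      positivity
  | succ k ih =>
    intro z V
    have key : ((Ek d A (k+1) z V).card : ℝ) ≤
        ∑ δ : Fin d × Bool, ((Ek d A k (z + step δ) (insert z V)).card : ℝ) := by
      exact_mod_cast card_Ek_succ_le A z V
    set r := (innerBdry A \ V).card with hrdef
    set r' := (innerBdry A \ insert z V).card with hr'def
    have hrr' : r ≤ r' + 1 := by
      have hsub : innerBdry A \ V ⊆ insert z (innerBdry A \ insert z V) := by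
        intro x hx
        rcases Finset.mem_sdiff.mp hx with ⟨hx1, hx2⟩
        by_cases hxz : x = z
        · exact hxz ▸ Finset.mem_insert_self _ _
        · refine Finset.mem_insert_of_mem (Finset.mem_sdiff.mpr ⟨hx1, fun hc => ?_⟩)
          rcases Finset.mem_insert.mp hc with h | h
          · exact hxz h
          · exact hx2 h
      calc r ≤ (insert z (innerBdry A \ insert z V)).card := Finset.card_le_card hsub
      _ ≤ r' + 1 := Finset.card_insert_le _ _
    by_cases hzA : z ∈ A
    · by_cases hzB : z ∈ innerBdry A
      · obtain ⟨-, a, ha⟩ := Finset.mem_filter.mp hzB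
        have hzero : ((Ek d A k (z + step a) (insert z V)).card : ℝ) = 0 := by
          rw [Ek_eq_empty_of_not_mem ha]; simp
        have hsum : ∑ δ : Fin d × Bool, ((Ek d A k (z + step δ) (insert z V)).card : ℝ)
            = ∑ δ ∈ Finset.univ.erase a, ((Ek d A k (z + step δ) (insert z V)).card : ℝ) := by
          rw [← Finset.sum_erase_add Finset.univ _ (Finset.mem_univ a), hzero, add_zero]
        have hbound : ∑ δ ∈ Finset.univ.erase a,
            ((Ek d A k (z + step δ) (insert z V)).card : ℝ)
            ≤ (2*(d:ℝ) - 1) * ((2*(d:ℝ))^k * q ^ (r' - 1)) := by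
          have h1 : ∀ δ ∈ Finset.univ.erase a,
              ((Ek d A k (z + step δ) (insert z V)).card : ℝ)
              ≤ (2*(d:ℝ))^k * q ^ (r' - 1) := fun δ _ => ih (z + step δ) (insert z V)
          have h2 := Finset.sum_le_card_nsmul _ _ _ h1
          rw [nsmul_eq_mul] at h2
          have h3 : ((Finset.univ.erase a).card : ℝ) = 2*(d:ℝ) - 1 := by
            rw [Finset.card_erase_of_mem (Finset.mem_univ a)]
            rw [Nat.cast_sub (by
              have : 0 < (Finset.univ : Finset (Fin d × Bool)).card := by
                simp [Finset.card_univ]; omega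
              omega)]
            rw [hcard2d]; simp
          rwa [h3] at h2
        have hfinal : (2*(d:ℝ) - 1) * ((2*(d:ℝ))^k * q ^ (r' - 1))
            ≤ (2*(d:ℝ))^(k+1) * q ^ (r - 1) := by
          rw [← hmul]
          have hexp : q ^ ((r' - 1) + 1) ≤ q ^ (r - 1) :=
            pow_le_pow_of_le_one hq0.le hq1 (by omega)
          calc 2*(d:ℝ)*q * ((2*(d:ℝ))^k * q ^ (r' - 1))
              = (2*(d:ℝ))^(k+1) * q ^ ((r'-1)+1) := by ring
          _ ≤ (2*(d:ℝ))^(k+1) * q ^ (r - 1) := by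
              exact mul_le_mul_of_nonneg_left hexp (by positivity)
        exact le_trans key (le_trans (le_of_eq hsum) (le_trans hbound hfinal))
      · have hrr : innerBdry A \ insert z V = innerBdry A \ V := by
          ext x
          simp only [Finset.mem_sdiff, Finset.mem_insert]
          constructor
          · rintro ⟨h1, h2⟩
            exact ⟨h1, fun hc => h2 (Or.inr hc)⟩
          · rintro ⟨h1, h2⟩
            refine ⟨h1, fun hc => ?_⟩
            rcases hc with rfl | hc
            · exact hzB h1
            · exact h2 hc
        have hbound : ∑ δ : Fin d × Bool,
            ((Ek d A k (z + step δ) (insert z V)).card : ℝ)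
            ≤ (2*(d:ℝ)) * ((2*(d:ℝ))^k * q ^ (r - 1)) := by
          have h1 : ∀ δ ∈ (Finset.univ : Finset (Fin d × Bool)),
              ((Ek d A k (z + step δ) (insert z V)).card : ℝ)
              ≤ (2*(d:ℝ))^k * q ^ (r - 1) := by
            intro δ _
            have hthis := ih (z + step δ) (insert z V)
            rw [hrr] at hthis
            exact hthis
          have h2 := Finset.sum_le_card_nsmul _ _ _ h1
          rw [nsmul_eq_mul, hcard2d] at h2
          exact h2
        have : (2*(d:ℝ)) * ((2*(d:ℝ))^k * q ^ (r - 1)) = (2*(d:ℝ))^(k+1) * q ^ (r-1) := by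
          ring
        exact le_trans key (le_trans hbound (le_of_eq this))
    · rw [Ek_eq_empty_of_not_mem hzA]
      simp only [Finset.card_empty, Nat.cast_zero]
      positivity

lemma prW_range_le {d : ℕ} (hd : 1 ≤ d) (n : ℕ) (A : Finset (Fin d → ℤ)) :
    prW d n {ω | rangeW (0 : Fin d → ℤ) ω = A} ≤
      (1 - 1/(2*(d:ℝ))) ^ ((innerBdry A).card - 1) := by
  classical
  have hset : {ω | rangeW (0 : Fin d → ℤ) ω = A} =
      ((Finset.univ.filter (fun ω : Fin n → Fin d × Bool => rangeW (0 : Fin d → ℤ) ω = A)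
        : Finset (Fin n → Fin d × Bool)) : Set (Fin n → Fin d × Bool)) := by
    ext ω; simp
  rw [prW, hset, Set.ncard_coe_finset]
  have hsub : Finset.univ.filter (fun ω : Fin n → Fin d × Bool => rangeW (0 : Fin d → ℤ) ω = A)
      ⊆ Ek d A n 0 ∅ := by
    intro ω hω
    have hω' : rangeW (0 : Fin d → ℤ) ω = A := (Finset.mem_filter.mp hω).2
    simp only [Ek, Finset.mem_filter, Finset.mem_univ, true_and]
    constructor
    · intro j hj
      rw [← hω']
      exact Finset.mem_image.mpr ⟨j, Finset.mem_range.mpr (by omega), rfl⟩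
    · intro x hx
      rw [← hω'] at hx
      exact Finset.mem_union_right _ hx
  have h1 : ((Finset.univ.filter
      (fun ω : Fin n → Fin d × Bool => rangeW (0 : Fin d → ℤ) ω = A)).card : ℝ)
      ≤ (2*(d:ℝ))^n * (1 - 1/(2*(d:ℝ))) ^ ((innerBdry A \ ∅).card - 1) := by
    exact le_trans (by exact_mod_cast Finset.card_le_card hsub) (card_Ek_le hd A n 0 ∅)
  rw [Finset.sdiff_empty] at h1
  have h2d : (0:ℝ) < 2*(d:ℝ) := by
    have : (1:ℝ) ≤ (d:ℝ) := by exact_mod_cast hd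
    linarith
  rw [div_le_iff₀ (by positivity)]
  linarith [h1]


/-- `H(R(n)) ≥ -log₂(1 - 1/(2d)) · E[|∂R(n)| - 1]` for SRW on `ℤ^d` started at the origin. -/
theorem entropy_range_ge_boundary :
    ∀ d : ℕ, 1 ≤ d → ∀ n : ℕ,
      entW d n (rangeW (0 : Fin d → ℤ)) ≥
        -Real.logb 2 (1 - 1 / (2 * (d : ℝ))) *
          exW d n (fun ω => ((innerBdry (rangeW (0 : Fin d → ℤ) ω)).card : ℝ) - 1) := by
  intro d hd n
  classical
  have hd1 : (1:ℝ) ≤ (d:ℝ) := by exact_mod_cast hd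
  have h2d : (0:ℝ) < 2*(d:ℝ) := by linarith
  set q : ℝ := 1 - 1/(2*(d:ℝ)) with hq
  have hq0 : 0 < q := by
    rw [hq]
    have : 1/(2*(d:ℝ)) ≤ 1/2 := by
      apply div_le_div_of_nonneg_left <;> linarith
    linarith
  have hqlt : q < 1 := by
    rw [hq]
    have : 0 < 1/(2*(d:ℝ)) := by positivity
    linarith
  set c : ℝ := -Real.logb 2 q with hc
  set T : Finset (Finset (Fin d → ℤ)) :=
    Finset.image (rangeW (0 : Fin d → ℤ)) (Finset.univ : Finset (Fin n → Fin d × Bool)) with hT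
  set P : Finset (Fin d → ℤ) → ℝ :=
    fun A => prW d n {ω | rangeW (0 : Fin d → ℤ) ω = A} with hP
  have hPfib : ∀ A, P A = ((Finset.univ.filter
      (fun ω : Fin n → Fin d × Bool => rangeW (0 : Fin d → ℤ) ω = A)).card : ℝ) / (2*(d:ℝ))^n := by
    intro A
    have hset : {ω | rangeW (0 : Fin d → ℤ) ω = A} =
        ((Finset.univ.filter (fun ω : Fin n → Fin d × Bool => rangeW (0 : Fin d → ℤ) ω = A)
          : Finset (Fin n → Fin d × Bool)) : Set (Fin n → Fin d × Bool)) := by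
      ext ω; simp
    rw [hP]
    unfold prW
    simp only [hset, Set.ncard_coe_finset]
  have hP0 : ∀ A ∉ T, P A = 0 := by
    intro A hA
    rw [hPfib]
    have : Finset.univ.filter
        (fun ω : Fin n → Fin d × Bool => rangeW (0 : Fin d → ℤ) ω = A) = ∅ := by
      rw [Finset.filter_eq_empty_iff]
      intro ω _ h
      exact hA (Finset.mem_image.mpr ⟨ω, Finset.mem_univ _, h⟩)
    rw [this]
    simp
  have hent : entW d n (rangeW (0 : Fin d → ℤ)) = ∑ A ∈ T, -(P A * Real.logb 2 (P A)) := by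
    rw [entW]
    refine tsum_eq_sum (fun A hA => ?_)
    have h0 : prW d n {ω | rangeW (0 : Fin d → ℤ) ω = A} = 0 := hP0 A hA
    rw [h0]
    simp
  have hexp : exW d n (fun ω => ((innerBdry (rangeW (0 : Fin d → ℤ) ω)).card : ℝ) - 1)
      = ∑ A ∈ T, P A * (((innerBdry A).card : ℝ) - 1) := by
    rw [exW]
    have hfib := Finset.sum_fiberwise_of_maps_to
      (s := (Finset.univ : Finset (Fin n → Fin d × Bool))) (t := T)
      (g := fun ω : Fin n → Fin d × Bool => rangeW (0 : Fin d → ℤ) ω)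
      (fun ω _ => Finset.mem_image.mpr ⟨ω, Finset.mem_univ _, rfl⟩)
      (fun ω : Fin n → Fin d × Bool => ((innerBdry (rangeW (0 : Fin d → ℤ) ω)).card : ℝ) - 1)
    rw [← hfib, Finset.sum_div]
    apply Finset.sum_congr rfl
    intro A hA
    have hinner : ∑ ω ∈ Finset.univ.filter
        (fun ω : Fin n → Fin d × Bool => rangeW (0 : Fin d → ℤ) ω = A),
        (((innerBdry (rangeW (0 : Fin d → ℤ) ω)).card : ℝ) - 1)
        = ((Finset.univ.filter
          (fun ω : Fin n → Fin d × Bool => rangeW (0 : Fin d → ℤ) ω = A)).card : ℝ)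
          * (((innerBdry A).card : ℝ) - 1) := by
      rw [Finset.sum_congr rfl (fun ω hω => by
        rw [(Finset.mem_filter.mp hω).2]), Finset.sum_const, nsmul_eq_mul]
    rw [hinner, hPfib]
    ring
  have hterm : ∀ A ∈ T, c * (P A * (((innerBdry A).card : ℝ) - 1))
      ≤ -(P A * Real.logb 2 (P A)) := by
    intro A hA
    obtain ⟨ω, -, hωA⟩ := Finset.mem_image.mp hA
    have hAne : A.Nonempty := by
      rw [← hωA, rangeW]
      exact (Finset.nonempty_range_iff.mpr (by omega)).image _
    have hm : 1 ≤ (innerBdry A).card :=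
      Finset.card_pos.mpr (innerBdry_nonempty hd hAne)
    have hpos : 0 < P A := by
      rw [hPfib]
      apply div_pos _ (by positivity)
      have : ω ∈ Finset.univ.filter
          (fun ω : Fin n → Fin d × Bool => rangeW (0 : Fin d → ℤ) ω = A) :=
        Finset.mem_filter.mpr ⟨Finset.mem_univ _, hωA⟩
      exact_mod_cast Finset.card_pos.mpr ⟨ω, this⟩
    have hle : P A ≤ q ^ ((innerBdry A).card - 1) := prW_range_le hd n A
    have hlog : Real.logb 2 (P A) ≤ (((innerBdry A).card - 1 : ℕ) : ℝ) * Real.logb 2 q := by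
      calc Real.logb 2 (P A) ≤ Real.logb 2 (q ^ ((innerBdry A).card - 1)) :=
            Real.logb_le_logb_of_le (by norm_num) hpos hle
      _ = (((innerBdry A).card - 1 : ℕ) : ℝ) * Real.logb 2 q := by
            rw [Real.logb_pow]
    have hcast : (((innerBdry A).card - 1 : ℕ) : ℝ) = ((innerBdry A).card : ℝ) - 1 := by
      rw [Nat.cast_sub hm]; simp
    rw [hcast] at hlog
    have h1 : P A * Real.logb 2 (P A) ≤ P A * ((((innerBdry A).card : ℝ) - 1) * Real.logb 2 q) :=
      mul_le_mul_of_nonneg_left hlog hpos.le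
    rw [hc]
    nlinarith [h1]
  rw [hent, hexp, ge_iff_le, Finset.mul_sum]
  exact Finset.sum_le_sum hterm
end

section
/- There exists a constant C > 0 such that for all n ∈ ℕ, all reals r with 1 ≤ r ≤ √n / 2, and all z ∈ ℤ² with ‖z‖ ≥ √n, the simple random walk on ℤ² started at z satisfies P_z[ T_r ≤ n ] ≤ C / log( n / r² ), where T_r = inf{ t ≥ 0 : ‖S(t)‖ ≤ r }. -/
open Real

namespace HitBall

attribute [local instance] Classical.propDecidable

abbrev St := Fin 2 × Bool

def Qr (x : Fin 2 → ℤ) : ℝ := ∑ i, ((x i : ℝ)) ^ 2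

lemma Qr_nonneg (x : Fin 2 → ℤ) : 0 ≤ Qr x := by
  apply Finset.sum_nonneg; intro i _; positivity

lemma eNorm_eq (x : Fin 2 → ℤ) : eNorm x = Real.sqrt (Qr x) := rfl

lemma eNorm_le_iff {x : Fin 2 → ℤ} {r : ℝ} (hr : 0 ≤ r) : eNorm x ≤ r ↔ Qr x ≤ r ^ 2 := by
  rw [eNorm_eq, Real.sqrt_le_left hr]

lemma le_eNorm_iff {x : Fin 2 → ℤ} {r : ℝ} (hr : 0 ≤ r) : r ≤ eNorm x ↔ r ^ 2 ≤ Qr x := by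
  rw [eNorm_eq, Real.le_sqrt hr (Qr_nonneg x)]

def extO {n : ℕ} (ω : Fin n → St) : ℕ → St := fun j => if h : j < n then ω ⟨j, h⟩ else default

lemma extO_lt {n : ℕ} (ω : Fin n → St) {j : ℕ} (h : j < n) : extO ω j = ω ⟨j, h⟩ := dif_pos h

def walkN (z : Fin 2 → ℤ) (f : ℕ → St) (k : ℕ) : Fin 2 → ℤ :=
  z + ∑ j ∈ Finset.range k, step (f j)

lemma walkN_zero (z : Fin 2 → ℤ) (f : ℕ → St) : walkN z f 0 = z := by simp [walkN]

lemma walkN_succ (z : Fin 2 → ℤ) (f : ℕ → St) (k : ℕ) :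
    walkN z f (k + 1) = walkN z f k + step (f k) := by
  simp [walkN, Finset.sum_range_succ, add_assoc]

lemma walk_zero {n : ℕ} (z : Fin 2 → ℤ) (ω : Fin n → St) : walk z ω 0 = z := by
  simp [walk]

lemma walk_succ {n : ℕ} (z : Fin 2 → ℤ) (ω : Fin n → St) {t : ℕ} (ht : t < n) :
    walk z ω (t + 1) = walk z ω t + step (ω ⟨t, ht⟩) := by
  unfold walk
  have hfil : Finset.univ.filter (fun i : Fin n => (i : ℕ) < t + 1)
      = insert (⟨t, ht⟩ : Fin n) (Finset.univ.filter (fun i : Fin n => (i : ℕ) < t)) := by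
    ext i
    simp only [Finset.mem_filter, Finset.mem_insert, Finset.mem_univ, true_and, Fin.ext_iff]
    omega
  rw [hfil, Finset.sum_insert (by simp)]
  abel

lemma walk_eq_walkN {n : ℕ} (z : Fin 2 → ℤ) (ω : Fin n → St) {k : ℕ} (hk : k ≤ n) :
    walk z ω k = walkN z (extO ω) k := by
  induction k with
  | zero => rw [walk_zero, walkN_zero]
  | succ k ih =>
      have hkn : k < n := hk
      rw [walk_succ z ω hkn, walkN_succ, ih (le_of_lt hkn), extO_lt ω hkn]

lemma walk_congr' {n m : ℕ} (y : Fin 2 → ℤ) (ω : Fin n → St) (σ : Fin m → St) {k : ℕ}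
    (hkn : k ≤ n) (hkm : k ≤ m)
    (h : ∀ j : ℕ, j < k → extO ω j = extO σ j) :
    walk y ω k = walk y σ k := by
  rw [walk_eq_walkN y ω hkn, walk_eq_walkN y σ hkm]
  unfold walkN
  congr 1
  exact Finset.sum_congr rfl fun j hj => by rw [h j (Finset.mem_range.1 hj)]

lemma walk_congr {n : ℕ} (y : Fin 2 → ℤ) (ω ω' : Fin n → St) {k : ℕ} (hk : k ≤ n)
    (h : ∀ i : Fin n, (i : ℕ) < k → ω i = ω' i) : walk y ω k = walk y ω' k := by
  apply walk_congr' y ω ω' hk hk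
  intro j hj
  have hjn : j < n := lt_of_lt_of_le hj hk
  rw [extO_lt ω hjn, extO_lt ω' hjn]
  exact h _ hj

end HitBall

namespace HitBall

/-- `Qr` changes by `±2x_i + 1` under a step. -/
lemma Qr_step (x : Fin 2 → ℤ) (a : St) :
    Qr (x + step a) = Qr x + 2 * (if a.2 then 1 else -1) * ((x a.1 : ℤ) : ℝ) + 1 := by
  obtain ⟨i, b⟩ := a
  fin_cases i <;> cases b <;>
    simp [Qr, step, Fin.sum_univ_two] <;> push_cast <;> ring

lemma sum_Qr_step (x : Fin 2 → ℤ) : ∑ a : St, Qr (x + step a) = 4 * Qr x + 4 := by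
  rw [Fintype.sum_prod_type]
  simp only [Qr_step]
  rw [Fin.sum_univ_two]
  simp [Fintype.sum_bool]
  ring

lemma sq_coord_le_Qr (x : Fin 2 → ℤ) (i : Fin 2) : ((x i : ℝ)) ^ 2 ≤ Qr x :=
  Finset.single_le_sum (f := fun j => ((x j : ℝ)) ^ 2) (fun j _ => by positivity)
    (Finset.mem_univ i)

lemma Qr_step_le (x : Fin 2 → ℤ) (a : St) :
    Qr (x + step a) ≤ (Real.sqrt (Qr x) + 1) ^ 2 := by
  rw [Qr_step]
  have h1 : |((x a.1 : ℤ) : ℝ)| ≤ Real.sqrt (Qr x) := by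
    rw [← Real.sqrt_sq_eq_abs]
    exact Real.sqrt_le_sqrt (sq_coord_le_Qr x a.1)
  have h2 : Real.sqrt (Qr x) ^ 2 = Qr x := Real.sq_sqrt (Qr_nonneg x)
  have h3 : (2 * (if a.2 then 1 else -1) * ((x a.1 : ℤ) : ℝ)) ≤ 2 * |((x a.1 : ℤ) : ℝ)| := by
    cases a.2 <;> simp <;> cases abs_cases ((x a.1 : ℤ) : ℝ) <;> linarith [abs_nonneg ((x a.1 : ℤ) : ℝ)]
  nlinarith [abs_nonneg ((x a.1 : ℤ) : ℝ)]

/-- the subharmonic function  log(|x|² + 1) -/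
noncomputable def flog (x : Fin 2 → ℤ) : ℝ := Real.log (Qr x + 1)

lemma flog_le_flog {x y : Fin 2 → ℤ} (h : Qr x ≤ Qr y) : flog x ≤ flog y :=
  Real.log_le_log (by linarith [Qr_nonneg x]) (by linarith)

lemma sum_flog_step (x : Fin 2 → ℤ) : 4 * flog x ≤ ∑ a : St, flog (x + step a) := by
  set p : ℝ := ((x 0 : ℤ) : ℝ) with hp
  set q : ℝ := ((x 1 : ℤ) : ℝ) with hq'
  have hQ : Qr x = p ^ 2 + q ^ 2 := by
    unfold Qr; rw [Fin.sum_univ_two]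
  have hA : Qr (x + step ((0 : Fin 2), true)) + 1 = p^2 + q^2 + 2 + 2*p := by
    rw [Qr_step, hQ]; norm_num; rw [← hp]; ring
  have hB : Qr (x + step ((0 : Fin 2), false)) + 1 = p^2 + q^2 + 2 - 2*p := by
    rw [Qr_step, hQ]; norm_num; rw [← hp]; ring
  have hC : Qr (x + step ((1 : Fin 2), true)) + 1 = p^2 + q^2 + 2 + 2*q := by
    rw [Qr_step, hQ]; norm_num; rw [← hq']; ring
  have hD : Qr (x + step ((1 : Fin 2), false)) + 1 = p^2 + q^2 + 2 - 2*q := by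
    rw [Qr_step, hQ]; norm_num; rw [← hq']; ring
  have hposA : (0:ℝ) < p^2 + q^2 + 2 + 2*p := by nlinarith [sq_nonneg (p+1), sq_nonneg q]
  have hposB : (0:ℝ) < p^2 + q^2 + 2 - 2*p := by nlinarith [sq_nonneg (p-1), sq_nonneg q]
  have hposC : (0:ℝ) < p^2 + q^2 + 2 + 2*q := by nlinarith [sq_nonneg (q+1), sq_nonneg p]
  have hposD : (0:ℝ) < p^2 + q^2 + 2 - 2*q := by nlinarith [sq_nonneg (q-1), sq_nonneg p]
  have hsum : ∑ a : St, flog (x + step a)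
      = Real.log ((p^2+q^2+2+2*p) * (p^2+q^2+2-2*p) * ((p^2+q^2+2+2*q) * (p^2+q^2+2-2*q))) := by
    rw [Fintype.sum_prod_type, Fin.sum_univ_two]
    simp only [Fintype.sum_bool]
    unfold flog
    rw [hA, hB, hC, hD]
    rw [← Real.log_mul hposA.ne' hposB.ne', ← Real.log_mul hposC.ne' hposD.ne',
      ← Real.log_mul (mul_pos hposA hposB).ne' (mul_pos hposC hposD).ne']
  rw [hsum]
  unfold flog
  rw [hQ]
  have h4 : 4 * Real.log (p^2 + q^2 + 1) = Real.log ((p^2 + q^2 + 1)^4) := by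
    rw [Real.log_pow]; norm_num
  rw [h4]
  apply Real.log_le_log (by positivity)
  have hid : (p^2+q^2+2+2*p) * (p^2+q^2+2-2*p) * ((p^2+q^2+2+2*q) * (p^2+q^2+2-2*q))
      = (p^2+q^2+1)^4 + 2*(p^2+q^2+1)^2 + 8*(p^2+q^2+1) + 5 + 16*p^2*q^2 := by
    ring
  rw [hid]
  nlinarith [sq_nonneg (p*q), sq_nonneg (p^2+q^2+1), sq_nonneg p, sq_nonneg q]

end HitBall

namespace HitBall

attribute [local instance] Classical.propDecidable

variable {n : ℕ}

/-- first time `≤ n` that the walk is in `B` (equals `n` if no such time). -/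
noncomputable def tau (Bq : (Fin 2 → ℤ) → Prop) (z : Fin 2 → ℤ) (ω : Fin n → St) : ℕ :=
  sInf {t | t = n ∨ Bq (walk z ω t)}

variable {Bq : (Fin 2 → ℤ) → Prop} {z : Fin 2 → ℤ}

lemma tau_nonempty (ω : Fin n → St) : {t | t = n ∨ Bq (walk z ω t)}.Nonempty :=
  ⟨n, Or.inl rfl⟩

lemma tau_le (ω : Fin n → St) : tau Bq z ω ≤ n := Nat.sInf_le (Or.inl rfl)

lemma tau_spec (ω : Fin n → St) : tau Bq z ω = n ∨ Bq (walk z ω (tau Bq z ω)) :=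
  Nat.sInf_mem (tau_nonempty ω)

lemma lt_tau_iff (ω : Fin n → St) (t : ℕ) :
    t < tau Bq z ω ↔ t < n ∧ ∀ s, s ≤ t → ¬ Bq (walk z ω s) := by
  constructor
  · intro h
    refine ⟨lt_of_lt_of_le h (tau_le ω), fun s hs hB => ?_⟩
    have := Nat.sInf_le (show s ∈ {t | t = n ∨ Bq (walk z ω t)} from Or.inr hB)
    unfold tau at h; omega
  · rintro ⟨hn, hs⟩
    by_contra h
    push_neg at h
    rcases tau_spec (Bq := Bq) (z := z) ω with h1 | h2
    · omega
    · exact hs _ h h2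

lemma not_B_of_lt_tau {ω : Fin n → St} {t : ℕ} (h : t < tau Bq z ω) : ¬ Bq (walk z ω t) :=
  (((lt_tau_iff ω t).1 h).2) t le_rfl

lemma tau_eq_iff (ω : Fin n → St) (s : ℕ) :
    tau Bq z ω = s ↔ (s = n ∨ Bq (walk z ω s)) ∧ ∀ u, u < s → u ≠ n ∧ ¬ Bq (walk z ω u) := by
  constructor
  · intro h
    subst h
    refine ⟨tau_spec ω, fun u hu => ?_⟩
    have := Nat.notMem_of_lt_sInf (show u < sInf {t | t = n ∨ Bq (walk z ω t)} from hu)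
    simp only [Set.mem_setOf_eq, not_or] at this
    exact this
  · rintro ⟨h1, h2⟩
    refine le_antisymm (Nat.sInf_le h1) ?_
    by_contra h
    push_neg at h
    have hmem := Nat.sInf_mem (tau_nonempty (Bq := Bq) (z := z) ω)
    have := h2 _ h
    rcases hmem with h3 | h4
    · exact this.1 h3
    · exact this.2 h4

/-- `tau = s` only depends on the first `s` coordinates. -/
lemma tau_eq_congr {ω ω' : Fin n → St} {s : ℕ} (hs : s ≤ n)
    (h : ∀ i : Fin n, (i : ℕ) < s → ω i = ω' i) : tau Bq z ω = s ↔ tau Bq z ω' = s := by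
  have hw : ∀ u, u ≤ s → walk z ω u = walk z ω' u := fun u hu =>
    walk_congr z ω ω' (le_trans hu hs) (fun i hi => h i (lt_of_lt_of_le hi hu))
  rw [tau_eq_iff, tau_eq_iff]
  constructor
  · rintro ⟨h1, h2⟩
    rw [hw s le_rfl] at h1
    refine ⟨h1, fun u hu => ?_⟩
    have := h2 u hu
    rwa [hw u (le_of_lt hu)] at this
  · rintro ⟨h1, h2⟩
    rw [← hw s le_rfl] at h1
    refine ⟨h1, fun u hu => ?_⟩
    have := h2 u hu
    rwa [← hw u (le_of_lt hu)] at this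

/-- whether `t < tau` only depends on the first `t` coordinates -/
lemma lt_tau_congr {ω ω' : Fin n → St} {t : ℕ}
    (h : ∀ i : Fin n, (i : ℕ) < t → ω i = ω' i) : t < tau Bq z ω ↔ t < tau Bq z ω' := by
  rcases lt_or_ge t n with ht | ht
  · rw [lt_tau_iff, lt_tau_iff]
    have hw : ∀ s, s ≤ t → walk z ω s = walk z ω' s := fun s hs =>
      walk_congr z ω ω' (le_of_lt (lt_of_le_of_lt hs ht))
        (fun i hi => h i (lt_of_lt_of_le hi hs))
    constructor
    · rintro ⟨h1, h2⟩
      exact ⟨h1, fun s hs hB => h2 s hs (by rwa [hw s hs])⟩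
    · rintro ⟨h1, h2⟩
      exact ⟨h1, fun s hs hB => h2 s hs (by rwa [← hw s hs])⟩
  · constructor
    · intro hc; exact absurd (lt_of_lt_of_le hc (tau_le ω)) (not_lt.2 ht)
    · intro hc; exact absurd (lt_of_lt_of_le hc (tau_le ω')) (not_lt.2 ht)

end HitBall

namespace HitBall

attribute [local instance] Classical.propDecidable

variable {n : ℕ} {Bq : (Fin 2 → ℤ) → Prop} {z : Fin 2 → ℤ}

lemma card_omega (n : ℕ) : Fintype.card (Fin n → St) = 4 ^ n := by
  rw [Fintype.card_fun]
  norm_num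

lemma card_rest (i₀ : Fin n) : Fintype.card ({j : Fin n // j ≠ i₀} → St) = 4 ^ (n - 1) := by
  rw [Fintype.card_fun]
  have h1 : Fintype.card {j : Fin n // j ≠ i₀} = n - 1 := by
    rw [Fintype.card_subtype_compl, Fintype.card_subtype_eq, Fintype.card_fin]
  rw [h1]
  norm_num

/-- grouping the sum over `ω` according to the coordinate `i₀`, when the filtering
condition `c` and the datum `x` do not depend on coordinate `i₀`. -/
lemma group_sum (i₀ : Fin n) (c : (Fin n → St) → Prop) [DecidablePred c] (x : (Fin n → St) → (Fin 2 → ℤ))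
    (g : (Fin 2 → ℤ) → St → ℝ)
    (hc : ∀ ω ω' : Fin n → St, (∀ j, j ≠ i₀ → ω j = ω' j) → (c ω ↔ c ω'))
    (hx : ∀ ω ω' : Fin n → St, (∀ j, j ≠ i₀ → ω j = ω' j) → x ω = x ω') :
    ∑ ω ∈ Finset.univ.filter c, g (x ω) (ω i₀)
      = ∑ ρ : {j : Fin n // j ≠ i₀} → St,
          (if c ((Equiv.funSplitAt i₀ St).symm (default, ρ))
           then ∑ a : St, g (x ((Equiv.funSplitAt i₀ St).symm (default, ρ))) a else 0) := by
  classical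
  set e := Equiv.funSplitAt i₀ St with he
  rw [Finset.sum_filter]
  rw [← Equiv.sum_comp e.symm (fun ω => if c ω then g (x ω) (ω i₀) else 0)]
  rw [Fintype.sum_prod_type]
  rw [Finset.sum_comm]
  apply Finset.sum_congr rfl
  intro ρ _
  have hagree : ∀ a : St, ∀ j, j ≠ i₀ → e.symm (a, ρ) j = e.symm (default, ρ) j := by
    intro a j hj
    rw [he, Equiv.funSplitAt_symm_apply, Equiv.funSplitAt_symm_apply, dif_neg hj, dif_neg hj]
  have hco : ∀ a : St, c (e.symm (a, ρ)) ↔ c (e.symm (default, ρ)) := fun a =>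
    hc _ _ (hagree a)
  have hxo : ∀ a : St, x (e.symm (a, ρ)) = x (e.symm (default, ρ)) := fun a =>
    hx _ _ (hagree a)
  have hi : ∀ a : St, e.symm (a, ρ) i₀ = a := by
    intro a; rw [he, Equiv.funSplitAt_symm_apply, dif_pos rfl]
  by_cases hcc : c (e.symm (default, ρ))
  · rw [if_pos hcc]
    apply Finset.sum_congr rfl
    intro a _
    rw [if_pos ((hco a).2 hcc), hxo a, hi a]
  · rw [if_neg hcc]
    apply Finset.sum_eq_zero
    intro a _
    rw [if_neg (fun hc' => hcc ((hco a).1 hc'))]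

noncomputable def stopSum (F : (Fin 2 → ℤ) → ℝ) (Bq : (Fin 2 → ℤ) → Prop)
    (z : Fin 2 → ℤ) (n t : ℕ) : ℝ :=
  ∑ ω : Fin n → St, F (walk z ω (min t (tau Bq z ω)))

lemma stopSum_succ (F : (Fin 2 → ℤ) → ℝ) (t : ℕ) :
    stopSum F Bq z n (t + 1) = stopSum F Bq z n t +
      ∑ ω ∈ Finset.univ.filter (fun ω : Fin n → St => t < tau Bq z ω),
        (F (walk z ω (t + 1)) - F (walk z ω t)) := by
  unfold stopSum
  rw [Finset.sum_filter, ← Finset.sum_add_distrib]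
  apply Finset.sum_congr rfl
  intro ω _
  by_cases h : t < tau Bq z ω
  · rw [if_pos h, min_eq_left (Nat.succ_le_of_lt h), min_eq_left (le_of_lt h)]
    ring
  · push_neg at h
    rw [if_neg (not_lt.2 h), min_eq_right h, min_eq_right (le_trans h (Nat.le_succ t))]
    ring

lemma stopSum_corr_eq (F : (Fin 2 → ℤ) → ℝ) {t : ℕ} (ht : t < n) :
    ∑ ω ∈ Finset.univ.filter (fun ω : Fin n → St => t < tau Bq z ω),
        (F (walk z ω (t + 1)) - F (walk z ω t))
      = ∑ ω ∈ Finset.univ.filter (fun ω : Fin n → St => t < tau Bq z ω),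
          (fun y a => F (y + step a) - F y) (walk z ω t) (ω ⟨t, ht⟩) := by
  apply Finset.sum_congr rfl
  intro ω _
  simp only []
  rw [walk_succ z ω ht]

lemma stopSum_grouped (F : (Fin 2 → ℤ) → ℝ) {t : ℕ} (ht : t < n) :
    ∑ ω ∈ Finset.univ.filter (fun ω : Fin n → St => t < tau Bq z ω),
        (F (walk z ω (t + 1)) - F (walk z ω t))
      = ∑ ρ : {j : Fin n // j ≠ (⟨t, ht⟩ : Fin n)} → St,
          (if t < tau Bq z ((Equiv.funSplitAt ⟨t, ht⟩ St).symm (default, ρ))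
           then ∑ a : St,
             (F (walk z ((Equiv.funSplitAt ⟨t, ht⟩ St).symm (default, ρ)) t + step a)
               - F (walk z ((Equiv.funSplitAt ⟨t, ht⟩ St).symm (default, ρ)) t)) else 0) := by
  rw [stopSum_corr_eq F ht]
  apply group_sum (⟨t, ht⟩ : Fin n) _ _ (fun y a => F (y + step a) - F y)
  · intro ω ω' h
    apply lt_tau_congr
    intro i hi
    exact h i (by intro hne; rw [hne] at hi; exact absurd hi (lt_irrefl t))
  · intro ω ω' h
    apply walk_congr z ω ω' (le_of_lt ht)
    intro i hi
    exact h i (by intro hne; rw [hne] at hi; exact absurd hi (lt_irrefl t))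

lemma stopSum_zero (F : (Fin 2 → ℤ) → ℝ) :
    stopSum F Bq z n 0 = 4 ^ n * F z := by
  unfold stopSum
  have : ∀ ω : Fin n → St, F (walk z ω (min 0 (tau Bq z ω))) = F z := by
    intro ω; rw [Nat.zero_min, walk_zero]
  rw [Finset.sum_congr rfl (fun ω _ => this ω), Finset.sum_const, Finset.card_univ,
    card_omega, nsmul_eq_mul]
  push_cast
  ring

lemma stopSum_top (F : (Fin 2 → ℤ) → ℝ) :
    stopSum F Bq z n n = ∑ ω : Fin n → St, F (walk z ω (tau Bq z ω)) := by
  unfold stopSum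
  exact Finset.sum_congr rfl (fun ω _ => by rw [min_eq_right (tau_le ω)])

/-- optional stopping, submartingale version -/
lemma stopped_ge (F : (Fin 2 → ℤ) → ℝ)
    (hsub : ∀ y, ¬ Bq y → 4 * F y ≤ ∑ a : St, F (y + step a)) :
    4 ^ n * F z ≤ ∑ ω : Fin n → St, F (walk z ω (tau Bq z ω)) := by
  rw [← stopSum_zero (Bq := Bq) F, ← stopSum_top]
  have key : ∀ t, stopSum F Bq z n t ≤ stopSum F Bq z n (t + 1) := by
    intro t
    rw [stopSum_succ]
    rcases lt_or_ge t n with ht | ht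
    · rw [stopSum_grouped F ht]
      have : 0 ≤ ∑ ρ : {j : Fin n // j ≠ (⟨t, ht⟩ : Fin n)} → St,
          (if t < tau Bq z ((Equiv.funSplitAt ⟨t, ht⟩ St).symm (default, ρ))
           then ∑ a : St,
             (F (walk z ((Equiv.funSplitAt ⟨t, ht⟩ St).symm (default, ρ)) t + step a)
               - F (walk z ((Equiv.funSplitAt ⟨t, ht⟩ St).symm (default, ρ)) t)) else 0) := by
        apply Finset.sum_nonneg
        intro ρ _
        by_cases hcc : t < tau Bq z ((Equiv.funSplitAt ⟨t, ht⟩ St).symm (default, ρ))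
        · rw [if_pos hcc]
          set y := walk z ((Equiv.funSplitAt (⟨t, ht⟩ : Fin n) St).symm (default, ρ)) t with hy
          rw [Finset.sum_sub_distrib, Finset.sum_const, Finset.card_univ, nsmul_eq_mul]
          have hB : ¬ Bq y := not_B_of_lt_tau hcc
          have := hsub y hB
          have hcard : (Fintype.card St) = 4 := by norm_num
          rw [hcard]
          push_cast
          linarith
        · rw [if_neg hcc]
      linarith
    · have hfil : Finset.univ.filter (fun ω : Fin n → St => t < tau Bq z ω) = ∅ := by
        apply Finset.filter_eq_empty_iff.2
        intro ω _
        exact not_lt.2 (le_trans (tau_le ω) ht)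
      rw [hfil, Finset.sum_empty]
      linarith
  have mono : ∀ t, stopSum F Bq z n 0 ≤ stopSum F Bq z n t := by
    intro t
    induction t with
    | zero => exact le_refl _
    | succ t ih => exact le_trans ih (key t)
  exact mono n

/-- optional stopping, supermartingale-with-drift version -/
lemma stopped_le (F : (Fin 2 → ℤ) → ℝ)
    (hb : ∀ y, ¬ Bq y → ∑ a : St, F (y + step a) ≤ 4 * F y + 4) :
    ∑ ω : Fin n → St, F (walk z ω (tau Bq z ω)) ≤ 4 ^ n * (F z + n) := by
  rw [← stopSum_top (Bq := Bq)]
  have key : ∀ t, stopSum F Bq z n (t + 1) ≤ stopSum F Bq z n t + 4 ^ n := by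
    intro t
    rw [stopSum_succ]
    rcases lt_or_ge t n with ht | ht
    · rw [stopSum_grouped F ht]
      have hle : ∑ ρ : {j : Fin n // j ≠ (⟨t, ht⟩ : Fin n)} → St,
          (if t < tau Bq z ((Equiv.funSplitAt ⟨t, ht⟩ St).symm (default, ρ))
           then ∑ a : St,
             (F (walk z ((Equiv.funSplitAt ⟨t, ht⟩ St).symm (default, ρ)) t + step a)
               - F (walk z ((Equiv.funSplitAt ⟨t, ht⟩ St).symm (default, ρ)) t)) else 0)
          ≤ (4:ℝ) ^ (n - 1) * 4 := by
        have hbound : ∀ ρ : {j : Fin n // j ≠ (⟨t, ht⟩ : Fin n)} → St,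
            (if t < tau Bq z ((Equiv.funSplitAt ⟨t, ht⟩ St).symm (default, ρ))
             then ∑ a : St,
               (F (walk z ((Equiv.funSplitAt ⟨t, ht⟩ St).symm (default, ρ)) t + step a)
                 - F (walk z ((Equiv.funSplitAt ⟨t, ht⟩ St).symm (default, ρ)) t)) else 0)
            ≤ (4:ℝ) := by
          intro ρ
          by_cases hcc : t < tau Bq z ((Equiv.funSplitAt ⟨t, ht⟩ St).symm (default, ρ))
          · rw [if_pos hcc]
            set y := walk z ((Equiv.funSplitAt (⟨t, ht⟩ : Fin n) St).symm (default, ρ)) t with hy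
            rw [Finset.sum_sub_distrib, Finset.sum_const, Finset.card_univ, nsmul_eq_mul]
            have hB : ¬ Bq y := not_B_of_lt_tau hcc
            have := hb y hB
            have hcard : (Fintype.card St) = 4 := by norm_num
            rw [hcard]
            push_cast
            linarith
          · rw [if_neg hcc]; norm_num
        calc _ ≤ ∑ _ρ : {j : Fin n // j ≠ (⟨t, ht⟩ : Fin n)} → St, (4:ℝ) :=
              Finset.sum_le_sum (fun ρ _ => hbound ρ)
          _ = (4:ℝ) ^ (n-1) * 4 := by
              rw [Finset.sum_const, Finset.card_univ, card_rest, nsmul_eq_mul]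
              push_cast; ring
      have h4 : (4:ℝ) ^ (n - 1) * 4 ≤ 4 ^ n := by
        have hn : n - 1 + 1 = n := by omega
        rw [← pow_succ, hn]
      linarith
    · have hfil : Finset.univ.filter (fun ω : Fin n → St => t < tau Bq z ω) = ∅ := by
        apply Finset.filter_eq_empty_iff.2
        intro ω _
        exact not_lt.2 (le_trans (tau_le ω) ht)
      rw [hfil, Finset.sum_empty]
      have : (0:ℝ) ≤ 4 ^ n := by positivity
      linarith
  have mono : ∀ t, stopSum F Bq z n t ≤ stopSum F Bq z n 0 + t * 4 ^ n := by
    intro t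
    induction t with
    | zero => simp
    | succ t ih =>
        calc stopSum F Bq z n (t+1) ≤ stopSum F Bq z n t + 4 ^ n := key t
          _ ≤ stopSum F Bq z n 0 + t * 4 ^ n + 4 ^ n := by linarith
          _ = stopSum F Bq z n 0 + (t+1 : ℕ) * 4 ^ n := by push_cast; ring
  calc stopSum F Bq z n n ≤ stopSum F Bq z n 0 + n * 4 ^ n := mono n
    _ = 4 ^ n * (F z + n) := by rw [stopSum_zero]; ring

end HitBall

namespace HitBall

attribute [local instance] Classical.propDecidable

variable {n : ℕ}

/-- hitting the ball of radius `r` -/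
def isIn (r : ℝ) (x : Fin 2 → ℤ) : Prop := eNorm x ≤ r

/-- being at distance at least twice the starting norm -/
def isOut (z : Fin 2 → ℤ) (x : Fin 2 → ℤ) : Prop := 4 * Qr z ≤ Qr x

def bc (z : Fin 2 → ℤ) (r : ℝ) (x : Fin 2 → ℤ) : Prop := isIn r x ∨ isOut z x

/-- the hitting event, as a finset -/
noncomputable def Eev (n : ℕ) (y : Fin 2 → ℤ) (r : ℝ) : Finset (Fin n → St) :=
  Finset.univ.filter (fun ω => ∃ t ≤ n, eNorm (walk y ω t) ≤ r)

noncomputable def Aev (n : ℕ) (z : Fin 2 → ℤ) (r : ℝ) : Finset (Fin n → St) :=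
  Finset.univ.filter (fun ω => isIn r (walk z ω (tau (bc z r) z ω)))

noncomputable def Bev (n : ℕ) (z : Fin 2 → ℤ) (r : ℝ) : Finset (Fin n → St) :=
  Finset.univ.filter (fun ω => isOut z (walk z ω (tau (bc z r) z ω)) ∧
    ∃ t, tau (bc z r) z ω ≤ t ∧ t ≤ n ∧ isIn r (walk z ω t))

noncomputable def Xev (n : ℕ) (z : Fin 2 → ℤ) (r : ℝ) : Finset (Fin n → St) :=
  Finset.univ.filter (fun ω => isOut z (walk z ω (tau (bc z r) z ω)))

lemma Eev_subset (z : Fin 2 → ℤ) (r : ℝ) : Eev n z r ⊆ Aev n z r ∪ Bev n z r := by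
  intro ω hω
  rw [Eev, Finset.mem_filter] at hω
  obtain ⟨-, t, htn, ht⟩ := hω
  set τ := tau (bc z r) z ω with hτ
  have htau : τ = n ∨ bc z r (walk z ω τ) := tau_spec ω
  have htτ : τ ≤ t := by
    by_contra hc
    push_neg at hc
    exact not_B_of_lt_tau hc (Or.inl ht)
  rcases htau with h1 | h2
  · -- τ = n ∧ no B before: then t = n = τ and walk τ ∈ ball: contradiction with spec? no:
    -- τ = n; t ≤ n = τ and τ ≤ t so t = τ; inner at τ holds
    have : t = τ := le_antisymm (h1 ▸ htn) htτ
    rw [Finset.mem_union]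
    left
    rw [Aev, Finset.mem_filter]
    exact ⟨Finset.mem_univ ω, by rw [← hτ, ← this]; exact ht⟩
  · rcases h2 with hin | hout
    · rw [Finset.mem_union]; left
      rw [Aev, Finset.mem_filter]
      exact ⟨Finset.mem_univ ω, by rw [← hτ]; exact hin⟩
    · rw [Finset.mem_union]; right
      rw [Bev, Finset.mem_filter]
      exact ⟨Finset.mem_univ ω, by rw [← hτ]; exact hout, t, htτ, htn, ht⟩

/-! ### prefix / suffix surgery -/

def sfx (s : ℕ) (hs : s ≤ n) (ω : Fin n → St) : Fin (n - s) → St :=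
  fun j => ω ⟨s + (j : ℕ), by have := j.2; omega⟩

def trunc (s : ℕ) (ω : Fin n → St) : Fin n → St :=
  fun i => if (i : ℕ) < s then ω i else default

def glue (s : ℕ) (w : Fin n → St) (q : Fin (n - s) → St) : Fin n → St :=
  fun i => if h : (i : ℕ) < s then w i else q ⟨(i : ℕ) - s, by have := i.2; omega⟩

lemma glue_agree (s : ℕ) (w : Fin n → St) (q : Fin (n - s) → St) (i : Fin n)
    (hi : (i : ℕ) < s) : glue s w q i = w i := dif_pos hi

lemma trunc_agree (s : ℕ) (ω : Fin n → St) (i : Fin n) (hi : (i : ℕ) < s) :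
    trunc s ω i = ω i := if_pos hi

lemma glue_trunc_sfx (s : ℕ) (hs : s ≤ n) (ω : Fin n → St) :
    glue s (trunc s ω) (sfx s hs ω) = ω := by
  funext i
  unfold glue trunc sfx
  by_cases h : (i : ℕ) < s
  · rw [dif_pos h, if_pos h]
  · rw [dif_neg h]
    congr 1
    apply Fin.ext
    show s + ((i : ℕ) - s) = (i : ℕ)
    omega

lemma sfx_glue (s : ℕ) (hs : s ≤ n) (w : Fin n → St) (q : Fin (n - s) → St) :
    sfx s hs (glue s w q) = q := by
  funext j
  unfold sfx glue
  rw [dif_neg (Nat.not_lt.2 (Nat.le_add_right s _))]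
  congr 1
  apply Fin.ext
  show s + (j : ℕ) - s = (j : ℕ)
  omega

lemma trunc_glue (s : ℕ) (w : Fin n → St) (q : Fin (n - s) → St) :
    trunc s (glue s w q) = trunc s w := by
  funext i
  unfold trunc glue
  by_cases h : (i : ℕ) < s
  · rw [if_pos h, if_pos h, dif_pos h]
  · rw [if_neg h, if_neg h]

/-- walking after time `s` is walking the suffix from the time-`s` position -/
lemma walk_shift (z : Fin 2 → ℤ) (ω : Fin n → St) (s u : ℕ) (hs : s ≤ n)
    (hu : s + u ≤ n) :
    walk (walk z ω s) (sfx s hs ω) u = walk z ω (s + u) := by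
  induction u with
  | zero => rw [walk_zero, Nat.add_zero]
  | succ u ih =>
      have hu' : u < n - s := by omega
      have hsu : s + u < n := by omega
      have h1 : s + (u + 1) = (s + u) + 1 := by omega
      rw [h1, walk_succ z ω hsu, walk_succ _ (sfx s hs ω) hu', ih (by omega)]
      rfl

/-- time monotonicity of the hitting event -/
lemma Eev_mono (y : Fin 2 → ℤ) (r : ℝ) {m : ℕ} (hm : m ≤ n) :
    (Finset.univ.filter
        (fun q : Fin m → St => ∃ u ≤ m, eNorm (walk y q u) ≤ r)).card * 4 ^ (n - m)
      ≤ (Eev n y r).card := by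
  classical
  have hcard : ((Finset.univ.filter
        (fun q : Fin m → St => ∃ u ≤ m, eNorm (walk y q u) ≤ r)) ×ˢ
      (Finset.univ : Finset (Fin (n - m) → St))).card
      = (Finset.univ.filter
        (fun q : Fin m → St => ∃ u ≤ m, eNorm (walk y q u) ≤ r)).card * 4 ^ (n - m) := by
    rw [Finset.card_product, Finset.card_univ, card_omega]
  rw [← hcard]
  apply Finset.card_le_card_of_injOn
    (fun p => fun i : Fin n => if h : (i : ℕ) < m then p.1 ⟨i, h⟩
      else p.2 ⟨(i : ℕ) - m, by have := i.2; omega⟩)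
  · rintro ⟨q, e⟩ hp
    rw [Finset.mem_coe, Finset.mem_product, Finset.mem_filter] at hp
    obtain ⟨⟨-, u, hum, hu⟩, -⟩ := hp
    rw [Eev, Finset.mem_coe, Finset.mem_filter]
    refine ⟨Finset.mem_univ _, u, le_trans hum hm, ?_⟩
    have : walk y (fun i : Fin n => if h : (i : ℕ) < m then q ⟨i, h⟩
        else e ⟨(i : ℕ) - m, by have := i.2; omega⟩) u = walk y q u := by
      apply walk_congr' y _ q (le_trans hum hm) hum
      intro j hj
      have hjn : j < n := by omega
      have hjm : j < m := by omega
      rw [extO_lt _ hjn, extO_lt _ hjm]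
      simp only []
      rw [dif_pos hjm]
    rw [this]
    exact hu
  · rintro ⟨q, e⟩ hp ⟨q', e'⟩ hp' heq
    simp only [Prod.mk.injEq]
    constructor
    · funext j
      have := congrFun heq ⟨(j : ℕ), by omega⟩
      simpa [dif_pos j.2] using this
    · funext j
      have hj : ¬ ((m + (j : ℕ)) < m) := by omega
      have hmj : m + (j : ℕ) < n := by have := j.2; omega
      have := congrFun heq ⟨m + (j : ℕ), hmj⟩
      simp only [dif_neg hj] at this
      have harg : m + (j : ℕ) - m = (j : ℕ) := by omega
      convert this using 2 <;> apply Fin.ext <;> simp [harg]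

end HitBall

namespace HitBall

attribute [local instance] Classical.propDecidable

variable {n : ℕ}

noncomputable def Ts (n : ℕ) (z : Fin 2 → ℤ) (r : ℝ) (s : ℕ) : Finset (Fin n → St) :=
  Finset.univ.filter (fun w => tau (bc z r) z w = s ∧ isOut z (walk z w s) ∧
    ∀ i : Fin n, s ≤ (i : ℕ) → w i = default)

noncomputable def Ds (n : ℕ) (z : Fin 2 → ℤ) (r : ℝ) (s : ℕ) : Finset (Fin n → St) :=
  Finset.univ.filter (fun ω => tau (bc z r) z ω = s ∧ isOut z (walk z ω s) ∧
    ∃ t, s ≤ t ∧ t ≤ n ∧ isIn r (walk z ω t))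

noncomputable def Cs (m : ℕ) (y : Fin 2 → ℤ) (r : ℝ) : Finset (Fin m → St) :=
  Finset.univ.filter (fun q => ∃ u ≤ m, eNorm (walk y q u) ≤ r)

lemma trunc_eq_self {s : ℕ} {w : Fin n → St}
    (h : ∀ i : Fin n, s ≤ (i : ℕ) → w i = default) : trunc s w = w := by
  funext i
  unfold trunc
  by_cases hi : (i : ℕ) < s
  · rw [if_pos hi]
  · rw [if_neg hi, h i (by omega)]

lemma trunc_mem_Ts {z : Fin 2 → ℤ} {r : ℝ} {s : ℕ} (hs : s ≤ n) {ω : Fin n → St}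
    (htau : tau (bc z r) z ω = s) (hout : isOut z (walk z ω s)) :
    trunc s ω ∈ Ts n z r s := by
  rw [Ts, Finset.mem_filter]
  refine ⟨Finset.mem_univ _, ?_, ?_, ?_⟩
  · exact (tau_eq_congr hs (fun i hi => (trunc_agree s ω i hi).symm)).1 htau
  · have : walk z (trunc s ω) s = walk z ω s :=
      walk_congr z (trunc s ω) ω hs (fun i hi => trunc_agree s ω i hi)
    rwa [this]
  · intro i hi
    unfold trunc
    rw [if_neg (by omega)]

lemma glue_mem {z : Fin 2 → ℤ} {r : ℝ} {s : ℕ} (hs : s ≤ n) {w : Fin n → St}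
    (hw : w ∈ Ts n z r s) (q : Fin (n - s) → St) :
    tau (bc z r) z (glue s w q) = s ∧ isOut z (walk z (glue s w q) s) := by
  rw [Ts, Finset.mem_filter] at hw
  obtain ⟨-, htau, hout, -⟩ := hw
  constructor
  · exact (tau_eq_congr hs (fun i hi => (glue_agree s w q i hi))).2 htau
  · have : walk z (glue s w q) s = walk z w s :=
      walk_congr z (glue s w q) w hs (fun i hi => glue_agree s w q i hi)
    rwa [this]

/-- slice count: the `tau = s ∧ out` event factorizes -/
lemma slice_card {z : Fin 2 → ℤ} {r : ℝ} {s : ℕ} (hs : s ≤ n) :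
    (Finset.univ.filter
        (fun ω : Fin n → St => tau (bc z r) z ω = s ∧ isOut z (walk z ω s))).card
      = (Ts n z r s).card * 4 ^ (n - s) := by
  have h2 : ((Ts n z r s) ×ˢ (Finset.univ : Finset (Fin (n - s) → St))).card
      = (Ts n z r s).card * 4 ^ (n - s) := by
    rw [Finset.card_product, Finset.card_univ, card_omega]
  rw [← h2]
  apply Finset.card_nbij' (i := fun ω => (trunc s ω, sfx s hs ω))
    (j := fun p => glue s p.1 p.2)
  · intro ω hω
    rw [Finset.mem_coe, Finset.mem_filter] at hω
    obtain ⟨-, htau, hout⟩ := hω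
    rw [Finset.mem_coe, Finset.mem_product]
    exact ⟨trunc_mem_Ts hs htau hout, Finset.mem_univ _⟩
  · rintro ⟨w, q⟩ hp
    rw [Finset.mem_coe, Finset.mem_product] at hp
    rw [Finset.mem_coe, Finset.mem_filter]
    exact ⟨Finset.mem_univ _, glue_mem hs hp.1 q⟩
  · intro ω _
    exact glue_trunc_sfx s hs ω
  · rintro ⟨w, q⟩ hp
    rw [Finset.mem_coe, Finset.mem_product, Ts, Finset.mem_filter] at hp
    obtain ⟨⟨-, -, -, hdef⟩, -⟩ := hp
    have h1 : trunc s (glue s w q) = w := by rw [trunc_glue, trunc_eq_self hdef]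
    have h2' : sfx s hs (glue s w q) = q := sfx_glue s hs w q
    rw [Prod.mk.injEq]
    exact ⟨h1, h2'⟩

lemma Ds_card_le {z : Fin 2 → ℤ} {r : ℝ} {s : ℕ} (hs : s ≤ n) :
    (Ds n z r s).card ≤ ∑ w ∈ Ts n z r s, (Cs (n - s) (walk z w s) r).card := by
  classical
  have hmain : (Ds n z r s).card ≤
      ((Ts n z r s).biUnion (fun w => {w} ×ˢ Cs (n - s) (walk z w s) r)).card := by
    apply Finset.card_le_card_of_injOn (fun ω => (trunc s ω, sfx s hs ω))
    · intro ω hω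
      rw [Ds, Finset.mem_coe, Finset.mem_filter] at hω
      obtain ⟨-, htau, hout, t, hst, htn, hin⟩ := hω
      rw [Finset.mem_coe, Finset.mem_biUnion]
      refine ⟨trunc s ω, trunc_mem_Ts hs htau hout, ?_⟩
      rw [Finset.mem_product]
      refine ⟨Finset.mem_singleton_self _, ?_⟩
      have hwt : walk z (trunc s ω) s = walk z ω s :=
        walk_congr z (trunc s ω) ω hs (fun i hi => trunc_agree s ω i hi)
      rw [Cs, Finset.mem_filter, hwt]
      refine ⟨Finset.mem_univ _, t - s, by omega, ?_⟩
      have := walk_shift z ω s (t - s) hs (by omega)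
      rw [this, show s + (t - s) = t by omega]
      exact hin
    · intro ω hω ω' hω' heq
      have h1 := congrArg Prod.fst heq
      have h2 := congrArg Prod.snd heq
      simp only [] at h1 h2
      rw [← glue_trunc_sfx s hs ω, ← glue_trunc_sfx s hs ω', h1, h2]
  refine le_trans hmain (le_trans (Finset.card_biUnion_le) ?_)
  apply Finset.sum_le_sum
  intro w _
  rw [Finset.card_product, Finset.card_singleton, one_mul]

/-- partitioning the `out`-stopped event by the value of `tau` -/
lemma Xev_card_eq (z : Fin 2 → ℤ) (r : ℝ) :
    (Xev n z r).card = ∑ s ∈ Finset.range (n + 1),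
      (Finset.univ.filter
        (fun ω : Fin n → St => tau (bc z r) z ω = s ∧ isOut z (walk z ω s))).card := by
  classical
  rw [Xev]
  rw [Finset.card_eq_sum_card_fiberwise
    (f := fun ω : Fin n → St => tau (bc z r) z ω) (t := Finset.range (n + 1))
    (fun ω _ => Finset.mem_range.2 (Nat.lt_succ_of_le (tau_le ω)))]
  apply Finset.sum_congr rfl
  intro s _
  congr 1
  ext ω
  simp only [Finset.mem_filter, Finset.mem_univ, true_and]
  constructor
  · rintro ⟨h1, h2⟩
    refine ⟨h2, ?_⟩
    rw [← h2]
    exact h1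
  · rintro ⟨h1, h2⟩
    refine ⟨?_, h1⟩
    rwa [h1]

/-- Doob-type estimate: reaching distance `2‖z‖` within `n` steps has probability `≤ 1/2`. -/
lemma Xev_card_le (z : Fin 2 → ℤ) (r : ℝ) (hQ : (n : ℝ) ≤ Qr z) (hQpos : 0 < Qr z) :
    ((Xev n z r).card : ℝ) ≤ 4 ^ n / 2 := by
  have h1 := stopped_le (n := n) (Bq := bc z r) (z := z) Qr
    (fun y _ => le_of_eq (sum_Qr_step y))
  have h2 : ((Xev n z r).card : ℝ) * (4 * Qr z)
      ≤ ∑ ω ∈ Xev n z r, Qr (walk z ω (tau (bc z r) z ω)) := by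
    have := Finset.card_nsmul_le_sum (Xev n z r)
      (fun ω => Qr (walk z ω (tau (bc z r) z ω))) (4 * Qr z) ?_
    · rwa [nsmul_eq_mul] at this
    · intro ω hω
      rw [Xev, Finset.mem_filter] at hω
      exact hω.2
  have h3 : ∑ ω ∈ Xev n z r, Qr (walk z ω (tau (bc z r) z ω))
      ≤ ∑ ω : Fin n → St, Qr (walk z ω (tau (bc z r) z ω)) :=
    Finset.sum_le_sum_of_subset_of_nonneg (Finset.subset_univ _)
      (fun ω _ _ => Qr_nonneg _)
  have h4 : ((Xev n z r).card : ℝ) * (4 * Qr z) ≤ 4 ^ n * (2 * Qr z) := by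
    calc ((Xev n z r).card : ℝ) * (4 * Qr z) ≤ 4 ^ n * (Qr z + n) := le_trans h2 (le_trans h3 h1)
      _ ≤ 4 ^ n * (2 * Qr z) := by
          apply mul_le_mul_of_nonneg_left (by linarith) (by positivity)
  have h5 : (0:ℝ) < 4 * Qr z := by positivity
  have := (mul_le_mul_iff_of_pos_right h5).1 (le_of_le_of_eq h4 (by ring : (4:ℝ)^n * (2 * Qr z) = (4 ^ n / 2) * (4 * Qr z)))
  exact this

/-- the position at the stopping time is within `3‖z‖` -/
lemma Qr_stopped_le (z : Fin 2 → ℤ) (r : ℝ) (hQ1 : 1 ≤ Qr z) (ω : Fin n → St) :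
    Qr (walk z ω (tau (bc z r) z ω)) ≤ 9 * Qr z := by
  rcases Nat.eq_zero_or_pos (tau (bc z r) z ω) with h0 | hpos
  · rw [h0, walk_zero]; linarith
  · obtain ⟨t, ht⟩ : ∃ t, tau (bc z r) z ω = t + 1 := ⟨tau (bc z r) z ω - 1, by omega⟩
    have htlt : t < tau (bc z r) z ω := by omega
    have hnotB : ¬ bc z r (walk z ω t) := not_B_of_lt_tau htlt
    have hout : Qr (walk z ω t) < 4 * Qr z :=
      lt_of_not_ge (fun hc => hnotB (Or.inr hc))
    have htn : t < n := by have := tau_le (Bq := bc z r) (z := z) ω; omega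
    rw [ht, walk_succ z ω htn]
    have hle := Qr_step_le (walk z ω t) (ω ⟨t, htn⟩)
    have hs1 : Real.sqrt (Qr (walk z ω t)) ≤ Real.sqrt (4 * Qr z) :=
      Real.sqrt_le_sqrt (le_of_lt hout)
    have hs2 : Real.sqrt (4 * Qr z) = 2 * Real.sqrt (Qr z) := by
      rw [show (4:ℝ) * Qr z = (2 * Real.sqrt (Qr z)) ^ 2 by
        rw [mul_pow, Real.sq_sqrt (Qr_nonneg z)]; ring]
      exact Real.sqrt_sq (by positivity)
    have h1s : 1 ≤ Real.sqrt (Qr z) := by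
      rw [show (1:ℝ) = Real.sqrt 1 by simp]
      exact Real.sqrt_le_sqrt hQ1
    have hs3 : Real.sqrt (Qr z) ≤ Qr z := by
      nlinarith [Real.sq_sqrt (Qr_nonneg z), h1s]
    nlinarith [Real.sq_sqrt (Qr_nonneg (walk z ω t)), Real.sqrt_nonneg (Qr (walk z ω t)),
      Real.sq_sqrt (Qr_nonneg z), Real.sqrt_nonneg (Qr z), hs1, hs2, hs3, hle, hQ1]

end HitBall

namespace HitBall

attribute [local instance] Classical.propDecidable

variable {n : ℕ}

lemma Aev_card_le (z : Fin 2 → ℤ) (r : ℝ) (hr1 : 1 ≤ r) (hQ : (n : ℝ) ≤ Qr z)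
    (hn4 : (4 : ℝ) ≤ (n : ℝ)) (hr2 : r ^ 2 * 4 ≤ (n : ℝ)) :
    ((Aev n z r).card : ℝ) * Real.log ((n : ℝ) / r ^ 2) ≤ 4 ^ n * (2 * Real.log 9) := by
  have hQ1 : (1 : ℝ) ≤ Qr z := by linarith
  have hQ0 : (0 : ℝ) ≤ Qr z := by linarith
  have hr0 : (0 : ℝ) < r := by linarith
  have hn0 : (0 : ℝ) < (n : ℝ) := by linarith
  have h0 := stopped_ge (n := n) (Bq := bc z r) (z := z) flog (fun y _ => sum_flog_step y)
  set p : (Fin n → St) → Prop := fun ω => isIn r (walk z ω (tau (bc z r) z ω)) with hp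
  have hsplit : ∑ ω : Fin n → St, flog (walk z ω (tau (bc z r) z ω))
      = ∑ ω ∈ Finset.univ.filter p, flog (walk z ω (tau (bc z r) z ω))
        + ∑ ω ∈ Finset.univ.filter (fun ω => ¬ p ω), flog (walk z ω (tau (bc z r) z ω)) :=
    (Finset.sum_filter_add_sum_filter_not _ _ _).symm
  set a : ℝ := ((Aev n z r).card : ℝ) with ha
  set M : ℝ := Real.log (9 * Qr z + 1) with hM
  set m' : ℝ := Real.log (r ^ 2 + 1) with hm'
  have hAfil : Aev n z r = Finset.univ.filter p := rfl
  have hsum1 : ∑ ω ∈ Finset.univ.filter p, flog (walk z ω (tau (bc z r) z ω)) ≤ a * m' := by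
    have hb : ∀ ω ∈ Finset.univ.filter p, flog (walk z ω (tau (bc z r) z ω)) ≤ m' := by
      intro ω hω
      rw [Finset.mem_filter] at hω
      have hQle : Qr (walk z ω (tau (bc z r) z ω)) ≤ r ^ 2 :=
        (eNorm_le_iff (le_of_lt hr0)).1 hω.2
      exact Real.log_le_log (by linarith [Qr_nonneg (walk z ω (tau (bc z r) z ω))])
        (by linarith)
    have := Finset.sum_le_card_nsmul (Finset.univ.filter p)
      (fun ω => flog (walk z ω (tau (bc z r) z ω))) m' hb
    rw [nsmul_eq_mul] at this
    rw [ha, hAfil]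
    exact this
  have hcards : ((Finset.univ.filter p).card : ℝ)
      + ((Finset.univ.filter (fun ω => ¬ p ω)).card : ℝ) = 4 ^ n := by
    have h := Finset.card_filter_add_card_filter_not
      (s := (Finset.univ : Finset (Fin n → St))) p
    rw [Finset.card_univ, card_omega] at h
    have := congrArg (fun k : ℕ => (k : ℝ)) h
    push_cast at this
    linarith [this]
  have hsum2 : ∑ ω ∈ Finset.univ.filter (fun ω => ¬ p ω),
      flog (walk z ω (tau (bc z r) z ω)) ≤ (4 ^ n - a) * M := by
    have hb : ∀ ω ∈ Finset.univ.filter (fun ω => ¬ p ω),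
        flog (walk z ω (tau (bc z r) z ω)) ≤ M := by
      intro ω _
      have := Qr_stopped_le z r hQ1 ω
      exact Real.log_le_log (by linarith [Qr_nonneg (walk z ω (tau (bc z r) z ω))])
        (by linarith)
    have h2 := Finset.sum_le_card_nsmul (Finset.univ.filter (fun ω => ¬ p ω))
      (fun ω => flog (walk z ω (tau (bc z r) z ω))) M hb
    rw [nsmul_eq_mul] at h2
    have hcn : ((Finset.univ.filter (fun ω => ¬ p ω)).card : ℝ) = 4 ^ n - a := by
      rw [ha, hAfil]; linarith [hcards]
    rw [hcn] at h2
    exact h2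
  have hmain : 4 ^ n * flog z ≤ a * m' + (4 ^ n - a) * M := by
    rw [hsplit] at h0
    linarith
  -- log comparisons
  have hl0 : flog z = Real.log (Qr z + 1) := rfl
  have hM_l0 : M ≤ Real.log 9 + flog z := by
    rw [hl0, hM, ← Real.log_mul (by norm_num) (by positivity : ((0:ℝ) < Qr z + 1)).ne']
    exact Real.log_le_log (by linarith) (by linarith)
  have hlogn : Real.log (n : ℝ) ≤ flog z := by
    rw [hl0]
    exact Real.log_le_log hn0 (by linarith)
  have hr2pos : (0 : ℝ) < r ^ 2 := by positivity
  have hm'le : m' ≤ Real.log 2 + Real.log (r ^ 2) := by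
    rw [hm', ← Real.log_mul (by norm_num) hr2pos.ne']
    exact Real.log_le_log (by linarith) (by nlinarith)
  set L : ℝ := Real.log ((n : ℝ) / r ^ 2) with hL
  have hLdef : L = Real.log (n : ℝ) - Real.log (r ^ 2) :=
    Real.log_div hn0.ne' hr2pos.ne'
  have hL4 : Real.log 4 ≤ L := by
    rw [hL]
    exact Real.log_le_log (by norm_num) ((le_div_iff₀ hr2pos).2 (by linarith))
  have hlog4 : Real.log 4 = 2 * Real.log 2 := by
    rw [show (4:ℝ) = 2 ^ 2 by norm_num, Real.log_pow]
    push_cast; ring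
  have hlog2 : 0 < Real.log 2 := Real.log_pos (by norm_num)
  have hL0 : 0 < L := by rw [hlog4] at hL4; linarith
  have hkey1 : L / 2 ≤ flog z - m' := by
    have h1 : Real.log (n:ℝ) - (Real.log 2 + Real.log (r ^ 2)) ≤ flog z - m' := by
      linarith
    rw [hLdef] at *
    rw [hlog4] at hL4
    linarith
  have hM_flog : flog z ≤ M := by
    rw [hl0, hM]
    exact Real.log_le_log (by linarith) (by linarith)
  have hMm : m' ≤ M := by linarith [hkey1, hL0]
  have ha0 : 0 ≤ a := by rw [ha]; positivity
  have hc1 : a * (M - m') ≤ 4 ^ n * (M - flog z) := by nlinarith [hmain]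
  have hc2 : (4:ℝ) ^ n * (M - flog z) ≤ 4 ^ n * Real.log 9 := by
    apply mul_le_mul_of_nonneg_left (by linarith) (by positivity)
  have hc3 : a * (L / 2) ≤ a * (M - m') := by
    apply mul_le_mul_of_nonneg_left (by linarith) ha0
  have : a * L / 2 = a * (L / 2) := by ring
  linarith

/-- `Bev` decomposes into the `Ds` slices -/
lemma Bev_subset (z : Fin 2 → ℤ) (r : ℝ) :
    Bev n z r ⊆ (Finset.range (n + 1)).biUnion (fun s => Ds n z r s) := by
  intro ω hω
  rw [Bev, Finset.mem_filter] at hω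
  obtain ⟨-, hout, t, htau, htn, hin⟩ := hω
  rw [Finset.mem_biUnion]
  refine ⟨tau (bc z r) z ω, Finset.mem_range.2 (Nat.lt_succ_of_le (tau_le ω)), ?_⟩
  rw [Ds, Finset.mem_filter]
  exact ⟨Finset.mem_univ _, rfl, hout, t, htau, htn, hin⟩

/-- main per-start estimate -/
lemma main_est (z : Fin 2 → ℤ) (r : ℝ) (hr1 : 1 ≤ r) (hQ : (n : ℝ) ≤ Qr z)
    (hn4 : (4 : ℝ) ≤ (n : ℝ)) (hr2 : r ^ 2 * 4 ≤ (n : ℝ))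
    (P : ℝ) (hP0 : 0 ≤ P)
    (hPy : ∀ y : Fin 2 → ℤ, Real.sqrt n ≤ eNorm y → ((Eev n y r).card : ℝ) ≤ P * 4 ^ n) :
    ((Eev n z r).card : ℝ)
      ≤ (2 * Real.log 9 / Real.log ((n : ℝ) / r ^ 2) + P / 2) * 4 ^ n := by
  have hr0 : (0 : ℝ) < r := by linarith
  have hr2pos : (0 : ℝ) < r ^ 2 := by positivity
  have hn0 : (0 : ℝ) < (n : ℝ) := by linarith
  set L : ℝ := Real.log ((n : ℝ) / r ^ 2) with hL
  have hL4 : Real.log 4 ≤ L := by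
    rw [hL]
    exact Real.log_le_log (by norm_num) ((le_div_iff₀ hr2pos).2 (by linarith))
  have hL0 : 0 < L := lt_of_lt_of_le (Real.log_pos (by norm_num)) hL4
  -- card E ≤ card A + card B
  have hE : ((Eev n z r).card : ℝ) ≤ ((Aev n z r).card : ℝ) + ((Bev n z r).card : ℝ) := by
    have h1 := Finset.card_le_card (Eev_subset z r (n := n))
    have h2 := Finset.card_union_le (Aev n z r) (Bev n z r)
    have := le_trans h1 h2
    exact_mod_cast this
  -- card A bound
  have hA : ((Aev n z r).card : ℝ) ≤ 2 * Real.log 9 / L * 4 ^ n := by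
    have h := Aev_card_le z r hr1 hQ hn4 hr2
    rw [← hL] at h
    rw [div_mul_eq_mul_div, le_div_iff₀ hL0]
    calc ((Aev n z r).card : ℝ) * L ≤ 4 ^ n * (2 * Real.log 9) := h
      _ = 2 * Real.log 9 * 4 ^ n := by ring
  -- card B bound
  have hB : ((Bev n z r).card : ℝ) ≤ P / 2 * 4 ^ n := by
    have hQpos : (0:ℝ) < Qr z := by linarith
    have hsub := Bev_subset z r (n := n)
    have h1 : ((Bev n z r).card : ℝ)
        ≤ ∑ s ∈ Finset.range (n + 1), ((Ds n z r s).card : ℝ) := by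
      have := le_trans (Finset.card_le_card hsub) (Finset.card_biUnion_le)
      exact_mod_cast this
    have h2 : ∀ s ∈ Finset.range (n + 1),
        ((Ds n z r s).card : ℝ) ≤ P * ((Finset.univ.filter
          (fun ω : Fin n → St => tau (bc z r) z ω = s ∧ isOut z (walk z ω s))).card : ℝ) := by
      intro s hs
      have hsn : s ≤ n := Nat.lt_succ_iff.1 (Finset.mem_range.1 hs)
      have hD := Ds_card_le (z := z) (r := r) hsn
      have hC : ∀ w ∈ Ts n z r s,
          ((Cs (n - s) (walk z w s) r).card : ℝ) ≤ P * 4 ^ (n - s) := by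
        intro w hw
        rw [Ts, Finset.mem_filter] at hw
        obtain ⟨-, -, hout, -⟩ := hw
        set y := walk z w s with hy
        have hyv : Real.sqrt n ≤ eNorm y := by
          rw [eNorm_eq]
          apply Real.sqrt_le_sqrt
          have : 4 * Qr z ≤ Qr y := hout
          linarith
        have hEy := hPy y hyv
        have hmono := Eev_mono (n := n) y r (Nat.sub_le n s)
        have hns : n - (n - s) = s := by omega
        rw [hns] at hmono
        have hmono' : ((Cs (n - s) y r).card : ℝ) * 4 ^ s ≤ ((Eev n y r).card : ℝ) := by
          rw [Cs]
          exact_mod_cast hmono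
        have h4s : (0:ℝ) < 4 ^ s := by positivity
        rw [← mul_le_mul_iff_of_pos_right h4s]
        calc ((Cs (n - s) y r).card : ℝ) * 4 ^ s ≤ ((Eev n y r).card : ℝ) := hmono'
          _ ≤ P * 4 ^ n := hEy
          _ = P * 4 ^ (n - s) * 4 ^ s := by
              rw [mul_assoc, ← pow_add]
              congr 2
              omega
      calc ((Ds n z r s).card : ℝ)
          ≤ ∑ w ∈ Ts n z r s, ((Cs (n - s) (walk z w s) r).card : ℝ) := by
            exact_mod_cast hD
        _ ≤ ∑ w ∈ Ts n z r s, P * 4 ^ (n - s) := Finset.sum_le_sum hC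
        _ = ((Ts n z r s).card : ℝ) * (P * 4 ^ (n - s)) := by
            rw [Finset.sum_const, nsmul_eq_mul]
        _ = P * (((Ts n z r s).card * 4 ^ (n - s) : ℕ) : ℝ) := by push_cast; ring
        _ = P * ((Finset.univ.filter
            (fun ω : Fin n → St => tau (bc z r) z ω = s ∧ isOut z (walk z ω s))).card : ℝ) := by
            rw [← slice_card hsn]
    have h3 : ∑ s ∈ Finset.range (n + 1), ((Ds n z r s).card : ℝ)
        ≤ P * ((Xev n z r).card : ℝ) := by
      calc ∑ s ∈ Finset.range (n + 1), ((Ds n z r s).card : ℝ)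
          ≤ ∑ s ∈ Finset.range (n + 1), P * ((Finset.univ.filter
            (fun ω : Fin n → St => tau (bc z r) z ω = s ∧ isOut z (walk z ω s))).card : ℝ) :=
            Finset.sum_le_sum h2
        _ = P * ((Xev n z r).card : ℝ) := by
            rw [← Finset.mul_sum]
            congr 1
            rw [Xev_card_eq z r]
            push_cast
            rfl
    have h4 := Xev_card_le z r hQ hQpos
    calc ((Bev n z r).card : ℝ) ≤ P * ((Xev n z r).card : ℝ) := le_trans h1 h3
      _ ≤ P * (4 ^ n / 2) := mul_le_mul_of_nonneg_left h4 hP0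
      _ = P / 2 * 4 ^ n := by ring
  calc ((Eev n z r).card : ℝ) ≤ ((Aev n z r).card : ℝ) + ((Bev n z r).card : ℝ) := hE
    _ ≤ 2 * Real.log 9 / L * 4 ^ n + P / 2 * 4 ^ n := by linarith
    _ = (2 * Real.log 9 / L + P / 2) * 4 ^ n := by ring

end HitBall

namespace HitBall

attribute [local instance] Classical.propDecidable

lemma prW_eq (n : ℕ) (y : Fin 2 → ℤ) (r : ℝ) :
    prW 2 n {ω | ∃ t ≤ n, eNorm (walk y ω t) ≤ r} = ((Eev n y r).card : ℝ) / 4 ^ n := by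
  unfold prW
  have h1 : {ω : Fin n → St | ∃ t ≤ n, eNorm (walk y ω t) ≤ r}.ncard = (Eev n y r).card := by
    rw [Set.ncard_eq_toFinset_card', Set.toFinset_setOf]
    rw [Eev]
  rw [h1]
  norm_num

lemma prW_nonneg (n : ℕ) (y : Fin 2 → ℤ) (r : ℝ) :
    0 ≤ prW 2 n {ω | ∃ t ≤ n, eNorm (walk y ω t) ≤ r} := by
  rw [prW_eq]
  positivity

lemma prW_le_one (n : ℕ) (y : Fin 2 → ℤ) (r : ℝ) :
    prW 2 n {ω | ∃ t ≤ n, eNorm (walk y ω t) ≤ r} ≤ 1 := by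
  rw [prW_eq]
  rw [div_le_one (by positivity)]
  have h := Finset.card_le_card (Finset.subset_univ (Eev n y r))
  rw [Finset.card_univ, card_omega] at h
  exact_mod_cast h

end HitBall


/-- `P_z[T_r ≤ n] ≤ C / log(n/r²)` for `1 ≤ r ≤ √n/2` and `‖z‖ ≥ √n`: the walk started at
`z` enters the ball of radius `r` within `n` steps with at most this probability. -/
theorem hit_ball_within_n_steps :
    ∃ C : ℝ, 0 < C ∧ ∀ n : ℕ, ∀ r : ℝ, ∀ z : Fin 2 → ℤ,
      1 ≤ r → r ≤ Real.sqrt n / 2 → Real.sqrt n ≤ eNorm z →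
      prW 2 n {ω | ∃ t ≤ n, eNorm (walk z ω t) ≤ r} ≤
        C / Real.log ((n : ℝ) / r ^ 2) := by

  classical
  have hlog9 : 0 < Real.log 9 := Real.log_pos (by norm_num)
  refine ⟨4 * Real.log 9, by linarith, ?_⟩
  intro n r z hr1 hr2 hz
  have hsq : (2 : ℝ) ≤ Real.sqrt n := by linarith
  have hn4 : (4 : ℝ) ≤ (n : ℝ) := by
    have h := (Real.le_sqrt (by norm_num) (Nat.cast_nonneg n)).1 hsq
    norm_num at h
    exact_mod_cast h
  have hr0 : (0 : ℝ) < r := by linarith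
  have h2r : 2 * r ≤ Real.sqrt n := by linarith
  have hr2n : r ^ 2 * 4 ≤ (n : ℝ) := by
    have h := (Real.le_sqrt (by positivity) (Nat.cast_nonneg n)).1 h2r
    nlinarith
  have hQz : (n : ℝ) ≤ HitBall.Qr z := by
    have h := (HitBall.le_eNorm_iff (Real.sqrt_nonneg _)).1 hz
    rwa [Real.sq_sqrt (Nat.cast_nonneg n)] at h
  set L := Real.log ((n : ℝ) / r ^ 2) with hLd
  have hr2pos : (0 : ℝ) < r ^ 2 := by positivity
  have hL4 : Real.log 4 ≤ L := by
    rw [hLd]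
    exact Real.log_le_log (by norm_num) ((le_div_iff₀ hr2pos).2 (by linarith))
  have hL0 : 0 < L := lt_of_lt_of_le (Real.log_pos (by norm_num)) hL4
  set SS : Set ℝ := (fun y : Fin 2 → ℤ =>
      prW 2 n {ω | ∃ t ≤ n, eNorm (walk y ω t) ≤ r}) ''
    {y : Fin 2 → ℤ | Real.sqrt n ≤ eNorm y} with hSS
  have hbdd : BddAbove SS := by
    refine ⟨1, ?_⟩
    rintro p ⟨y, hy, rfl⟩
    exact HitBall.prW_le_one n y r
  have hmemz : prW 2 n {ω | ∃ t ≤ n, eNorm (walk z ω t) ≤ r} ∈ SS := ⟨z, hz, rfl⟩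
  set P := sSup SS with hP
  have hzP : prW 2 n {ω | ∃ t ≤ n, eNorm (walk z ω t) ≤ r} ≤ P := le_csSup hbdd hmemz
  have hP0 : 0 ≤ P := le_trans (HitBall.prW_nonneg n z r) hzP
  have h4n : (0 : ℝ) < 4 ^ n := by positivity
  have hPy : ∀ y : Fin 2 → ℤ, Real.sqrt n ≤ eNorm y →
      ((HitBall.Eev n y r).card : ℝ) ≤ P * 4 ^ n := by
    intro y hy
    have h0 := le_csSup hbdd (⟨y, hy, rfl⟩ : _ ∈ SS)
    have h : prW 2 n {ω | ∃ t ≤ n, eNorm (walk y ω t) ≤ r} ≤ P := h0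
    rw [HitBall.prW_eq] at h
    rw [div_le_iff₀ h4n] at h
    exact h
  have hkey : ∀ p ∈ SS, p ≤ 2 * Real.log 9 / L + P / 2 := by
    rintro p ⟨y, hy, rfl⟩
    show prW 2 n {ω | ∃ t ≤ n, eNorm (walk y ω t) ≤ r} ≤ _
    rw [HitBall.prW_eq]
    have hQy : (n : ℝ) ≤ HitBall.Qr y := by
      have h := (HitBall.le_eNorm_iff (Real.sqrt_nonneg _)).1 hy
      rwa [Real.sq_sqrt (Nat.cast_nonneg n)] at h
    have hest := HitBall.main_est y r hr1 hQy hn4 hr2n P hP0 hPy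
    rw [← hLd] at hest
    rw [div_le_iff₀ h4n]
    exact hest
  have hrhs0 : 0 ≤ 2 * Real.log 9 / L + P / 2 := by
    have : 0 ≤ 2 * Real.log 9 / L := div_nonneg (by linarith) hL0.le
    linarith
  have hsup : P ≤ 2 * Real.log 9 / L + P / 2 := Real.sSup_le hkey hrhs0
  have hfinal : P ≤ 4 * Real.log 9 / L := by
    have h1 : P / 2 ≤ 2 * Real.log 9 / L := by linarith
    have h2 : 2 * (2 * Real.log 9 / L) = 4 * Real.log 9 / L := by ring
    linarith
  exact le_trans hzP hfinal
end

section
/- Let k, ℓ, n ∈ ℕ and set k′ = (2ℓ+1)k + ℓ. For the simple random walk on ℤ² started at the origin, the conditional Shannon entropy of the boundary-indicator vector at scale k given the vector at scale k′ satisfies H( ∂(k,n) | ∂(k′,n) ) ≤ E[ M(k′,n) ] · (2ℓ+1)². -/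
open Real

/-- The square `Q(z,k) = {z + (j,j′) : −k ≤ j, j′ ≤ k}` of side length `2k+1` centered at `z`. -/
def square (z : Fin 2 → ℤ) (k : ℕ) : Set (Fin 2 → ℤ) :=
  {w | ∀ i, |w i - z i| ≤ (k : ℤ)}

/-- The lattice `Λ(k) = (2k+1)·ℤ²` of centers of the squares tiling `ℤ²`. -/
def lat (k : ℕ) : Set (Fin 2 → ℤ) :=
  {z | ∃ w : Fin 2 → ℤ, z = (2 * (k : ℤ) + 1) • w}

/-- `M(k,n)`: the number of squares `Q(z,k)`, `z ∈ Λ(k)`, meeting the inner boundary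
`∂R(n)` of the range of the `n`-step walk started at the origin. -/
noncomputable def Mnum (k n : ℕ) (ω : Fin n → Fin 2 × Bool) : ℕ :=
  {z | z ∈ lat k ∧ ∃ x ∈ innerBdry (rangeW (0 : Fin 2 → ℤ) ω), x ∈ square z k}.ncard

/-- Conditional Shannon entropy `H(X|Y) = H(X,Y) - H(Y)` (base 2). -/
noncomputable def condEntW {α β : Type*} (d n : ℕ) (X : (Fin n → Fin d × Bool) → α)
    (Y : (Fin n → Fin d × Bool) → β) : ℝ :=
  entW d n (fun ω => (X ω, Y ω)) - entW d n Y

/-- The boundary-indicator vector `∂(k,n)` at scale `k`: the (random) set of centers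
`z ∈ Λ(k) ∩ [-2n,2n]²` whose square `Q(z,k)` meets `∂R(n)`; this record of indicators is
indexed by `Λ(k) ∩ [-2n,2n]²`. -/
def bvec (k n : ℕ) (ω : Fin n → Fin 2 × Bool) : Set (Fin 2 → ℤ) :=
  {z | z ∈ lat k ∧ (∀ i, |z i| ≤ 2 * (n : ℤ)) ∧
    ∃ x ∈ innerBdry (rangeW (0 : Fin 2 → ℤ) ω), x ∈ square z k}


open Finset Real

abbrev W (n : ℕ) := Fin n → Fin 2 × Bool

open Classical in
noncomputable def cnt {n : ℕ} {α : Type*} (X : W n → α) (a : α) : ℕ :=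
  #(Finset.univ.filter fun ω => X ω = a)

lemma prW_cnt {n : ℕ} {α : Type*} (X : W n → α) (a : α) :
    prW 2 n {ω | X ω = a} = (cnt X a : ℝ) / 4 ^ n := by
  classical
  rw [prW, cnt]
  have : ({ω | X ω = a} : Set (W n)).ncard = #(Finset.univ.filter fun ω : W n => X ω = a) := by
    rw [← Set.ncard_coe_finset]
    congr 1
    ext ω; simp
  rw [this]
  norm_num

lemma cnt_pos {n : ℕ} {α : Type*} (X : W n → α) (ω : W n) : 0 < cnt X (X ω) := by
  classical
  rw [cnt]
  exact Finset.card_pos.2 ⟨ω, by simp⟩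

lemma entW_eq_sum {n : ℕ} {α : Type*} (X : W n → α) :
    entW 2 n X = ∑ ω : W n, -(1 / 4 ^ n) * logb 2 ((cnt X (X ω) : ℝ) / 4 ^ n) := by
  classical
  rw [entW]
  rw [tsum_eq_sum (s := Finset.univ.image X) (f := fun a =>
      -(prW 2 n {ω | X ω = a} * logb 2 (prW 2 n {ω | X ω = a})))]
  · rw [Finset.sum_comp (fun a => -(1 / (4:ℝ) ^ n) * logb 2 ((cnt X a : ℝ) / 4 ^ n)) X]
    refine Finset.sum_congr rfl fun a _ => ?_
    rw [prW_cnt, nsmul_eq_mul]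
    have : (#(Finset.univ.filter fun ω : W n => X ω = a) : ℝ) = (cnt X a : ℝ) := by
      rw [cnt]
    rw [this]
    ring
  · intro a ha
    have : {ω : W n | X ω = a} = ∅ := by
      ext ω
      simp only [Set.mem_setOf_eq, Set.mem_empty_iff_false, iff_false]
      intro h
      exact ha (Finset.mem_image.2 ⟨ω, Finset.mem_univ ω, h⟩)
    rw [this]
    simp [prW]

lemma gibbs {ι : Type*} (A : Finset ι) (c : ι → ℝ) (hc : ∀ a ∈ A, 0 < c a)
    (N : ℝ) (hN : 1 ≤ N) (hr : (#A : ℝ) ≤ N) :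
    ∑ a ∈ A, c a * logb 2 ((∑ x ∈ A, c x) / c a) ≤ (∑ x ∈ A, c x) * logb 2 N := by
  rcases A.eq_empty_or_nonempty with h | h
  · simp [h]
  set q := ∑ x ∈ A, c x with hq
  have hqpos : 0 < q := Finset.sum_pos hc h
  have hNpos : (0:ℝ) < N := lt_of_lt_of_le one_pos hN
  have hlog2 : (0:ℝ) < Real.log 2 := Real.log_pos (by norm_num)
  have hterm : ∀ a ∈ A, c a * logb 2 (q / c a)
      ≤ (q / N - c a) / Real.log 2 + c a * logb 2 N := by
    intro a ha
    have hca := hc a ha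
    have hx : (0:ℝ) < q / (c a * N) := by positivity
    have hsplit : logb 2 (q / c a) = logb 2 (q / (c a * N)) + logb 2 N := by
      rw [← Real.logb_mul (ne_of_gt hx) (ne_of_gt hNpos)]
      congr 1
      field_simp
    rw [hsplit, mul_add]
    gcongr ?_ + _
    have hle : Real.log (q / (c a * N)) ≤ q / (c a * N) - 1 :=
      Real.log_le_sub_one_of_pos hx
    have : c a * logb 2 (q / (c a * N)) ≤ c a * ((q / (c a * N) - 1) / Real.log 2) := by
      rw [Real.logb]
      gcongr
    refine this.trans (le_of_eq ?_)
    have hca' : c a * (q / (c a * N)) = q / N := by field_simp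
    rw [mul_div_assoc'] at this ⊢
    rw [mul_sub, hca', mul_one]
  calc ∑ a ∈ A, c a * logb 2 (q / c a)
      ≤ ∑ a ∈ A, ((q / N - c a) / Real.log 2 + c a * logb 2 N) :=
        Finset.sum_le_sum hterm
    _ = ((#A : ℝ) * (q / N) - q) / Real.log 2 + q * logb 2 N := by
        rw [Finset.sum_add_distrib, ← Finset.sum_mul, ← hq, ← Finset.sum_div,
          Finset.sum_sub_distrib, Finset.sum_const, ← hq, nsmul_eq_mul]
    _ ≤ q * logb 2 N := by
        have h1 : (#A : ℝ) * (q / N) ≤ N * (q / N) := by gcongr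
        have h2 : N * (q / N) = q := by field_simp
        have : ((#A : ℝ) * (q / N) - q) / Real.log 2 ≤ 0 :=
          div_nonpos_of_nonpos_of_nonneg (by linarith) hlog2.le
        linarith

open Classical in
lemma fiber_bound {n : ℕ} {α β : Type*} (X : W n → α) (Y : W n → β) (b : β) (N : ℝ)
    (hN1 : 1 ≤ N)
    (hN : ((#((Finset.univ.filter fun ω : W n => Y ω = b).image X)) : ℝ) ≤ N) :
    ∑ ω ∈ Finset.univ.filter (fun ω : W n => Y ω = b),
        logb 2 ((cnt Y b : ℝ) / (cnt (fun ω => (X ω, Y ω)) (X ω, b)))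
      ≤ (cnt Y b : ℝ) * logb 2 N := by
  classical
  set F := Finset.univ.filter (fun ω : W n => Y ω = b) with hF
  have hfib : ∀ a, #(F.filter fun ω => X ω = a) = cnt (fun ω => (X ω, Y ω)) (a, b) := by
    intro a
    rw [cnt]
    congr 1
    ext ω
    simp only [hF, Finset.mem_filter, Finset.mem_univ, true_and, Prod.mk.injEq]
    tauto
  have hsum : ∑ ω ∈ F, logb 2 ((cnt Y b : ℝ) / (cnt (fun ω => (X ω, Y ω)) (X ω, b)))
      = ∑ a ∈ F.image X, (cnt (fun ω => (X ω, Y ω)) (a, b) : ℝ)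
          * logb 2 ((cnt Y b : ℝ) / (cnt (fun ω => (X ω, Y ω)) (a, b))) := by
    rw [Finset.sum_comp (fun a => logb 2 ((cnt Y b : ℝ) / (cnt (fun ω => (X ω, Y ω)) (a, b)))) X]
    refine Finset.sum_congr rfl fun a _ => ?_
    rw [nsmul_eq_mul, hfib]
  have hq : (cnt Y b : ℝ) = ∑ a ∈ F.image X, (cnt (fun ω => (X ω, Y ω)) (a, b) : ℝ) := by
    have : cnt Y b = #F := by rw [cnt]
    rw [this, Finset.card_eq_sum_card_fiberwise (f := X) (t := F.image X)
      (fun ω hω => Finset.mem_image_of_mem X hω)]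
    push_cast
    exact Finset.sum_congr rfl fun a _ => by rw [hfib]
  rw [hsum, hq]
  exact gibbs (F.image X) _ (fun a ha => by
    obtain ⟨ω, hω, rfl⟩ := Finset.mem_image.1 ha
    have : 0 < cnt (fun ω => (X ω, Y ω)) (X ω, b) := by
      rw [← hfib]
      exact Finset.card_pos.2 ⟨ω, Finset.mem_filter.2 ⟨hω, rfl⟩⟩
    exact_mod_cast this) N hN1 hN

open Classical in
lemma condEntW_le {n : ℕ} {α β : Type*} (X : W n → α) (Y : W n → β) (m : β → ℕ)
    (hm : ∀ ω : W n, #((Finset.univ.filter fun ω' : W n => Y ω' = Y ω).image X) ≤ 2 ^ m (Y ω)) :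
    condEntW 2 n X Y ≤ (∑ ω : W n, (m (Y ω) : ℝ)) / 4 ^ n := by
  classical
  have h4 : (0:ℝ) < 4 ^ n := by positivity
  rw [condEntW, entW_eq_sum, entW_eq_sum, ← Finset.sum_sub_distrib]
  have key : ∀ ω : W n,
      -(1 / 4 ^ n) * logb 2 ((cnt (fun ω => (X ω, Y ω)) (X ω, Y ω) : ℝ) / 4 ^ n)
        - -(1 / 4 ^ n) * logb 2 ((cnt Y (Y ω) : ℝ) / 4 ^ n)
      = (1 / 4 ^ n) * logb 2 ((cnt Y (Y ω) : ℝ) / (cnt (fun ω => (X ω, Y ω)) (X ω, Y ω))) := by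
    intro ω
    have hp : (0:ℝ) < cnt (fun ω => (X ω, Y ω)) (X ω, Y ω) := by
      exact_mod_cast cnt_pos (fun ω => (X ω, Y ω)) ω
    have hqq : (0:ℝ) < cnt Y (Y ω) := by exact_mod_cast cnt_pos Y ω
    rw [Real.logb_div (ne_of_gt hqq) (ne_of_gt hp),
      Real.logb_div (ne_of_gt hqq) (ne_of_gt h4),
      Real.logb_div (ne_of_gt hp) (ne_of_gt h4)]
    ring
  calc ∑ ω : W n, (-(1 / 4 ^ n) * logb 2 ((cnt (fun ω => (X ω, Y ω)) (X ω, Y ω) : ℝ) / 4 ^ n)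
        - -(1 / 4 ^ n) * logb 2 ((cnt Y (Y ω) : ℝ) / 4 ^ n))
      = (1 / 4 ^ n) * ∑ ω : W n,
          logb 2 ((cnt Y (Y ω) : ℝ) / (cnt (fun ω => (X ω, Y ω)) (X ω, Y ω))) := by
        rw [Finset.mul_sum]
        exact Finset.sum_congr rfl fun ω _ => key ω
    _ ≤ (1 / 4 ^ n) * ∑ ω : W n, (m (Y ω) : ℝ) := by
        refine mul_le_mul_of_nonneg_left ?_ (by positivity)
        rw [← Finset.sum_fiberwise_of_maps_to (t := Finset.univ.image Y)
            (fun ω _ => Finset.mem_image_of_mem Y (Finset.mem_univ ω)),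
          ← Finset.sum_fiberwise_of_maps_to (t := Finset.univ.image Y)
            (fun ω _ => Finset.mem_image_of_mem Y (Finset.mem_univ ω))
            (fun ω => ((m (Y ω) : ℝ)))]
        refine Finset.sum_le_sum fun b hb => ?_
        obtain ⟨ω0, _, rfl⟩ := Finset.mem_image.1 hb
        have h1 : ∑ ω ∈ Finset.univ.filter (fun ω : W n => Y ω = Y ω0),
            logb 2 ((cnt Y (Y ω) : ℝ) / (cnt (fun ω => (X ω, Y ω)) (X ω, Y ω)))
            = ∑ ω ∈ Finset.univ.filter (fun ω : W n => Y ω = Y ω0),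
            logb 2 ((cnt Y (Y ω0) : ℝ) / (cnt (fun ω => (X ω, Y ω)) (X ω, Y ω0))) := by
          refine Finset.sum_congr rfl fun ω hω => ?_
          have hYω : Y ω = Y ω0 := (Finset.mem_filter.1 hω).2
          rw [hYω]
        have h2 : ∑ ω ∈ Finset.univ.filter (fun ω : W n => Y ω = Y ω0), ((m (Y ω) : ℝ))
            = (cnt Y (Y ω0) : ℝ) * m (Y ω0) := by
          rw [Finset.sum_congr rfl (fun ω hω => by
            rw [(Finset.mem_filter.1 hω).2]), Finset.sum_const, nsmul_eq_mul, cnt]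
        rw [h1, h2]
        have := fiber_bound X Y (Y ω0) ((2:ℝ) ^ m (Y ω0)) (one_le_pow₀ (by norm_num)) ?_
        · refine this.trans (le_of_eq ?_)
          congr 1
          rw [Real.logb_pow]
          simp [Real.logb_self_eq_one]
        · have := hm ω0
          calc ((#((Finset.univ.filter fun ω : W n => Y ω = Y ω0).image X)) : ℝ)
              ≤ ((2 ^ m (Y ω0) : ℕ) : ℝ) := by exact_mod_cast this
            _ = (2:ℝ) ^ m (Y ω0) := by push_cast; ring
    _ = (∑ ω : W n, (m (Y ω) : ℝ)) / 4 ^ n := by ring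

-- geometry


-- L1: range bound
lemma range_bound {n : ℕ} (ω : W n) {x : Fin 2 → ℤ} (hx : x ∈ rangeW (0 : Fin 2 → ℤ) ω)
    (i : Fin 2) : |x i| ≤ (n : ℤ) := by
  obtain ⟨j, hj, rfl⟩ := Finset.mem_image.1 hx
  have : walk (0 : Fin 2 → ℤ) ω j i
      = ∑ i' ∈ Finset.univ.filter (fun i' : Fin n => (i' : ℕ) < j), step (ω i') i := by
    simp [walk, Finset.sum_apply]
  rw [this]
  calc |∑ i' ∈ Finset.univ.filter (fun i' : Fin n => (i' : ℕ) < j), step (ω i') i|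
      ≤ ∑ i' ∈ Finset.univ.filter (fun i' : Fin n => (i' : ℕ) < j), |step (ω i') i| :=
        Finset.abs_sum_le_sum_abs _ _
    _ ≤ ∑ _i' ∈ Finset.univ.filter (fun i' : Fin n => (i' : ℕ) < j), 1 := by
        refine Finset.sum_le_sum fun i' _ => ?_
        unfold step
        split_ifs <;> simp
    _ ≤ (n : ℤ) := by
        rw [Finset.sum_const, nsmul_eq_mul, mul_one]
        exact_mod_cast (Finset.card_filter_le _ _).trans (by simp)

-- box finiteness
lemma box_finite (B : ℤ) : Set.Finite {z : Fin 2 → ℤ | ∀ i, |z i| ≤ B} := by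
  apply Set.Finite.subset (Finset.Icc (fun _ : Fin 2 => -B) (fun _ => B)).finite_toSet
  intro z hz
  simp only [Finset.coe_Icc, Set.mem_Icc, Pi.le_def]
  exact ⟨fun i => (abs_le.1 (hz i)).1, fun i => (abs_le.1 (hz i)).2⟩

lemma bvec_finite (k n : ℕ) (ω : W n) : (bvec k n ω).Finite :=
  (box_finite (2 * n)).subset fun z hz => hz.2.1

-- L5
lemma bvec_ncard_le_Mnum (k n : ℕ) (ω : W n) : (bvec k n ω).ncard ≤ Mnum k n ω := by
  have hfin : Set.Finite {z | z ∈ lat k ∧ ∃ x ∈ innerBdry (rangeW (0 : Fin 2 → ℤ) ω),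
      x ∈ square z k} := by
    apply (box_finite ((n : ℤ) + k)).subset
    rintro z ⟨-, x, hx, hxz⟩ i
    have h1 : |x i| ≤ (n : ℤ) := range_bound ω (Finset.mem_filter.1 hx).1 i
    have h2 : |x i - z i| ≤ (k : ℤ) := hxz i
    have := abs_sub_abs_le_abs_sub (z i) (x i)
    rw [abs_sub_comm] at this
    omega
  exact Set.ncard_le_ncard (fun z hz => ⟨hz.1, hz.2.2⟩) hfin

-- L3a: pieces are finite
lemma piece_finite (k k' : ℕ) (z' : Fin 2 → ℤ) :
    Set.Finite {z : Fin 2 → ℤ | z ∈ lat k ∧ z ∈ square z' k'} := by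
  apply Set.Finite.subset (Finset.Icc (fun i => z' i - k') (fun i => z' i + k')).finite_toSet
  rintro z ⟨-, hz⟩
  simp only [Finset.coe_Icc, Set.mem_Icc, Pi.le_def]
  constructor <;> intro i <;> have := abs_le.1 (hz i) <;> omega

-- L3b: piece cardinality
lemma piece_card (k l : ℕ) {z' : Fin 2 → ℤ} (hz' : z' ∈ lat ((2 * l + 1) * k + l)) :
    {z : Fin 2 → ℤ | z ∈ lat k ∧ z ∈ square z' ((2 * l + 1) * k + l)}.ncard
      ≤ (2 * l + 1) ^ 2 := by
  obtain ⟨w', hw'⟩ := hz'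
  set k' : ℕ := (2 * l + 1) * k + l with hk'
  set T : Finset (Fin 2 → ℤ) :=
    Finset.Icc (fun i => (2 * l + 1) * w' i - l) (fun i => (2 * l + 1) * w' i + l) with hT
  set g : (Fin 2 → ℤ) → (Fin 2 → ℤ) := fun z i => z i / (2 * (k : ℤ) + 1) with hg
  have hkne : (2 * (k : ℤ) + 1) ≠ 0 := by omega
  have hgz : ∀ z ∈ {z : Fin 2 → ℤ | z ∈ lat k ∧ z ∈ square z' k'},
      z = (2 * (k : ℤ) + 1) • g z ∧ g z ∈ T := by
    rintro z ⟨⟨w, rfl⟩, hsq⟩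
    have hgw : g ((2 * (k : ℤ) + 1) • w) = w := by
      funext i
      simp only [hg, Pi.smul_apply, smul_eq_mul]
      exact Int.mul_ediv_cancel_left _ hkne
    rw [hgw]
    refine ⟨rfl, ?_⟩
    simp only [hT, Finset.mem_Icc, Pi.le_def]
    have key : ∀ i, |w i - (2 * l + 1) * w' i| ≤ (l : ℤ) := by
      intro i
      have h1 : |(2 * (k : ℤ) + 1) * w i - z' i| ≤ (k' : ℤ) := hsq i
      have hz'i : z' i = (2 * (k' : ℤ) + 1) * w' i := by
        rw [hw']; simp [Pi.smul_apply, smul_eq_mul]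
      have hfac : (2 * (k' : ℤ) + 1) = (2 * l + 1) * (2 * (k : ℤ) + 1) := by
        simp only [hk']; push_cast; ring
      have h2 : (2 * (k : ℤ) + 1) * w i - z' i
          = (2 * (k : ℤ) + 1) * (w i - (2 * l + 1) * w' i) := by
        rw [hz'i, hfac]; ring
      rw [h2, abs_mul, abs_of_pos (by omega : (0:ℤ) < 2 * (k : ℤ) + 1)] at h1
      by_contra hcon
      push_neg at hcon
      have h3 : (l : ℤ) + 1 ≤ |w i - (2 * l + 1) * w' i| := hcon
      have h4 : (k' : ℤ) = (2 * l + 1) * k + l := by simp only [hk']; push_cast; ring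
      nlinarith [abs_nonneg (w i - (2 * l + 1) * w' i)]
    constructor <;> intro i <;> have := abs_le.1 (key i) <;> omega
  calc {z : Fin 2 → ℤ | z ∈ lat k ∧ z ∈ square z' k'}.ncard
      ≤ ((fun w : Fin 2 → ℤ => (2 * (k : ℤ) + 1) • w) '' (T : Set (Fin 2 → ℤ))).ncard := by
        apply Set.ncard_le_ncard
        · rintro z hz
          obtain ⟨h1, h2⟩ := hgz z hz
          exact ⟨g z, h2, h1.symm⟩
        · exact T.finite_toSet.image _
    _ ≤ (T : Set (Fin 2 → ℤ)).ncard := Set.ncard_image_le T.finite_toSet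
    _ = #T := Set.ncard_coe_finset T
    _ ≤ (2 * l + 1) ^ 2 := by
        rw [hT, Pi.card_Icc]
        have : ∀ i : Fin 2, #(Finset.Icc ((2 * l + 1) * w' i - l) ((2 * l + 1) * w' i + l))
            = 2 * l + 1 := by
          intro i
          rw [Int.card_Icc]
          omega
        rw [Finset.prod_congr rfl (fun i _ => this i)]
        simp [sq]

-- L2: geometry
lemma bvec_subset_union (k l n : ℕ) (ω : W n) :
    bvec k n ω ⊆ ⋃ z' ∈ bvec ((2 * l + 1) * k + l) n ω,
      {z : Fin 2 → ℤ | z ∈ lat k ∧ z ∈ square z' ((2 * l + 1) * k + l)} := by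
  set k' : ℕ := (2 * l + 1) * k + l with hk'
  rintro z ⟨⟨w, rfl⟩, hbox, x, hx, hxz⟩
  set zz : Fin 2 → ℤ := (2 * (k : ℤ) + 1) • w with hzz
  set q : Fin 2 → ℤ := fun i => (w i + l) / (2 * (l : ℤ) + 1) with hq
  set z' : Fin 2 → ℤ := (2 * (k' : ℤ) + 1) • q with hz'
  have hlne : (2 * (l : ℤ) + 1) ≠ 0 := by omega
  have hr : ∀ i, |w i - (2 * (l : ℤ) + 1) * q i| ≤ (l : ℤ) := by
    intro i
    have h1 := Int.mul_ediv_add_emod (w i + l) (2 * (l : ℤ) + 1)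
    have h2 := Int.emod_nonneg (w i + l) hlne
    have h3 := Int.emod_lt_of_pos (w i + l) (by omega : (0:ℤ) < 2 * (l : ℤ) + 1)
    rw [abs_le]
    simp only [hq]
    omega
  have hfac : (2 * (k' : ℤ) + 1) = (2 * l + 1) * (2 * (k : ℤ) + 1) := by
    simp only [hk']; push_cast; ring
  have hdiff : ∀ i, |zz i - z' i| ≤ (2 * (k : ℤ) + 1) * l := by
    intro i
    have : zz i - z' i = (2 * (k : ℤ) + 1) * (w i - (2 * (l : ℤ) + 1) * q i) := by
      simp only [hzz, hz', Pi.smul_apply, smul_eq_mul, hfac]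
      ring
    rw [this, abs_mul, abs_of_pos (by omega : (0:ℤ) < 2 * (k : ℤ) + 1)]
    exact mul_le_mul_of_nonneg_left (hr i) (by omega)
  have hdk : (2 * (k : ℤ) + 1) * l ≤ (k' : ℤ) - k := by
    have : ((k' : ℕ) : ℤ) - k = (2 * (k : ℤ) + 1) * l := by
      simp only [hk']; push_cast; ring
    rw [this]
  have hxn : ∀ i, |x i| ≤ (n : ℤ) := range_bound ω (Finset.mem_filter.1 hx).1
  have hxz' : x ∈ square z' k' := by
    intro i
    have h1 : |x i - zz i| ≤ (k : ℤ) := hxz i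
    have h2 := (hdiff i).trans hdk
    calc |x i - z' i| = |(x i - zz i) + (zz i - z' i)| := by congr 1; ring
      _ ≤ |x i - zz i| + |zz i - z' i| := abs_add_le _ _
      _ ≤ (k : ℤ) + ((k' : ℤ) - k) := add_le_add h1 h2
      _ = (k' : ℤ) := by ring
  have hz'box : ∀ i, |z' i| ≤ 2 * (n : ℤ) := by
    intro i
    by_cases hq0 : q i = 0
    · simp only [hz', Pi.smul_apply, smul_eq_mul, hq0, mul_zero, abs_zero]
      positivity
    · have h1 : (1 : ℤ) ≤ |q i| := Int.one_le_abs (by exact_mod_cast hq0)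
      have h2 : |z' i| = (2 * (k' : ℤ) + 1) * |q i| := by
        simp only [hz', Pi.smul_apply, smul_eq_mul, abs_mul]
        rw [abs_of_pos (by omega : (0:ℤ) < 2 * (k' : ℤ) + 1)]
      have h3 : 2 * (k' : ℤ) + 1 ≤ |z' i| := by nlinarith
      have h4 : |z' i| ≤ (n : ℤ) + k' := by
        calc |z' i| = |x i - (x i - z' i)| := by congr 1; ring
          _ ≤ |x i| + |x i - z' i| := abs_sub _ _
          _ ≤ (n : ℤ) + k' := add_le_add (hxn i) (hxz' i)
      omega
  exact Set.mem_biUnion (show z' ∈ bvec k' n ω from ⟨⟨q, hz'⟩, hz'box, x, hx, hxz'⟩)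
    ⟨⟨w, hzz⟩, fun i => (hdiff i).trans (by omega)⟩

open Classical in
lemma card_subsets {γ : Type*} (V : Finset (Set γ)) (S : Set γ) (hS : S.Finite)
    (h : ∀ A ∈ V, A ⊆ S) : #V ≤ 2 ^ S.ncard := by
  classical
  have hinj : Set.InjOn (fun A : Set γ => hS.toFinset.filter (· ∈ A)) ↑V := by
    intro A hA B hB hAB
    simp only at hAB
    ext x
    constructor <;> intro hx
    · have hxS : x ∈ hS.toFinset := hS.mem_toFinset.2 (h A hA hx)
      have hmem : x ∈ hS.toFinset.filter (· ∈ A) := Finset.mem_filter.2 ⟨hxS, hx⟩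
      rw [hAB] at hmem
      exact (Finset.mem_filter.1 hmem).2
    · have hxS : x ∈ hS.toFinset := hS.mem_toFinset.2 (h B hB hx)
      have hmem : x ∈ hS.toFinset.filter (· ∈ B) := Finset.mem_filter.2 ⟨hxS, hx⟩
      rw [← hAB] at hmem
      exact (Finset.mem_filter.1 hmem).2
  calc #V ≤ #hS.toFinset.powerset :=
        Finset.card_le_card_of_injOn _
          (fun A _ => Finset.mem_powerset.2 (Finset.filter_subset _ _)) hinj
    _ = 2 ^ #hS.toFinset := Finset.card_powerset _
    _ = 2 ^ S.ncard := by rw [Set.ncard_eq_toFinset_card S hS]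

lemma union_facts (k l n : ℕ) (ω : W n) :
    (⋃ z' ∈ bvec ((2 * l + 1) * k + l) n ω,
        {z : Fin 2 → ℤ | z ∈ lat k ∧ z ∈ square z' ((2 * l + 1) * k + l)}).Finite ∧
    (⋃ z' ∈ bvec ((2 * l + 1) * k + l) n ω,
        {z : Fin 2 → ℤ | z ∈ lat k ∧ z ∈ square z' ((2 * l + 1) * k + l)}).ncard
      ≤ (2 * l + 1) ^ 2 * (bvec ((2 * l + 1) * k + l) n ω).ncard := by
  classical
  set k' : ℕ := (2 * l + 1) * k + l with hk'
  have hb : (bvec k' n ω).Finite := bvec_finite k' n ω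
  set B : Finset (Fin 2 → ℤ) := hb.toFinset with hB
  set FF : (Fin 2 → ℤ) → Finset (Fin 2 → ℤ) := fun z' => (piece_finite k k' z').toFinset with hFF
  have hsub : (⋃ z' ∈ bvec k' n ω, {z : Fin 2 → ℤ | z ∈ lat k ∧ z ∈ square z' k'})
      ⊆ ↑(B.biUnion FF) := by
    intro z hz
    obtain ⟨z', hz', hzz'⟩ := Set.mem_iUnion₂.1 hz
    refine Finset.mem_coe.2 (Finset.mem_biUnion.2 ⟨z', hb.mem_toFinset.2 hz', ?_⟩)
    exact (piece_finite k k' z').mem_toFinset.2 hzz'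
  refine ⟨Set.Finite.subset (B.biUnion FF).finite_toSet hsub, ?_⟩
  calc (⋃ z' ∈ bvec k' n ω, {z : Fin 2 → ℤ | z ∈ lat k ∧ z ∈ square z' k'}).ncard
      ≤ (↑(B.biUnion FF) : Set (Fin 2 → ℤ)).ncard :=
        Set.ncard_le_ncard hsub (B.biUnion FF).finite_toSet
    _ = #(B.biUnion FF) := Set.ncard_coe_finset _
    _ ≤ ∑ z' ∈ B, #(FF z') := Finset.card_biUnion_le
    _ ≤ ∑ _z' ∈ B, (2 * l + 1) ^ 2 := by
        refine Finset.sum_le_sum fun z' hz' => ?_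
        have hlat : z' ∈ lat k' := (hb.mem_toFinset.1 hz').1
        have := piece_card k l hlat
        rwa [Set.ncard_eq_toFinset_card _ (piece_finite k k' z')] at this
    _ = (2 * l + 1) ^ 2 * (bvec k' n ω).ncard := by
        rw [Finset.sum_const, smul_eq_mul, mul_comm, Set.ncard_eq_toFinset_card _ hb]

/-- `H(∂(k,n) | ∂(k′,n)) ≤ E[M(k′,n)] · (2ℓ+1)²` where `k′ = (2ℓ+1)k + ℓ`. -/
theorem cond_entropy_scales :
    ∀ k l n : ℕ,
      condEntW 2 n (bvec k n) (bvec ((2 * l + 1) * k + l) n) ≤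
        exW 2 n (fun ω => (Mnum ((2 * l + 1) * k + l) n ω : ℝ)) * (2 * l + 1) ^ 2 := by
  classical
  intro k l n
  set k' : ℕ := (2 * l + 1) * k + l with hk'
  have hm : ∀ ω : W n,
      #((Finset.univ.filter fun ω' : W n => bvec k' n ω' = bvec k' n ω).image (bvec k n))
        ≤ 2 ^ ((2 * l + 1) ^ 2 * (bvec k' n ω).ncard) := by
    intro ω
    obtain ⟨hUfin, hUcard⟩ := union_facts k l n ω
    refine le_trans (card_subsets _ _ hUfin ?_) (Nat.pow_le_pow_right (by norm_num) hUcard)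
    intro A hA
    obtain ⟨ω', hω', rfl⟩ := Finset.mem_image.1 hA
    have hY : bvec k' n ω' = bvec k' n ω := (Finset.mem_filter.1 hω').2
    have hsub := bvec_subset_union k l n ω'
    rw [hY] at hsub
    exact hsub
  have hcond := condEntW_le (bvec k n) (bvec k' n) (fun b => (2 * l + 1) ^ 2 * b.ncard) hm
  refine hcond.trans ?_
  rw [exW]
  have hden : (2 * ((2:ℕ):ℝ)) = 4 := by norm_num
  rw [hden, div_mul_eq_mul_div]
  gcongr
  rw [Finset.sum_mul]
  refine Finset.sum_le_sum fun ω _ => ?_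
  have hb := bvec_ncard_le_Mnum k' n ω
  push_cast
  rw [mul_comm]
  gcongr
end
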